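/- arXiv:1401.5978 — 6 statements merged into one kernel-verified Lean document; each statement's English description precedes it below -/
import Mathlib

section
/- For any prime p ≥ 5, the sum over k from 0 to p-1 of (binom(2k,k))^2 / 16^k is congruent to the Legendre symbol (-1/p) modulo p^2. -/
open Finset

namespace RV16

/-- companion sequence for nilpotent product expansion:
`∏ (ε + x i) = ∏ x i + ε * nilY x k` when `ε ^ 2 = 0`. -/
def nilY (x : ℕ → ℕ) : ℕ → ℕ
  | 0 => 0
  | k+1 => x k * nilY x k + ∏ i ∈ range k, x i

lemma nilp {R : Type*} [CommRing R] (x : ℕ → ℕ) (ε : R) (hε : ε^2 = 0) :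
    ∀ k, ∏ i ∈ range k, (ε + (x i : R))
      = (∏ i ∈ range k, (x i : R)) + ε * (nilY x k : R) := by
  intro k
  induction k with
  | zero => simp [nilY]
  | succ k ih =>
    rw [prod_range_succ, ih]
    simp only [nilY, prod_range_succ]
    push_cast
    linear_combination (nilY x k : R) * hε

lemma nilm {R : Type*} [CommRing R] (x : ℕ → ℕ) (ε : R) (hε : ε^2 = 0) (k : ℕ) :
    ∏ i ∈ range k, (ε - (x i : R))
      = (-1)^k * ((∏ i ∈ range k, (x i : R)) - ε * (nilY x k : R)) := by
  have h2 : (-ε)^2 = 0 := by rw [neg_sq]; exact hε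
  have h1 : ∏ i ∈ range k, (ε - (x i : R)) = ∏ i ∈ range k, ((-1) * ((-ε) + (x i : R))) :=
    prod_congr rfl fun i _ => by ring
  rw [h1, prod_mul_distrib, prod_const, card_range, nilp x (-ε) h2 k]
  ring

lemma nil_prod_sub {R : Type*} [CommRing R] (x : ℕ → ℕ) (c k : ℕ) (hc : ((c:R))^2 = 0)
    (h : ∀ i, i < k → x i ≤ c) :
    ((∏ i ∈ range k, (c - x i) : ℕ) : R)
      = (-1)^k * (((∏ i ∈ range k, x i : ℕ) : R) - (c:R) * ((nilY x k : ℕ) : R)) := by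
  rw [Nat.cast_prod, Nat.cast_prod]
  rw [prod_congr rfl fun i hi => Nat.cast_sub (h i (mem_range.1 hi))]
  exact nilm x (c:R) hc k

lemma nil_prod_add {R : Type*} [CommRing R] (x : ℕ → ℕ) (c k : ℕ) (hc : ((c:R))^2 = 0) :
    ((∏ i ∈ range k, (c + x i) : ℕ) : R)
      = ((∏ i ∈ range k, x i : ℕ) : R) + (c:R) * ((nilY x k : ℕ) : R) := by
  rw [Nat.cast_prod, Nat.cast_prod]
  rw [prod_congr rfl fun i _ => Nat.cast_add c (x i)]
  exact nilp x (c:R) hc k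

/-- product of the first `k` odd numbers -/
def oddP (k : ℕ) : ℕ := ∏ i ∈ range k, (2*i+1)

lemma fact_two_mul (k : ℕ) : (2*k).factorial = 2^k * k.factorial * oddP k := by
  induction k with
  | zero => simp [oddP]
  | succ k ih =>
    have h : 2*(k+1) = (2*k+1)+1 := by ring
    rw [h, Nat.factorial_succ, show 2*k+1 = (2*k)+1 from rfl, Nat.factorial_succ, ih,
      show oddP (k+1) = oddP k * (2*k+1) from prod_range_succ _ _, Nat.factorial_succ]
    ring

lemma choose_central (k : ℕ) : (2*k).choose k * k.factorial = 2^k * oddP k := by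
  have h := Nat.choose_mul_factorial_mul_factorial (show k ≤ 2*k by omega)
  rw [show 2*k - k = k by omega] at h
  have h2 : (2*k).choose k * k.factorial * k.factorial = 2^k * oddP k * k.factorial := by
    rw [h, fact_two_mul]; ring
  exact Nat.eq_of_mul_eq_mul_right k.factorial_pos h2

lemma prod_range_add_one (k : ℕ) : ∏ i ∈ range k, (i+1) = k.factorial := by
  induction k with
  | zero => simp
  | succ k ih => rw [prod_range_succ, ih, Nat.factorial_succ]; ring

section WithP

variable {p a : ℕ}

/-- `2^k * a!/(a-k)! = ∏_{i<k} (p - (2i+1))` when `p = 2a+1`. -/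
lemma descA (hpa : p = 2*a+1) (k : ℕ) (hk : k ≤ a) :
    2^k * a.descFactorial k = ∏ i ∈ range k, (p - (2*i+1)) := by
  rw [Nat.descFactorial_eq_prod_range]
  rw [show (2:ℕ)^k = ∏ _i ∈ range k, 2 by rw [prod_const, card_range], ← prod_mul_distrib]
  exact prod_congr rfl fun i hi => by
    have := mem_range.1 hi; omega

lemma descB (hpa : p = 2*a+1) (j : ℕ) (hj : j ≤ a) :
    (a+p).descFactorial j = ∏ i ∈ range j, (p + (a - i)) := by
  rw [Nat.descFactorial_eq_prod_range]
  exact prod_congr rfl fun i hi => by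
    have := mem_range.1 hi; omega

lemma descC (hpa : p = 2*a+1) :
    (p-1).descFactorial a = ∏ i ∈ range a, (p - (i+1)) := by
  rw [Nat.descFactorial_eq_prod_range]
  exact prod_congr rfl fun i hi => by omega

lemma descD (hpa : p = 2*a+1) :
    (2*p-1).descFactorial a = ∏ i ∈ range a, (2*p - (i+1)) := by
  rw [Nat.descFactorial_eq_prod_range]
  exact prod_congr rfl fun i hi => by omega

variable {R : Type*} [CommRing R]

/-- cast version of `descA` with nilpotent `p`. -/
lemma castA (hpa : p = 2*a+1) (hp2 : ((p:R))^2 = 0) (k : ℕ) (hk : k ≤ a) :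
    ((a.descFactorial k : ℕ) : R) * 2^k
      = (-1)^k * ((oddP k : R) - (p:R) * ((nilY (fun i => 2*i+1) k : ℕ) : R)) := by
  have hcast := nil_prod_sub (R := R) (fun i => 2*i+1) p k hp2
    (fun i hi => by show 2*i+1 ≤ p; omega)
  rw [← descA hpa k hk] at hcast
  rw [oddP]
  push_cast at hcast ⊢
  linear_combination hcast

lemma castB (hpa : p = 2*a+1) (hp2 : ((p:R))^2 = 0) (j : ℕ) (hj : j ≤ a) :
    (((a+p).descFactorial j : ℕ) : R)
      = ((a.descFactorial j : ℕ) : R) + (p:R) * ((nilY (fun i => a - i) j : ℕ) : R) := by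
  have h := descB hpa j hj
  have hcast : (((a+p).descFactorial j : ℕ) : R)
      = ((∏ i ∈ range j, (p + (a - i)) : ℕ) : R) := by rw [h]
  rw [nil_prod_add (fun i => a - i) p j hp2] at hcast
  rw [hcast, Nat.descFactorial_eq_prod_range]

lemma castC (hpa : p = 2*a+1) (hp2 : ((p:R))^2 = 0) :
    (((p-1).descFactorial a : ℕ) : R)
      = (-1)^a * ((a.factorial : R) - (p:R) * ((nilY (fun i => i+1) a : ℕ) : R)) := by
  have hcast := nil_prod_sub (R := R) (fun i => i+1) p a hp2
    (fun i hi => by show i+1 ≤ p; omega)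
  rw [← descC (a := a) hpa, prod_range_add_one] at hcast
  rw [hcast]

lemma castD (hpa : p = 2*a+1) (hp2 : ((p:R))^2 = 0) :
    (((2*p-1).descFactorial a : ℕ) : R)
      = (-1)^a * ((a.factorial : R) - 2*(p:R) * ((nilY (fun i => i+1) a : ℕ) : R)) := by
  have h2p : (((2*p : ℕ)):R)^2 = 0 := by
    push_cast
    calc ((2:R)*p)^2 = 4 * ((p:R))^2 := by ring
    _ = 0 := by rw [hp2, mul_zero]
  have hcast := nil_prod_sub (R := R) (fun i => i+1) (2*p) a h2p
    (fun i hi => by show i+1 ≤ 2*p; omega)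
  rw [← descD (a := a) hpa, prod_range_add_one] at hcast
  rw [hcast]
  push_cast
  ring

lemma TW (hpa : p = 2*a+1) : ∀ k, k ≤ a →
    2*((nilY (fun i => 2*i+1) k : ℕ) : ZMod p)
      + (-1)^k * 2^k * ((nilY (fun i => a - i) k : ℕ) : ZMod p) = 0 := by
  intro k
  induction k with
  | zero => intro _; simp [nilY]
  | succ n ih =>
    intro hk
    have hn : n ≤ a := by omega
    have ihn := ih hn
    have hp0 : ((p : ZMod p)) = 0 := ZMod.natCast_self p
    have hp2 : ((p : ZMod p))^2 = 0 := by rw [hp0]; ring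
    have h2 : ((a.descFactorial n : ℕ) : ZMod p) * 2^n = (-1)^n * ((oddP n : ℕ) : ZMod p) := by
      have h := castA (R := ZMod p) hpa hp2 n hn
      rw [hp0] at h
      simpa using h
    have h1 : ((2*(a-n) : ℕ) : ZMod p) = -(2*(n : ZMod p)+1) := by
      have hn' : 2*(a-n) = p - (2*n+1) := by omega
      rw [hn', Nat.cast_sub (by omega), hp0]
      push_cast
      ring
    simp only [nilY]
    rw [← Nat.descFactorial_eq_prod_range,
      show (∏ i ∈ range n, (2*i+1)) = oddP n from rfl]
    have hneg : ((-1 : ZMod p))^(n*2) = 1 := by rw [mul_comm, pow_mul]; norm_num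
    push_cast at h1 ⊢
    linear_combination (2*(n : ZMod p)+1) * ihn
      + ((-1)^(n+1) * 2^n * ((nilY (fun i => a - i) n : ℕ) : ZMod p)) * h1
      + ((-1)^(n+1) * 2) * h2 - 2 * ((oddP n : ℕ) : ZMod p) * hneg

end WithP

lemma unit_cast {p : ℕ} (pp : p.Prime) {n : ℕ} (h : ¬ p ∣ n) :
    IsUnit ((n : ℕ) : ZMod (p^2)) := by
  rw [ZMod.isUnit_iff_coprime]
  exact ((Nat.Prime.coprime_iff_not_dvd pp).2 h).symm.pow_right 2

lemma pmul_eq_zero {p : ℕ} (pp : p.Prime) (r : ZMod (p^2))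
    (h : ZMod.castHom (dvd_pow_self p (by norm_num : (2:ℕ) ≠ 0)) (ZMod p) r = 0) :
    (p : ZMod (p^2)) * r = 0 := by
  haveI : NeZero (p^2) := ⟨pow_ne_zero 2 pp.ne_zero⟩
  haveI : NeZero p := ⟨pp.ne_zero⟩
  have hr : ((r.val : ℕ) : ZMod (p^2)) = r := ZMod.natCast_rightInverse r
  rw [← hr, map_natCast] at h
  obtain ⟨t, ht⟩ := (ZMod.natCast_eq_zero_iff _ _).1 h
  have hps : ((p : ZMod (p^2)))^2 = 0 := by rw [← Nat.cast_pow, ZMod.natCast_self]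
  rw [← hr, ht]
  push_cast
  linear_combination (t : ZMod (p^2)) * hps

end RV16

open RV16

/-- For any prime `p ≥ 5`,
`∑_{k=0}^{p-1} (C(2k,k))^2 / 16^k ≡ (-1/p) (mod p^2)`, stated in `ZMod (p^2)`. -/
theorem rv_supercongruence_16 (p : ℕ) [Fact p.Prime] (hp : 5 ≤ p) :
    ∑ k ∈ Finset.range p,
        ((Nat.choose (2 * k) k : ZMod (p ^ 2)) ^ 2 * ((16 : ZMod (p ^ 2))⁻¹) ^ k)
      = (legendreSym p (-1) : ZMod (p ^ 2)) := by
  classical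
  have pp : p.Prime := Fact.out
  obtain ⟨a, ha⟩ : ∃ a, p = 2*a+1 := by
    obtain ⟨a, ha⟩ := pp.odd_of_ne_two (by omega)
    exact ⟨a, by omega⟩
  have hp2 : ((p : ZMod (p^2)))^2 = 0 := by rw [← Nat.cast_pow, ZMod.natCast_self]
  -- shorthand
  set R := ZMod (p^2) with hR
  set F := ZMod p with hF
  set φ := ZMod.castHom (dvd_pow_self p (by norm_num : (2:ℕ) ≠ 0)) F with hφ
  -- non-divisibility facts
  have hnd2 : ¬ p ∣ 2 := fun h => by have := Nat.le_of_dvd (by norm_num) h; omega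
  have hnd16 : ¬ p ∣ 16 := fun h => by
    have h' : p ∣ 2^4 := by norm_num at h ⊢; exact h
    exact hnd2 (pp.dvd_of_dvd_pow h')
  have hndf : ∀ k, k ≤ a → ¬ p ∣ k.factorial := fun k hk h => by
    rw [Nat.Prime.dvd_factorial pp] at h; omega
  have hndQ : ∀ k, k ≤ a → ¬ p ∣ 4^k * k.factorial^2 := by
    intro k hk h
    rcases (Nat.Prime.dvd_mul pp).1 h with h4 | hf
    · have h' : p ∣ 2^(2*k) := by
        rw [pow_mul]; norm_num; exact h4
      exact hnd2 (pp.dvd_of_dvd_pow h')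
    · exact hndf k hk (pp.dvd_of_dvd_pow hf)
  -- units
  have hu16 : IsUnit (16 : R) := by
    have := unit_cast pp hnd16
    simpa using this
  have h16 : (16 : R) * (16 : R)⁻¹ = 1 := ZMod.mul_inv_of_unit _ hu16
  have hufact : ∀ k, k ≤ a → IsUnit ((k.factorial : ℕ) : R) :=
    fun k hk => unit_cast pp (hndf k hk)
  have hu : ∀ j, j ≤ a → ((j.factorial : ℕ) : R) * ((j.factorial : ℕ) : R)⁻¹ = 1 :=
    fun j hj => ZMod.mul_inv_of_unit _ (hufact j hj)
  have huQ : ∀ k, k ≤ a → IsUnit (((4^k * k.factorial^2 : ℕ)) : R) :=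
    fun k hk => unit_cast pp (hndQ k hk)
  have hδ : ∀ k, k ≤ a →
      (((4^k * k.factorial^2 : ℕ)) : R) * (((4^k * k.factorial^2 : ℕ) : R))⁻¹ = 1 :=
    fun k hk => ZMod.mul_inv_of_unit _ (huQ k hk)
  -- step 2 : individual terms
  have step2 : ∀ k, k ≤ a →
      ((Nat.choose (2 * k) k : R)) ^ 2 * ((16 : R)⁻¹) ^ k
        = ((a.choose k : ℕ) : R)^2 + (p : R) *
          (2 * ((oddP k : ℕ) : R) * ((nilY (fun i => 2*i+1) k : ℕ) : R)
            * (((4^k * k.factorial^2 : ℕ) : R))⁻¹) := by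
    intro k hk
    have e1 : ((Nat.choose (2*k) k : ℕ) : R) * ((k.factorial : ℕ) : R)
        = 2^k * ((oddP k : ℕ) : R) := by
      have h := congrArg (fun n : ℕ => (n : R)) (choose_central k)
      push_cast [R] at h
      exact h
    have e2 : ((a.choose k : ℕ) : R) * ((k.factorial : ℕ) : R) * 2^k
        = (-1)^k * (((oddP k : ℕ) : R) - (p : R) * ((nilY (fun i => 2*i+1) k : ℕ) : R)) := by
      have h := castA (R := R) ha hp2 k hk
      rw [Nat.descFactorial_eq_factorial_mul_choose] at h
      push_cast [R] at h
      linear_combination h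
    have e3 : ((16 : R)⁻¹)^k * (16 : R)^k = 1 := by
      rw [← mul_pow, mul_comm, h16, one_pow]
    have e4 : (((4^k * k.factorial^2 : ℕ)) : R) = (4 : R)^k * ((k.factorial : ℕ) : R)^2 := by
      push_cast [R]; ring
    have hm : ((-1 : R))^(k*2) = 1 := by rw [mul_comm, pow_mul]; norm_num
    have h22 : (2 : R)^k * 2^k = (4 : R)^k := by rw [← mul_pow]; norm_num
    have h44 : (4 : R)^k * 4^k = (16 : R)^k := by rw [← mul_pow]; norm_num
    have hunit : IsUnit ((16 : R)^k * ((k.factorial : ℕ) : R)^2) :=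
      (hu16.pow k).mul ((hufact k hk).pow 2)
    refine hunit.mul_right_cancel ?_
    have hL : ((Nat.choose (2*k) k : ℕ) : R)^2 * ((16 : R)⁻¹)^k
        * ((16 : R)^k * ((k.factorial : ℕ) : R)^2) = (4 : R)^k * ((oddP k : ℕ) : R)^2 := by
      calc ((Nat.choose (2*k) k : ℕ) : R)^2 * ((16 : R)⁻¹)^k
            * ((16 : R)^k * ((k.factorial : ℕ) : R)^2)
          = (((Nat.choose (2*k) k : ℕ) : R) * ((k.factorial : ℕ) : R))^2
            * (((16 : R)⁻¹)^k * (16 : R)^k) := by ring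
        _ = (2^k * ((oddP k : ℕ) : R))^2 * 1 := by rw [e1, e3]
        _ = ((2:R)^k * 2^k) * ((oddP k : ℕ) : R)^2 := by ring
        _ = (4 : R)^k * ((oddP k : ℕ) : R)^2 := by rw [h22]
    have hB : ((a.choose k : ℕ) : R)^2 * ((16 : R)^k * ((k.factorial : ℕ) : R)^2)
        = (4 : R)^k * (((oddP k : ℕ) : R)^2
          - 2 * (p:R) * ((oddP k : ℕ) : R) * ((nilY (fun i => 2*i+1) k : ℕ) : R)) := by
      calc ((a.choose k : ℕ) : R)^2 * ((16 : R)^k * ((k.factorial : ℕ) : R)^2)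
          = (((a.choose k : ℕ) : R) * ((k.factorial : ℕ) : R) * 2^k)^2 * ((4:R)^k) := by
            rw [← h44, ← h22]; ring
        _ = ((-1)^k * (((oddP k : ℕ) : R)
            - (p : R) * ((nilY (fun i => 2*i+1) k : ℕ) : R)))^2 * ((4:R)^k) := by rw [e2]
        _ = ((-1:R))^(k*2) * (((oddP k : ℕ) : R)
            - (p : R) * ((nilY (fun i => 2*i+1) k : ℕ) : R))^2 * ((4:R)^k) := by ring
        _ = (((oddP k : ℕ) : R)
            - (p : R) * ((nilY (fun i => 2*i+1) k : ℕ) : R))^2 * ((4:R)^k) := by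
            rw [hm, one_mul]
        _ = (4 : R)^k * (((oddP k : ℕ) : R)^2
            - 2 * (p:R) * ((oddP k : ℕ) : R) * ((nilY (fun i => 2*i+1) k : ℕ) : R))
            + ((p:R))^2 * (((nilY (fun i => 2*i+1) k : ℕ) : R)^2 * (4:R)^k) := by ring
        _ = _ := by rw [hp2]; ring
    have hQ4 : (16 : R)^k * ((k.factorial : ℕ) : R)^2
        = (((4^k * k.factorial^2 : ℕ)) : R) * (4:R)^k := by
      rw [e4, ← h44]; ring
    have hD' : ((p : R) * (2 * ((oddP k : ℕ) : R) * ((nilY (fun i => 2*i+1) k : ℕ) : R)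
          * (((4^k * k.factorial^2 : ℕ) : R))⁻¹)) * ((16 : R)^k * ((k.factorial : ℕ) : R)^2)
        = (p : R) * (2 * ((oddP k : ℕ) : R) * ((nilY (fun i => 2*i+1) k : ℕ) : R)) * (4:R)^k := by
      calc ((p : R) * (2 * ((oddP k : ℕ) : R) * ((nilY (fun i => 2*i+1) k : ℕ) : R)
            * (((4^k * k.factorial^2 : ℕ) : R))⁻¹)) * ((16 : R)^k * ((k.factorial : ℕ) : R)^2)
          = (p : R) * (2 * ((oddP k : ℕ) : R) * ((nilY (fun i => 2*i+1) k : ℕ) : R)) * (4:R)^k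
            * ((((4^k * k.factorial^2 : ℕ)) : R) * (((4^k * k.factorial^2 : ℕ) : R))⁻¹) := by
            rw [hQ4]; ring
        _ = _ := by rw [hδ k hk]; ring
    linear_combination hL - hB - hD'
  -- vanishing of the upper terms
  have hvan : ∀ x ∈ Finset.range p, x ∉ Finset.range (a+1) →
      ((Nat.choose (2 * x) x : R)) ^ 2 * ((16 : R)⁻¹) ^ x = 0 := by
    intro x hx hnx
    have hx1 : x < p := Finset.mem_range.1 hx
    have hx2 : a + 1 ≤ x := by
      by_contra h
      exact hnx (Finset.mem_range.2 (by omega))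
    have hdvd : p ∣ (2*x).choose x :=
      Nat.Prime.dvd_choose pp (by omega) (by omega) (by omega)
    obtain ⟨c, hc⟩ := hdvd
    rw [show 2 * x = 2*x from rfl, hc]
    push_cast [R]
    linear_combination (((c:R))^2 * ((16 : R)⁻¹)^x) * hp2
  have hsplit : ∑ k ∈ Finset.range p, ((Nat.choose (2 * k) k : R)) ^ 2 * ((16 : R)⁻¹) ^ k
      = ∑ k ∈ Finset.range (a+1), ((Nat.choose (2 * k) k : R)) ^ 2 * ((16 : R)⁻¹) ^ k :=
    (Finset.sum_subset (Finset.range_subset_range.2 (by omega)) hvan).symm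
  have hsum2 : ∑ k ∈ Finset.range (a+1), ((Nat.choose (2 * k) k : R)) ^ 2 * ((16 : R)⁻¹) ^ k
      = (∑ k ∈ Finset.range (a+1), ((a.choose k : ℕ) : R)^2)
        + (p : R) * ∑ k ∈ Finset.range (a+1),
            (2 * ((oddP k : ℕ) : R) * ((nilY (fun i => 2*i+1) k : ℕ) : R)
              * (((4^k * k.factorial^2 : ℕ) : R))⁻¹) := by
    rw [Finset.sum_congr rfl
      (fun k hk => step2 k (by have := Finset.mem_range.1 hk; omega))]
    rw [Finset.sum_add_distrib, Finset.mul_sum]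
  -- Vandermonde identities in ℕ
  have hCnat : (p-1).choose a = ∑ k ∈ Finset.range (a+1), a.choose k * a.choose (a-k) := by
    have hv := Nat.add_choose_eq a a a
    rw [Finset.Nat.sum_antidiagonal_eq_sum_range_succ_mk] at hv
    rw [show a + a = p - 1 by omega] at hv
    exact hv
  have hVnat : (2*p-1).choose a
      = ∑ k ∈ Finset.range (a+1), a.choose k * (a+p).choose (a-k) := by
    have hv := Nat.add_choose_eq a (a+p) a
    rw [Finset.Nat.sum_antidiagonal_eq_sum_range_succ_mk] at hv
    rw [show a + (a+p) = 2*p - 1 by omega] at hv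
    exact hv
  have hCsq : (∑ k ∈ Finset.range (a+1), ((a.choose k : ℕ) : R)^2)
      = (((p-1).choose a : ℕ) : R) := by
    have hcast := congrArg (fun n : ℕ => (n : R)) hCnat
    push_cast [R] at hcast
    rw [hcast]
    exact Finset.sum_congr rfl fun k hk => by
      rw [Nat.choose_symm (show k ≤ a by have := Finset.mem_range.1 hk; omega)]
      ring
  -- value of the central binomial coefficients via descFactorial expansions
  have hC : (((p-1).choose a : ℕ) : R) * ((a.factorial : ℕ) : R)
      = (-1)^a * (((a.factorial : ℕ) : R) - (p : R) * ((nilY (fun i => i+1) a : ℕ) : R)) := by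
    have h := castC (R := R) ha hp2
    rw [Nat.descFactorial_eq_factorial_mul_choose] at h
    push_cast [R] at h ⊢
    linear_combination h
  have hD : (((2*p-1).choose a : ℕ) : R) * ((a.factorial : ℕ) : R)
      = (-1)^a * (((a.factorial : ℕ) : R) - 2*(p : R) * ((nilY (fun i => i+1) a : ℕ) : R)) := by
    have h := castD (R := R) ha hp2
    rw [Nat.descFactorial_eq_factorial_mul_choose] at h
    push_cast [R] at h ⊢
    linear_combination h
  have hBj : ∀ j, j ≤ a → (((a+p).choose j : ℕ) : R)
      = ((a.choose j : ℕ) : R) + (p : R) * ((nilY (fun i => a - i) j : ℕ) : R)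
          * (((j.factorial : ℕ) : R))⁻¹ := by
    intro j hj
    refine (hufact j hj).mul_right_cancel ?_
    have h := castB (R := R) ha hp2 j hj
    rw [Nat.descFactorial_eq_factorial_mul_choose,
      Nat.descFactorial_eq_factorial_mul_choose] at h
    have h2 := hu j hj
    push_cast [R] at h
    linear_combination h - ((p : R) * ((nilY (fun i => a - i) j : ℕ) : R)) * h2
  have hVR : (((2*p-1).choose a : ℕ) : R) = (((p-1).choose a : ℕ) : R)
      + (p : R) * ∑ k ∈ Finset.range (a+1), (((a.choose k : ℕ) : R)
          * ((nilY (fun i => a - i) (a-k) : ℕ) : R) * ((((a-k).factorial : ℕ) : R))⁻¹) := by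
    have hcast := congrArg (fun n : ℕ => (n : R)) hVnat
    push_cast [R] at hcast
    have hcast2 := congrArg (fun n : ℕ => (n : R)) hCnat
    push_cast [R] at hcast2
    have hterm : ∀ k ∈ Finset.range (a+1),
        ((a.choose k : ℕ) : R) * (((a+p).choose (a-k) : ℕ) : R)
          = ((a.choose k : ℕ) : R) * ((a.choose (a-k) : ℕ) : R)
            + (p : R) * (((a.choose k : ℕ) : R)
                * ((nilY (fun i => a - i) (a-k) : ℕ) : R)
                * ((((a-k).factorial : ℕ) : R))⁻¹) := fun k hk => by
      rw [hBj (a-k) (by omega)]; ring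
    rw [hcast, Finset.sum_congr rfl hterm, Finset.sum_add_distrib, ← Finset.mul_sum, ← hcast2]
  have hE1 : (p : R) * (∑ k ∈ Finset.range (a+1), (((a.choose k : ℕ) : R)
          * ((nilY (fun i => a - i) (a-k) : ℕ) : R) * ((((a-k).factorial : ℕ) : R))⁻¹))
        * ((a.factorial : ℕ) : R)
      = -((-1)^a * ((p : R) * ((nilY (fun i => i+1) a : ℕ) : R))) := by
    linear_combination hD - hC - ((a.factorial : ℕ) : R) * hVR
  -- the mod-p vanishing
  have key : ∀ k, k ≤ a →
      2 * ((oddP k : ℕ) : F) * ((nilY (fun i => 2*i+1) k : ℕ) : F)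
          * φ ((((4^k * k.factorial^2 : ℕ) : R))⁻¹)
        + ((a.choose k : ℕ) : F) * ((nilY (fun i => a - i) k : ℕ) : F)
          * φ ((((k.factorial : ℕ) : R))⁻¹) = 0 := by
    intro k hk
    have hw : IsUnit ((((4^k * k.factorial^2 : ℕ)) : F)) := by
      show IsUnit (((4^k * k.factorial^2 : ℕ)) : ZMod p)
      rw [ZMod.isUnit_iff_coprime]
      exact ((Nat.Prime.coprime_iff_not_dvd pp).2 (hndQ k hk)).symm
    refine hw.mul_right_cancel ?_
    have r1 : (((4^k * k.factorial^2 : ℕ)) : F) * φ ((((4^k * k.factorial^2 : ℕ) : R))⁻¹)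
        = 1 := by
      have h := congrArg φ (hδ k hk)
      rw [map_mul, map_one, map_natCast] at h
      exact h
    have r2 : ((k.factorial : ℕ) : F) * φ ((((k.factorial : ℕ) : R))⁻¹) = 1 := by
      have h := congrArg φ (hu k hk)
      rw [map_mul, map_one, map_natCast] at h
      exact h
    have r3 : (((4^k * k.factorial^2 : ℕ)) : F) = (4 : F)^k * ((k.factorial : ℕ) : F)^2 := by
      push_cast [F]; ring
    have r4 : ((k.factorial : ℕ) : F) * ((a.choose k : ℕ) : F) * 2^k
        = (-1)^k * ((oddP k : ℕ) : F) := by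
      have hpF : ((p : F))^2 = 0 := by
        show ((p : ZMod p))^2 = 0
        rw [ZMod.natCast_self]; ring
      have h := castA (R := F) ha hpF k hk
      rw [Nat.descFactorial_eq_factorial_mul_choose] at h
      rw [show ((p:F)) = 0 from ZMod.natCast_self p] at h
      push_cast [F] at h
      linear_combination h
    have r5 := TW (p := p) ha k hk
    have r6 : (4 : F)^k = (2 : F)^(k*2) := by
      rw [mul_comm, pow_mul]; norm_num
    linear_combination
      (2 * ((oddP k : ℕ) : F) * ((nilY (fun i => 2*i+1) k : ℕ) : F)) * r1
      + (((a.choose k : ℕ) : F) * ((nilY (fun i => a - i) k : ℕ) : F)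
          * φ ((((k.factorial : ℕ) : R))⁻¹)) * r3
      + ((4 : F)^k * ((a.choose k : ℕ) : F) * ((nilY (fun i => a - i) k : ℕ) : F)
          * ((k.factorial : ℕ) : F)) * r2
      + ((2 : F)^k * ((nilY (fun i => a - i) k : ℕ) : F)) * r4
      + ((oddP k : ℕ) : F) * r5
      + (((a.choose k : ℕ) : F) * ((nilY (fun i => a - i) k : ℕ) : F)
          * ((k.factorial : ℕ) : F)) * r6
  have hzero : (p : R) * ((∑ k ∈ Finset.range (a+1),
        (2 * ((oddP k : ℕ) : R) * ((nilY (fun i => 2*i+1) k : ℕ) : R)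
          * (((4^k * k.factorial^2 : ℕ) : R))⁻¹))
      + (∑ k ∈ Finset.range (a+1), (((a.choose k : ℕ) : R)
          * ((nilY (fun i => a - i) (a-k) : ℕ) : R) * ((((a-k).factorial : ℕ) : R))⁻¹))) = 0 := by
    apply pmul_eq_zero pp
    show φ _ = 0
    rw [map_add, map_sum, map_sum]
    have hφ1 : ∀ k ∈ Finset.range (a+1),
        φ (2 * ((oddP k : ℕ) : R) * ((nilY (fun i => 2*i+1) k : ℕ) : R)
          * (((4^k * k.factorial^2 : ℕ) : R))⁻¹)
        = 2 * ((oddP k : ℕ) : F) * ((nilY (fun i => 2*i+1) k : ℕ) : F)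
          * φ ((((4^k * k.factorial^2 : ℕ) : R))⁻¹) := fun k hk => by
      rw [map_mul, map_mul, map_mul, map_natCast, map_natCast, map_ofNat]
    have hφ2 : ∀ k ∈ Finset.range (a+1),
        φ (((a.choose k : ℕ) : R) * ((nilY (fun i => a - i) (a-k) : ℕ) : R)
          * ((((a-k).factorial : ℕ) : R))⁻¹)
        = ((a.choose (a-(a-k)) : ℕ) : F) * ((nilY (fun i => a - i) (a-k) : ℕ) : F)
          * φ ((((((a-k)).factorial : ℕ) : R))⁻¹) := fun k hk => by
      rw [map_mul, map_mul, map_natCast, map_natCast,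
        Nat.sub_sub_self (show k ≤ a by have := Finset.mem_range.1 hk; omega)]
    rw [Finset.sum_congr rfl hφ1, Finset.sum_congr rfl hφ2]
    rw [show ∑ k ∈ Finset.range (a+1), (((a.choose (a-(a-k)) : ℕ) : F)
        * ((nilY (fun i => a - i) (a-k) : ℕ) : F) * φ ((((((a-k)).factorial : ℕ) : R))⁻¹))
      = ∑ j ∈ Finset.range (a+1), (((a.choose (a-j) : ℕ) : F)
        * ((nilY (fun i => a - i) j : ℕ) : F) * φ (((((j).factorial : ℕ) : R))⁻¹)) from by
      have := Finset.sum_range_reflect (fun j => (((a.choose (a-j) : ℕ) : F)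
        * ((nilY (fun i => a - i) j : ℕ) : F) * φ (((((j).factorial : ℕ) : R))⁻¹))) (a+1)
      simp only [Nat.add_sub_cancel] at this
      exact this]
    rw [← Finset.sum_add_distrib]
    refine Finset.sum_eq_zero fun k hk => ?_
    have hk' : k ≤ a := by have := Finset.mem_range.1 hk; omega
    rw [Nat.choose_symm hk']
    exact key k hk'
  -- Legendre symbol value
  have hLeg : ((legendreSym p (-1) : ℤ) : R) = (-1)^a := by
    have h1 : legendreSym p (-1) = ZMod.χ₄ p := legendreSym.at_neg_one (by omega)
    have h2 : (ZMod.χ₄ p : ℤ) = (-1)^(p/2) := ZMod.χ₄_eq_neg_one_pow (by omega)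
    rw [h1, h2, show p/2 = a by omega]
    push_cast
    ring
  rw [hsplit, hsum2, hCsq, hLeg]
  refine (hufact a le_rfl).mul_right_cancel ?_
  linear_combination hC - hE1 + ((a.factorial : ℕ) : R) * hzero
end

section
/- For any prime p ≥ 5, the sum over k from 0 to p-1 of binom(3k,2k)·binom(2k,k) / 27^k is congruent to the Legendre symbol (-3/p) modulo p^2. -/
open Finset

lemma fact3k (k : ℕ) :
    (3 * k).factorial = 3 ^ k * k.factorial * ∏ i ∈ range k, ((3 * i + 1) * (3 * i + 2)) := by
  induction k with
  | zero => simp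
  | succ k ih =>
    have h3 : 3 * (k + 1) = (3 * k) + 1 + 1 + 1 := by ring
    rw [h3, Nat.factorial_succ, Nat.factorial_succ, Nat.factorial_succ, ih, prod_range_succ,
      Nat.factorial_succ]
    ring

lemma chooseprod (k : ℕ) :
    Nat.choose (3 * k) (2 * k) * Nat.choose (2 * k) k * k.factorial ^ 3 = (3 * k).factorial := by
  have h1 : Nat.choose (3 * k) (2 * k) * (2 * k).factorial * (3 * k - 2 * k).factorial
      = (3 * k).factorial := Nat.choose_mul_factorial_mul_factorial (by omega)
  have h2 : Nat.choose (2 * k) k * k.factorial * (2 * k - k).factorial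
      = (2 * k).factorial := Nat.choose_mul_factorial_mul_factorial (by omega)
  have e1 : 3 * k - 2 * k = k := by omega
  have e2 : 2 * k - k = k := by omega
  rw [e1] at h1; rw [e2] at h2
  calc Nat.choose (3 * k) (2 * k) * Nat.choose (2 * k) k * k.factorial ^ 3
      = Nat.choose (3 * k) (2 * k) * (Nat.choose (2 * k) k * k.factorial * k.factorial)
        * k.factorial := by ring
    _ = Nat.choose (3 * k) (2 * k) * (2 * k).factorial * k.factorial := by rw [h2]
    _ = (3 * k).factorial := h1

lemma pow_add_eps {R : Type*} [CommRing R] (a ε : R) (h : ε * ε = 0) :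
    ∀ m : ℕ, (a + ε) ^ m = a ^ m + m * a ^ (m - 1) * ε := by
  have aux : ∀ m : ℕ, (a + ε) ^ (m + 1) = a ^ (m + 1) + (m + 1) * a ^ m * ε := by
    intro m
    induction m with
    | zero => push_cast; ring
    | succ m ih =>
      have : (a + ε) ^ (m + 1 + 1) = ((a + ε) ^ (m + 1)) * (a + ε) := by ring
      rw [this, ih]
      have expand : (a ^ (m + 1) + (↑m + 1) * a ^ m * ε) * (a + ε)
          = a ^ (m + 2) + (↑m + 2) * a ^ (m + 1) * ε + (↑m + 1) * a ^ m * (ε * ε) := by ring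
      rw [expand, h]
      push_cast
      ring
  intro m
  cases m with
  | zero => simp
  | succ m => simpa using aux m

lemma eval_add_eps {R : Type*} [CommRing R] (Q : Polynomial R) (a ε : R) (h : ε * ε = 0) :
    Q.eval (a + ε) = Q.eval a + ε * Q.derivative.eval a := by
  induction Q using Polynomial.induction_on' with
  | add f g hf hg =>
    rw [Polynomial.eval_add, Polynomial.eval_add, Polynomial.derivative_add,
      Polynomial.eval_add, hf, hg]
    ring
  | monomial n c =>
    rw [Polynomial.eval_monomial, Polynomial.eval_monomial, Polynomial.derivative_monomial,
      Polynomial.eval_monomial, pow_add_eps a ε h n]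
    ring


open Finset Nat

lemma key_main (j d : ℕ) :
    ((j + 2 + d) * ((j + 2 + d).choose (j + 1) * (2 * j + 3 + d).choose (j + 1)
        + (j + 1 + d).choose (j + 1) * (2 * j + 2 + d).choose (j + 1)) : ℚ)
      = 2 * (d + 1) * ((j + 2 + d).choose (j + 1)) * ((2 * j + 3 + d).choose (j + 1))
        + 2 * (d + 2) * ((j + 2 + d).choose j) * ((2 * j + 2 + d).choose j) := by
  have e1 : j + 2 + d - (j + 1) = d + 1 := by omega
  have e2 : 2 * j + 3 + d - (j + 1) = j + 2 + d := by omega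
  have e3 : j + 1 + d - (j + 1) = d := by omega
  have e4 : 2 * j + 2 + d - (j + 1) = j + 1 + d := by omega
  have e5 : j + 2 + d - j = d + 2 := by omega
  have e6 : 2 * j + 2 + d - j = j + 2 + d := by omega
  have c1 : (((j + 2 + d).choose (j + 1) : ℚ)) = (j + 2 + d)! / ((j + 1)! * (d + 1)!) := by
    rw [Nat.cast_choose ℚ (by omega), e1]
  have c2 : (((2 * j + 3 + d).choose (j + 1) : ℚ)) = (2 * j + 3 + d)! / ((j + 1)! * (j + 2 + d)!) := by
    rw [Nat.cast_choose ℚ (by omega), e2]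
  have c3 : (((j + 1 + d).choose (j + 1) : ℚ)) = (j + 1 + d)! / ((j + 1)! * d !) := by
    rw [Nat.cast_choose ℚ (by omega), e3]
  have c4 : (((2 * j + 2 + d).choose (j + 1) : ℚ)) = (2 * j + 2 + d)! / ((j + 1)! * (j + 1 + d)!) := by
    rw [Nat.cast_choose ℚ (by omega), e4]
  have c5 : (((j + 2 + d).choose j : ℚ)) = (j + 2 + d)! / (j ! * (d + 2)!) := by
    rw [Nat.cast_choose ℚ (by omega), e5]
  have c6 : (((2 * j + 2 + d).choose j : ℚ)) = (2 * j + 2 + d)! / (j ! * (j + 2 + d)!) := by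
    rw [Nat.cast_choose ℚ (by omega), e6]
  have g1 : (j + 1)! = (j + 1) * j ! := Nat.factorial_succ j
  have g2 : (d + 1)! = (d + 1) * d ! := Nat.factorial_succ d
  have g3 : (d + 2)! = (d + 2) * ((d + 1) * d !) := by
    rw [show d + 2 = (d + 1) + 1 by omega, Nat.factorial_succ, Nat.factorial_succ]
  have g4 : (j + 2 + d)! = (j + 2 + d) * (j + 1 + d)! := by
    rw [show j + 2 + d = (j + 1 + d) + 1 by omega, Nat.factorial_succ]
  have g5 : (2 * j + 3 + d)! = (2 * j + 3 + d) * (2 * j + 2 + d)! := by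
    rw [show 2 * j + 3 + d = (2 * j + 2 + d) + 1 by omega, Nat.factorial_succ]
  have hj : (j ! : ℚ) ≠ 0 := Nat.cast_ne_zero.mpr (Nat.factorial_ne_zero _)
  have hd : (d ! : ℚ) ≠ 0 := Nat.cast_ne_zero.mpr (Nat.factorial_ne_zero _)
  have hjd : ((j + 1 + d)! : ℚ) ≠ 0 := Nat.cast_ne_zero.mpr (Nat.factorial_ne_zero _)
  have h2jd : ((2 * j + 2 + d)! : ℚ) ≠ 0 := Nat.cast_ne_zero.mpr (Nat.factorial_ne_zero _)
  rw [c1, c2, c3, c4, c5, c6, g5, g4, g3, g2, g1]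
  push_cast
  field_simp
  ring



lemma pascal_double (a : ℕ) :
    (2 * a + 2).choose (a + 1) = 2 * (2 * a + 1).choose a := by
  have h1 : (2 * a + 2).choose (a + 1) = (2 * a + 1).choose a + (2 * a + 1).choose (a + 1) := by
    rw [show 2 * a + 2 = (2 * a + 1) + 1 by omega, Nat.choose_succ_succ']
  have h2 : (2 * a + 1).choose (a + 1) = (2 * a + 1).choose a := by
    rw [← Nat.choose_symm (by omega : a + 1 ≤ 2 * a + 1)]
    congr 1
    omega
  omega

lemma LvalQ (n : ℕ) :
    ∑ k ∈ range (n + 1), ((-1 : ℚ) ^ k * (n.choose k) * ((n + k).choose k)) = (-1) ^ n := by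
  induction n with
  | zero => simp
  | succ n ih =>
    set H : ℕ → ℚ := fun j => if j = 0 then 0 else
      2 * ((n : ℚ) + 2 - j) * (-1) ^ (j - 1) * ((n + 1).choose (j - 1))
        * ((n + 1 + (j - 1)).choose (j - 1)) with hH
    have key : ∀ k ∈ range (n + 2),
        ((n : ℚ) + 1) * (((-1 : ℚ) ^ k * ((n + 1).choose k) * ((n + 1 + k).choose k))
          + ((-1 : ℚ) ^ k * (n.choose k) * ((n + k).choose k)))
          = H (k + 1) - H k := by
      intro k hk
      rcases k with _ | j
      · simp [hH]
        ring
      · have hj : j + 1 ≤ n + 1 := by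
          simp only [mem_range] at hk; omega
        have hH2 : H (j + 1 + 1) = 2 * ((n : ℚ) - j) * (-1) ^ (j + 1)
            * ((n + 1).choose (j + 1)) * ((n + 1 + (j + 1)).choose (j + 1)) := by
          simp only [hH, if_neg (Nat.succ_ne_zero _), Nat.add_sub_cancel]
          push_cast
          ring
        have hH1 : H (j + 1) = 2 * ((n : ℚ) + 1 - j) * (-1) ^ j
            * ((n + 1).choose j) * ((n + 1 + j).choose j) := by
          simp only [hH, if_neg (Nat.succ_ne_zero _), Nat.add_sub_cancel]
          push_cast
          ring
        rw [hH2, hH1]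
        rcases Nat.lt_or_ge j n with hjn | hjn
        · -- main case: j < n, set d = n - 1 - j
          obtain ⟨d, rfl⟩ : ∃ d, n = j + 1 + d := ⟨n - (j + 1), by omega⟩
          have I := key_main j d
          have e2 : j + 1 + d + 1 + (j + 1) = 2 * j + 3 + d := by omega
          have e3 : j + 1 + d + (j + 1) = 2 * j + 2 + d := by omega
          have e4 : j + 1 + d + 1 + j = 2 * j + 2 + d := by omega
          have e1 : j + 1 + d + 1 = j + 2 + d := by omega
          rw [e2, e3, e4, e1]
          rw [pow_succ]
          push_cast at I ⊢
          linear_combination ((-1 : ℚ) ^ j) * (-1) * I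
        · -- boundary: j = n
          have hj' : j = n := by omega
          subst hj'
          have c0 : (j).choose (j + 1) = 0 := Nat.choose_succ_self j
          have e2 : j + 1 + (j + 1) = 2 * j + 2 := by omega
          have e4 : j + 1 + j = 2 * j + 1 := by omega
          rw [e2, e4, c0]
          have pd : ((2 * j + 2).choose (j + 1) : ℚ) = 2 * ((2 * j + 1).choose j) := by
            exact_mod_cast congrArg (Nat.cast (R := ℚ)) (pascal_double j)
          have cs : ((j + 1).choose j : ℚ) = (j + 1) := by
            exact_mod_cast congrArg (Nat.cast (R := ℚ)) (Nat.choose_succ_self_right j)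
          rw [Nat.choose_self, pow_succ, pd, cs]
          push_cast
          ring
    have tele : ∑ k ∈ range (n + 2), (H (k + 1) - H k) = H (n + 2) - H 0 :=
      Finset.sum_range_sub H (n + 2)
    have hend : H (n + 2) = 0 := by
      simp only [hH, if_neg (Nat.succ_ne_zero _), Nat.add_sub_cancel]
      have hz : ((n : ℚ) + 2 - ((n + 2 : ℕ) : ℚ)) = 0 := by push_cast; ring
      rw [hz]
      ring
    have h0 : H 0 = 0 := by simp [hH]
    rw [← Finset.sum_congr rfl key] at tele
    rw [hend, h0, sub_zero, ← Finset.mul_sum, Finset.sum_add_distrib] at tele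
    have hsplit : ∑ k ∈ range (n + 2), ((-1 : ℚ) ^ k * (n.choose k) * ((n + k).choose k))
        = (-1) ^ n := by
      rw [Finset.sum_range_succ, ih, Nat.choose_succ_self]
      push_cast
      ring
    rw [hsplit] at tele
    have hne : ((n : ℚ) + 1) ≠ 0 := by positivity
    rcases mul_eq_zero.mp tele with h | h
    · exact absurd h hne
    · have h2 : ∑ k ∈ range (n + 1 + 1), ((-1 : ℚ) ^ k * ((n + 1).choose k)
          * ((n + 1 + k).choose k)) = -(-1) ^ n := by linarith
      rw [h2, pow_succ]
      ring


open Finset Nat ZMod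

lemma leg_neg_three (p : ℕ) [Fact p.Prime] (hp : 5 ≤ p) :
    legendreSym p (-3) = if p % 3 = 1 then 1 else -1 := by
  have hp1 : p.Prime := Fact.out
  have hp2 : p ≠ 2 := by omega
  have h3 : ¬ (3 ∣ p) := by
    intro h
    rcases (Nat.Prime.eq_one_or_self_of_dvd hp1 3 h) with h' | h' <;> omega
  have hp3 : p ≠ 3 := by omega
  haveI : Fact (Nat.Prime 3) := ⟨by norm_num⟩
  have hodd : p % 2 = 1 := by
    rcases Nat.Prime.eq_two_or_odd hp1 with h | h
    · omega
    · exact h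
  -- quadratic reciprocity with q = 3
  have qr := legendreSym.quadratic_reciprocity (p := 3) (q := p) (by norm_num) hp2
    (fun h => hp3 h.symm)
  -- qr : legendreSym p 3 * legendreSym 3 p = (-1) ^ (3 / 2 * (p / 2))
  have hq : (3 : ℕ) / 2 * (p / 2) = p / 2 := by omega
  rw [hq] at qr
  have hpz : ((p : ℤ) : ZMod 3) ≠ 0 := by
    rw [Int.cast_natCast]
    rw [Ne, ZMod.natCast_eq_zero_iff]
    exact h3
  have hsq : legendreSym 3 (p : ℤ) ^ 2 = 1 := legendreSym.sq_one (p := 3) hpz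
  have hsplit : legendreSym p (-3) = legendreSym p (-1) * legendreSym p 3 := by
    rw [show (-3 : ℤ) = -1 * 3 by norm_num, legendreSym.mul]
  have hneg1 : legendreSym p (-1) = (-1) ^ (p / 2) := by
    rw [legendreSym.at_neg_one hp2, ZMod.χ₄_eq_neg_one_pow hodd]
  have qr' : legendreSym p 3 * legendreSym 3 (p : ℤ) = (-1) ^ (p / 2) := by
    exact_mod_cast qr
  have hleg3 : legendreSym p 3 = (-1) ^ (p / 2) * legendreSym 3 (p : ℤ) := by
    have h1 : legendreSym p 3 * (legendreSym 3 (p : ℤ)) ^ 2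
        = (-1) ^ (p / 2) * legendreSym 3 (p : ℤ) := by
      rw [pow_two, ← mul_assoc, qr']
    rwa [hsq, mul_one] at h1
  have hpm : p % 3 = 1 ∨ p % 3 = 2 := by omega
  have hfin : legendreSym p (-3) = legendreSym 3 (p : ℤ) := by
    rw [hsplit, hneg1, hleg3, ← mul_assoc, ← pow_add]
    have : Even (p / 2 + p / 2) := by exact ⟨p / 2, rfl⟩
    rw [Even.neg_one_pow this, one_mul]
  rw [hfin]
  rcases hpm with h | h
  · rw [if_pos h]
    have : legendreSym 3 (p : ℤ) = legendreSym 3 ((p : ℤ) % 3) := legendreSym.mod 3 _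
    rw [this]
    have h1 : ((p : ℤ) % 3) = 1 := by omega
    rw [h1, legendreSym.at_one]
  · rw [if_neg (by omega)]
    have : legendreSym 3 (p : ℤ) = legendreSym 3 ((p : ℤ) % 3) := legendreSym.mod 3 _
    rw [this]
    have h1 : ((p : ℤ) % 3) = 2 := by omega
    rw [h1]
    have h2 : legendreSym 3 (2 : ℤ) = legendreSym 3 (-1 : ℤ) := by
      rw [legendreSym.mod 3 (-1 : ℤ)]
      norm_num
    rw [h2, legendreSym.at_neg_one (by norm_num), ZMod.χ₄_nat_three_mod_four (by norm_num)]


open Finset Nat Polynomial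

variable {p : ℕ} [Fact p.Prime]

-- units
lemma unit_of_not_dvd (hp1 : p.Prime) {m : ℕ} (h : ¬ p ∣ m) :
    IsUnit ((m : ℕ) : ZMod (p ^ 2)) := by
  rw [ZMod.isUnit_iff_coprime]
  have h1 : Nat.Coprime p m := (Nat.Prime.coprime_iff_not_dvd hp1).mpr h
  exact (Nat.Coprime.pow_right 2 h1.symm)

lemma fact_unit (hp1 : p.Prime) {k : ℕ} (h : k < p) :
    IsUnit ((k.factorial : ℕ) : ZMod (p ^ 2)) := by
  apply unit_of_not_dvd hp1
  intro hd
  have := (Nat.Prime.dvd_factorial hp1).mp hd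
  omega

-- the term identity
lemma term_eq (hp1 : p.Prime) (hp : 5 ≤ p) {k : ℕ} (hk : k < p) :
    ((Nat.choose (3 * k) (2 * k) : ZMod (p ^ 2)) * (Nat.choose (2 * k) k : ZMod (p ^ 2)) *
        ((27 : ZMod (p ^ 2))⁻¹) ^ k)
      = (((k.factorial : ℕ) : ZMod (p ^ 2))⁻¹) ^ 2 *
          ∏ i ∈ range k, ((((i * (i + 1) : ℕ)) : ZMod (p ^ 2)) - (-(2 : ZMod (p ^ 2)) * ((9 : ZMod (p ^ 2)))⁻¹)) := by
  set R := ZMod (p ^ 2)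
  have hpd3 : ¬ p ∣ 3 := by intro h; have := Nat.le_of_dvd (by norm_num) h; omega
  have h3 : IsUnit ((3 : ℕ) : R) := unit_of_not_dvd hp1 hpd3
  have h9 : IsUnit ((9 : ℕ) : R) := by
    have : ((9 : ℕ) : R) = ((3:ℕ) : R) * ((3:ℕ):R) := by push_cast; norm_num
    rw [this]; exact h3.mul h3
  have h27 : IsUnit ((27 : ℕ) : R) := by
    have : ((27 : ℕ) : R) = ((9 : ℕ) : R) * ((3:ℕ):R) := by push_cast; norm_num
    rw [this]; exact h9.mul h3
  have h9' : IsUnit (9 : R) := by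
    have h : ((9:ℕ):R) = (9:R) := by push_cast; ring
    rwa [h] at h9
  have h27' : IsUnit (27 : R) := by
    have h : ((27:ℕ):R) = (27:R) := by push_cast; ring
    rwa [h] at h27
  have hkf : IsUnit ((k.factorial : ℕ) : R) := fact_unit hp1 hk
  -- per-factor identity
  have factor : ∀ i : ℕ, (((i * (i + 1) : ℕ)) : R) - (-(2 : R) * (9 : R)⁻¹)
      = ((((3 * i + 1) * (3 * i + 2) : ℕ)) : R) * (9 : R)⁻¹ := by
    intro i
    have hc : ((((3 * i + 1) * (3 * i + 2) : ℕ)) : R) = 9 * (((i * (i + 1) : ℕ)) : R) + 2 := by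
      push_cast [R]; ring
    rw [hc]
    have h9m : (9 : R) * (9 : R)⁻¹ = 1 := ZMod.mul_inv_of_unit _ h9'
    linear_combination (-(((i * (i + 1) : ℕ)) : R)) * h9m
  rw [Finset.prod_congr rfl (fun i _ => factor i), Finset.prod_mul_distrib, Finset.prod_const,
    card_range, ← Nat.cast_prod]
  -- now multiply both sides by the unit w = k!^3 * 27^k
  have hw : IsUnit (((k.factorial : ℕ) : R) ^ 3 * (27 : R) ^ k) :=
    (hkf.pow 3).mul (h27'.pow k)
  apply hw.mul_left_cancel
  have hkinv : ((k.factorial : ℕ) : R) * (((k.factorial : ℕ) : R))⁻¹ = 1 :=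
    ZMod.mul_inv_of_unit _ hkf
  have h27inv : (27 : R) * (27 : R)⁻¹ = 1 := ZMod.mul_inv_of_unit _ h27'
  have h9inv : (9 : R) * (9 : R)⁻¹ = 1 := ZMod.mul_inv_of_unit _ h9'
  calc ((k.factorial : ℕ) : R) ^ 3 * (27 : R) ^ k *
        ((Nat.choose (3 * k) (2 * k) : R) * (Nat.choose (2 * k) k : R) * ((27 : R)⁻¹) ^ k)
      = (((Nat.choose (3 * k) (2 * k) * Nat.choose (2 * k) k * k.factorial ^ 3 : ℕ)) : R)
          * ((27 : R) * (27 : R)⁻¹) ^ k := by push_cast [R]; ring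
    _ = (((3 * k).factorial : ℕ) : R) := by rw [chooseprod, h27inv, one_pow, mul_one]
    _ = ((3 ^ k * k.factorial * ∏ i ∈ range k, ((3 * i + 1) * (3 * i + 2)) : ℕ) : R) := by
        rw [fact3k]
    _ = ((k.factorial : ℕ) : R) ^ 3 * (27 : R) ^ k *
        ((((k.factorial : ℕ) : R))⁻¹ ^ 2 *
          ((((∏ i ∈ range k, ((3 * i + 1) * (3 * i + 2)) : ℕ)) : R) * ((9 : R)⁻¹) ^ k)) := by
        have e1 : (27 : R) ^ k * ((9 : R)⁻¹) ^ k = (3 : R) ^ k := by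
          rw [← mul_pow]
          congr 1
          linear_combination (3 : R) * h9inv
        have e2 : ((k.factorial : ℕ) : R) ^ 3 * (((k.factorial : ℕ) : R))⁻¹ ^ 2
            = ((k.factorial : ℕ) : R) := by
          have e3 : ((k.factorial : ℕ) : R) ^ 3 * (((k.factorial : ℕ) : R))⁻¹ ^ 2
              = ((k.factorial : ℕ) : R) * (((k.factorial : ℕ) : R) * (((k.factorial : ℕ) : R))⁻¹) ^ 2 := by
            ring
          rw [e3, hkinv, one_pow, mul_one]
        rw [Nat.cast_mul (α := R), Nat.cast_mul (α := R), Nat.cast_pow (α := R), Nat.cast_ofNat]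
        linear_combination (-((((∏ i ∈ range k, ((3 * i + 1) * (3 * i + 2)) : ℕ)) : R)
            * ((27 : R) ^ k * ((9 : R)⁻¹) ^ k))) * e2
          - (((k.factorial : ℕ) : R) * (((∏ i ∈ range k, ((3 * i + 1) * (3 * i + 2)) : ℕ)) : R)) * e1

lemma ascprod (n k : ℕ) : ∏ i ∈ range k, (n + 1 + i) = (n + 1).ascFactorial k := by
  induction k with
  | zero => simp
  | succ k ih => rw [Finset.prod_range_succ, ih, Nat.ascFactorial_succ]; ring

lemma LvalZ (n : ℕ) :
    ∑ k ∈ range (n + 1), ((-1 : ℤ) ^ k * (n.choose k) * ((n + k).choose k)) = (-1) ^ n := by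
  have h := LvalQ n
  have : ((∑ k ∈ range (n + 1), ((-1 : ℤ) ^ k * (n.choose k) * ((n + k).choose k)) : ℤ) : ℚ)
      = (((-1 : ℤ) ^ n : ℤ) : ℚ) := by
    push_cast
    convert h using 2
  exact_mod_cast this

lemma eval_at_int (hp1 : p.Prime) (hp : 5 ≤ p) {n : ℕ} (hn : n < p) :
    ∑ k ∈ range p, ((((k.factorial : ℕ) : ZMod (p ^ 2)))⁻¹ ^ 2 *
        ∏ i ∈ range k, ((((i * (i + 1) : ℕ)) : ZMod (p ^ 2)) - (((n * (n + 1) : ℕ)) : ZMod (p ^ 2))))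
      = (((-1 : ℤ) ^ n : ℤ) : ZMod (p ^ 2)) := by
  set R := ZMod (p ^ 2)
  have hsplit := Finset.sum_range_add_sum_Ico
    (fun k => ((((k.factorial : ℕ) : R))⁻¹ ^ 2 *
      ∏ i ∈ range k, ((((i * (i + 1) : ℕ)) : R) - (((n * (n + 1) : ℕ)) : R))))
    (show n + 1 ≤ p by omega)
  have hzero : ∑ k ∈ Finset.Ico (n + 1) p, ((((k.factorial : ℕ) : R))⁻¹ ^ 2 *
      ∏ i ∈ range k, ((((i * (i + 1) : ℕ)) : R) - (((n * (n + 1) : ℕ)) : R))) = 0 := by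
    apply Finset.sum_eq_zero
    intro k hk
    have hk' : n ∈ range k := by
      simp only [Finset.mem_Ico] at hk
      simp only [Finset.mem_range]
      omega
    rw [Finset.prod_eq_zero hk' (by rw [sub_self]), mul_zero]
  rw [← hsplit, hzero, add_zero]
  have hterm : ∀ k ∈ range (n + 1),
      ((((k.factorial : ℕ) : R))⁻¹ ^ 2 *
        ∏ i ∈ range k, ((((i * (i + 1) : ℕ)) : R) - (((n * (n + 1) : ℕ)) : R)))
      = (((-1 : ℤ) ^ k * (n.choose k) * ((n + k).choose k) : ℤ) : R) := by
    intro k hk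
    simp only [Finset.mem_range] at hk
    have hkn : k ≤ n := by omega
    have hfac : ∀ i ∈ range k, ((((i * (i + 1) : ℕ)) : R) - (((n * (n + 1) : ℕ)) : R))
        = -((((n - i) * (n + i + 1) : ℕ)) : R) := by
      intro i hi
      simp only [Finset.mem_range] at hi
      have hin : i ≤ n := by omega
      obtain ⟨d, rfl⟩ : ∃ d, n = i + d := ⟨n - i, by omega⟩
      have hnat : i * (i + 1) + (i + d - i) * (i + d + i + 1) = (i + d) * (i + d + 1) := by
        have : i + d - i = d := by omega
        rw [this]; ring
      have hcast : (((i + d) * (i + d + 1) : ℕ) : R)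
          = ((i * (i + 1) : ℕ) : R) + (((i + d - i) * (i + d + i + 1) : ℕ) : R) := by
        rw [← Nat.cast_add, hnat]
      rw [hcast]; ring
    rw [Finset.prod_congr rfl hfac]
    have hneg : ∏ i ∈ range k, (-((((n - i) * (n + i + 1) : ℕ)) : R))
        = (-1 : R) ^ k * ∏ i ∈ range k, ((((n - i) * (n + i + 1) : ℕ)) : R) := by
      rw [Finset.prod_congr rfl (fun i _ => by ring : ∀ i ∈ range k, -((((n - i) * (n + i + 1) : ℕ)) : R) = (-1 : R) * ((((n - i) * (n + i + 1) : ℕ)) : R)),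
        Finset.prod_mul_distrib, Finset.prod_const, card_range]
    rw [hneg, ← Nat.cast_prod]
    have hprodnat : (∏ i ∈ range k, ((n - i) * (n + i + 1)))
        = (k.factorial * n.choose k) * (k.factorial * ((n + k).choose k)) := by
      rw [Finset.prod_mul_distrib]
      have h1 : ∏ i ∈ range k, (n - i) = k.factorial * n.choose k := by
        rw [← Nat.descFactorial_eq_prod_range, Nat.descFactorial_eq_factorial_mul_choose]
      have h2 : ∏ i ∈ range k, (n + i + 1) = k.factorial * ((n + k).choose k) := by
        have e : ∀ i ∈ range k, n + i + 1 = n + 1 + i := fun i _ => by omega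
        rw [Finset.prod_congr rfl e, ascprod, Nat.ascFactorial_eq_factorial_mul_choose]
      rw [h1, h2]
    rw [hprodnat]
    have hkf : IsUnit ((k.factorial : ℕ) : R) := fact_unit hp1 (by omega)
    have hkinv : ((k.factorial : ℕ) : R) * (((k.factorial : ℕ) : R))⁻¹ = 1 :=
      ZMod.mul_inv_of_unit _ hkf
    push_cast [R]
    linear_combination ((-1 : R) ^ k * (n.choose k : R) * ((n + k).choose k : R) *
      (((k.factorial : ℕ) : R) * (((k.factorial : ℕ) : R))⁻¹ + 1)) * hkinv
  rw [Finset.sum_congr rfl hterm, ← Int.cast_sum, LvalZ]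

/-- For any prime `p ≥ 5`,
`∑_{k=0}^{p-1} C(3k,2k) C(2k,k) / 27^k ≡ (-3/p) (mod p^2)`, stated in `ZMod (p^2)`. -/
theorem rv_supercongruence_27 (p : ℕ) [Fact p.Prime] (hp : 5 ≤ p) :
    ∑ k ∈ Finset.range p,
        ((Nat.choose (3 * k) (2 * k) : ZMod (p ^ 2)) * (Nat.choose (2 * k) k : ZMod (p ^ 2)) *
          ((27 : ZMod (p ^ 2))⁻¹) ^ k)
      = (legendreSym p (-3) : ZMod (p ^ 2)) := by
  have hp1 : p.Prime := Fact.out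
  haveI : NeZero (p ^ 2) := ⟨by positivity⟩
  set R := ZMod (p ^ 2) with hR
  have hpd3 : ¬ (3 ∣ p) := by
    intro h
    rcases hp1.eq_one_or_self_of_dvd 3 h with h' | h' <;> omega
  have hodd : p % 2 = 1 := by
    rcases hp1.eq_two_or_odd with h | h
    · omega
    · exact h
  have hm3 : p % 3 = 1 ∨ p % 3 = 2 := by omega
  obtain ⟨n, hn⟩ : ∃ n, 3 * n + 1 = p ∨ 3 * n + 1 = 2 * p := by
    rcases hm3 with h | h
    · exact ⟨(p - 1) / 3, Or.inl (by omega)⟩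
    · exact ⟨(2 * p - 1) / 3, Or.inr (by omega)⟩
  have hnp : n < p := by rcases hn with h | h <;> omega
  set m := p - 1 - n with hm
  have hmp : m < p := by omega
  -- the 9-inverse facts
  have hnd9 : ¬ p ∣ 9 := by
    intro h
    have h' : p ∣ 3 * 3 := by rwa [show (3 * 3 : ℕ) = 9 by norm_num]
    rcases (Nat.Prime.dvd_mul hp1).mp h' with h'' | h'' <;>
      exact absurd (Nat.le_of_dvd (by norm_num) h'') (by omega)
  have h9u : IsUnit ((9 : ℕ) : R) := unit_of_not_dvd hp1 hnd9
  have h9u' : IsUnit (9 : R) := by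
    have h : ((9 : ℕ) : R) = (9 : R) := by push_cast; ring
    rwa [h] at h9u
  have h9inv : (9 : R) * (9 : R)⁻¹ = 1 := ZMod.mul_inv_of_unit _ h9u'
  have hpp : (p : R) * (p : R) = 0 := by
    rw [← Nat.cast_mul, show p * p = p ^ 2 by ring]
    exact ZMod.natCast_self _
  -- the polynomial
  set u : R := -(2 : R) * ((9 : R))⁻¹ with hu
  set P : Polynomial R := ∑ k ∈ Finset.range p,
      Polynomial.C ((((k.factorial : ℕ) : R))⁻¹ ^ 2) *
        ∏ i ∈ Finset.range k, (Polynomial.C (((i * (i + 1) : ℕ)) : R) - Polynomial.X) with hP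
  have evalP : ∀ v : R, P.eval v = ∑ k ∈ Finset.range p,
      ((((k.factorial : ℕ) : R))⁻¹ ^ 2 *
        ∏ i ∈ Finset.range k, ((((i * (i + 1) : ℕ)) : R) - v)) := by
    intro v
    rw [hP, Polynomial.eval_finset_sum]
    apply Finset.sum_congr rfl
    intro k _
    rw [Polynomial.eval_mul, Polynomial.eval_C, Polynomial.eval_prod]
    congr 1
    apply Finset.prod_congr rfl
    intro i _
    rw [Polynomial.eval_sub, Polynomial.eval_C, Polynomial.eval_X]
  -- LHS equals P.eval u
  have hLHS : ∑ k ∈ Finset.range p,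
        ((Nat.choose (3 * k) (2 * k) : R) * (Nat.choose (2 * k) k : R) * ((27 : R)⁻¹) ^ k)
      = P.eval u := by
    rw [evalP]
    apply Finset.sum_congr rfl
    intro k hk
    exact term_eq hp1 hp (Finset.mem_range.mp hk)
  -- evaluations at the integer points
  have evaln : P.eval (((n * (n + 1) : ℕ)) : R) = (((-1 : ℤ) ^ n : ℤ) : R) := by
    rw [evalP]; exact eval_at_int hp1 hp hnp
  have evalm : P.eval (((m * (m + 1) : ℕ)) : R) = (((-1 : ℤ) ^ m : ℤ) : R) := by
    rw [evalP]; exact eval_at_int hp1 hp hmp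
  have hparZ : ((-1 : ℤ) ^ m) = (-1 : ℤ) ^ n := by
    have hmn : m % 2 = n % 2 := by omega
    rcases Nat.even_or_odd n with he | ho
    · have hem : Even m := Nat.even_iff.mpr (by rw [hmn]; exact Nat.even_iff.mp he)
      rw [he.neg_one_pow, hem.neg_one_pow]
    · have hom : Odd m := Nat.odd_iff.mpr (by rw [hmn]; exact Nat.odd_iff.mp ho)
      rw [ho.neg_one_pow, hom.neg_one_pow]
  -- relation between the two integer points
  have hmmn : (((m * (m + 1) : ℕ)) : R)
      = (((n * (n + 1) : ℕ)) : R) + (-(((2 * n + 1 : ℕ)) : R) * (p : R)) := by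
    obtain ⟨e, he⟩ : ∃ e, p = n + 1 + e := ⟨p - 1 - n, by omega⟩
    have hnat : m * (m + 1) + (2 * n + 1) * p = n * (n + 1) + p * p := by
      subst he
      have hme : m = e := by omega
      rw [hme]
      ring
    have hcast : (((m * (m + 1) : ℕ)) : R) + (((2 * n + 1) * p : ℕ) : R)
        = (((n * (n + 1) : ℕ)) : R) + ((p * p : ℕ) : R) := by
      rw [← Nat.cast_add, ← Nat.cast_add, hnat]
    push_cast [R] at hcast ⊢
    linear_combination hcast + hpp
  -- derivative kill
  set D : R := P.derivative.eval (((n * (n + 1) : ℕ)) : R) with hD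
  have heps2 : (-(((2 * n + 1 : ℕ)) : R) * (p : R)) * (-(((2 * n + 1 : ℕ)) : R) * (p : R)) = 0 := by
    linear_combination ((((2 * n + 1 : ℕ)) : R) * (((2 * n + 1 : ℕ)) : R)) * hpp
  have e1 : P.eval (((m * (m + 1) : ℕ)) : R)
      = P.eval (((n * (n + 1) : ℕ)) : R) + (-(((2 * n + 1 : ℕ)) : R) * (p : R)) * D := by
    rw [hmmn]
    exact eval_add_eps P _ _ heps2
  have hkill : (((2 * n + 1 : ℕ)) : R) * ((p : R) * D) = 0 := by
    have h0 : (-(((2 * n + 1 : ℕ)) : R) * (p : R)) * D = 0 := by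
      rw [evalm, evaln, hparZ] at e1
      linear_combination -e1
    have hre : (((2 * n + 1 : ℕ)) : R) * ((p : R) * D)
        = -((-(((2 * n + 1 : ℕ)) : R) * (p : R)) * D) := by ring
    rw [hre, h0, neg_zero]
  have hu2n : IsUnit (((2 * n + 1 : ℕ)) : R) := by
    apply unit_of_not_dvd hp1
    intro hdvd
    obtain ⟨c, hc⟩ := hdvd
    rcases Nat.lt_or_ge c 2 with hcl | hcl
    · interval_cases c
      · omega
      · rcases hn with h | h <;> omega
    · have h2 : p * 2 ≤ p * c := Nat.mul_le_mul_left p hcl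
      rw [← hc] at h2
      omega
  have hpD : (p : R) * D = 0 := hu2n.mul_left_cancel (by rw [hkill, mul_zero])
  -- u is p-adically close to the integer point
  have hdiff : ∃ c : R, u - (((n * (n + 1) : ℕ)) : R) = (p : R) * c := by
    set y : R := u - (((n * (n + 1) : ℕ)) : R) with hy
    have hnine : (9 : R) * (-y) = (((3 * n + 1) * (3 * n + 2) : ℕ) : R) := by
      rw [hy, hu]
      push_cast [R]
      linear_combination (2 : R) * h9inv
    set f : R →+* ZMod p := ZMod.castHom (dvd_pow_self p two_ne_zero) (ZMod p) with hf
    have hf9 : f ((9 : R) * (-y)) = (9 : ZMod p) * f (-y) := by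
      rw [map_mul, map_ofNat]
    have hzero : f ((9 : R) * (-y)) = 0 := by
      rw [hnine, map_natCast, ZMod.natCast_eq_zero_iff]
      rcases hn with h | h
      · exact Dvd.dvd.mul_right ⟨1, by omega⟩ _
      · exact Dvd.dvd.mul_right ⟨2, by omega⟩ _
    have h9p : IsUnit (9 : ZMod p) := by
      have h9n : ((9 : ℕ) : ZMod p) = (9 : ZMod p) := by push_cast; ring
      rw [← h9n, ZMod.isUnit_iff_coprime]
      exact ((Nat.Prime.coprime_iff_not_dvd hp1).mpr hnd9).symm
    have hfy : f y = 0 := by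
      have h1 : (9 : ZMod p) * f (-y) = 0 := by rw [← hf9, hzero]
      have h2 : f (-y) = 0 := h9p.mul_left_cancel (by rw [h1, mul_zero])
      have h3 : f (-y) = -f y := map_neg f y
      rw [h3, neg_eq_zero] at h2
      exact h2
    have hyval : ((y.val : ℕ) : R) = y := ZMod.natCast_zmod_val y
    have hfy' : ((y.val : ℕ) : ZMod p) = 0 := by
      rw [← map_natCast f, hyval]
      exact hfy
    rw [ZMod.natCast_eq_zero_iff] at hfy'
    obtain ⟨t, ht⟩ := hfy'
    exact ⟨(t : R), by rw [← hyval, ht]; push_cast [R]; ring⟩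
  obtain ⟨c, hc⟩ := hdiff
  have heps2' : ((p : R) * c) * ((p : R) * c) = 0 := by
    linear_combination (c * c) * hpp
  have e2 : P.eval u = (((-1 : ℤ) ^ n : ℤ) : R) := by
    have hux : u = (((n * (n + 1) : ℕ)) : R) + (p : R) * c := by
      rw [← hc]; ring
    rw [hux, eval_add_eps P _ _ heps2', evaln, ← hD]
    have : (p : R) * c * D = c * ((p : R) * D) := by ring
    rw [this, hpD, mul_zero, add_zero]
  rw [hLHS, e2, leg_neg_three p hp]
  rcases hm3 with h3 | h3
  · rw [if_pos h3]
    have hne : n % 2 = 0 := by rcases hn with h | h <;> omega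
    have : ((-1 : ℤ) ^ n) = 1 := (Nat.even_iff.mpr hne).neg_one_pow
    rw [this]
  · rw [if_neg (by omega)]
    have hno : n % 2 = 1 := by rcases hn with h | h <;> omega
    have : ((-1 : ℤ) ^ n) = -1 := (Nat.odd_iff.mpr hno).neg_one_pow
    rw [this]
end

section
/- For any prime p ≥ 5, the sum over k from 0 to p-1 of binom(6k,3k)·binom(3k,k) / 432^k is congruent to the Legendre symbol (-1/p) modulo p^2. -/
open Finset

namespace RV432

/-! ### Nat identities -/

lemma fact6 (m : ℕ) : (m+6).factorial
    = (m+6)*((m+5)*((m+4)*((m+3)*((m+2)*((m+1)*m.factorial))))) := by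
  rw [show m+6 = (m+5)+1 from rfl, Nat.factorial_succ]
  rw [show m+5 = (m+4)+1 from rfl, Nat.factorial_succ]
  rw [show m+4 = (m+3)+1 from rfl, Nat.factorial_succ]
  rw [show m+3 = (m+2)+1 from rfl, Nat.factorial_succ]
  rw [show m+2 = (m+1)+1 from rfl, Nat.factorial_succ]
  rw [Nat.factorial_succ]

lemma fact3 (m : ℕ) : (m+3).factorial = (m+3)*((m+2)*((m+1)*m.factorial)) := by
  rw [show m+3 = (m+2)+1 from rfl, Nat.factorial_succ]
  rw [show m+2 = (m+1)+1 from rfl, Nat.factorial_succ]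
  rw [Nat.factorial_succ]

lemma fact2 (m : ℕ) : (m+2).factorial = (m+2)*((m+1)*m.factorial) := by
  rw [show m+2 = (m+1)+1 from rfl, Nat.factorial_succ, Nat.factorial_succ]

lemma fact_id (k : ℕ) :
    (6*k).factorial * k.factorial
      = 12^k * (3*k).factorial * (2*k).factorial * ∏ j ∈ range k, ((6*j+1)*(6*j+5)) := by
  induction k with
  | zero => simp
  | succ k IH =>
    have IH' : ((6*k).factorial : ℤ) * k.factorial
        = 12^k * (3*k).factorial * (2*k).factorial
          * ∏ j ∈ range k, ((6*j+1)*(6*j+5) : ℤ) := by exact_mod_cast IH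
    rw [show 6*(k+1) = 6*k+6 from by ring, show 3*(k+1) = 3*k+3 from by ring,
        show 2*(k+1) = 2*k+2 from by ring, prod_range_succ,
        fact6, fact3, fact2, Nat.factorial_succ]
    zify
    push_cast
    linear_combination ((6*k+6)*(6*k+5)*(6*k+4)*(6*k+3)*(6*k+2)*(6*k+1)*(k+1) : ℤ) * IH'

lemma choose_id (k : ℕ) :
    (6*k).choose (3*k) * (3*k).choose k * (k.factorial * k.factorial)
      = 12^k * ∏ j ∈ range k, ((6*j+1)*(6*j+5)) := by
  have h1 : (6*k).choose (3*k) * (3*k).factorial * (3*k).factorial = (6*k).factorial := by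
    have := Nat.choose_mul_factorial_mul_factorial (show 3*k ≤ 6*k by omega)
    have e : 6*k - 3*k = 3*k := by omega
    rwa [e] at this
  have h2 : (3*k).choose k * k.factorial * (2*k).factorial = (3*k).factorial := by
    have := Nat.choose_mul_factorial_mul_factorial (show k ≤ 3*k by omega)
    have e : 3*k - k = 2*k := by omega
    rwa [e] at this
  have key := fact_id k
  have pos : 0 < (3*k).factorial * (3*k).factorial * (2*k).factorial :=
    Nat.mul_pos (Nat.mul_pos (Nat.factorial_pos _) (Nat.factorial_pos _)) (Nat.factorial_pos _)
  apply Nat.eq_of_mul_eq_mul_right pos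
  have h1' : ((6*k).choose (3*k) : ℤ) * (3*k).factorial * (3*k).factorial = (6*k).factorial := by
    exact_mod_cast h1
  have h2' : ((3*k).choose k : ℤ) * k.factorial * (2*k).factorial = (3*k).factorial := by
    exact_mod_cast h2
  have key' : ((6*k).factorial : ℤ) * k.factorial
      = 12^k * (3*k).factorial * (2*k).factorial
        * ∏ j ∈ range k, ((6*j+1)*(6*j+5) : ℤ) := by exact_mod_cast key
  zify
  push_cast
  linear_combination (((3*k).choose k : ℤ) * (k.factorial)^2 * (2*k).factorial) * h1'
    + ((12:ℤ)^k * (∏ j ∈ range k, ((6*j+1)*(6*j+5) : ℤ)) * (3*k).factorial * (2*k).factorial) * h2'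
    + (((3*k).choose k : ℤ) * k.factorial * (2*k).factorial) * key'

lemma vdm_gen (A B s n : ℕ) (hB : B < n + s) :
    ∑ j ∈ range n, A.choose j * B.choose (s+j) = (A+B).choose (A+s) := by
  have h1 : ∑ j ∈ range n, A.choose j * B.choose (s+j)
      = ∑ j ∈ range (max n (A+1)), A.choose j * B.choose (s+j) := by
    apply sum_subset (range_subset_range.mpr (le_max_left _ _))
    intro j hj hnj
    rw [mem_range, not_lt] at hnj
    rw [Nat.choose_eq_zero_of_lt (show B < s+j by omega), mul_zero]
  rw [h1, Nat.add_choose_eq, Finset.Nat.sum_antidiagonal_eq_sum_range_succ_mk]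
  have h2 : ∑ k ∈ range (A+s+1), A.choose k * B.choose (A+s-k)
      = ∑ k ∈ range (A+1), A.choose k * B.choose (A+s-k) := by
    symm
    apply sum_subset (range_subset_range.mpr (by omega))
    intro j hj hnj
    rw [mem_range, not_lt] at hnj
    rw [Nat.choose_eq_zero_of_lt (show A < j by omega), zero_mul]
  have h3 : ∀ j ∈ range (A+1),
      A.choose (A+1-1-j) * B.choose (A+s-(A+1-1-j)) = A.choose j * B.choose (s+j) := by
    intro j hj
    rw [mem_range] at hj
    have e1 : A+1-1-j = A-j := by omega
    have e2 : A+s-(A-j) = s+j := by omega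
    rw [e1, e2, Nat.choose_symm (by omega : j ≤ A)]
  have h4 : ∑ k ∈ range (A+1), A.choose k * B.choose (A+s-k)
      = ∑ j ∈ range (A+1), A.choose j * B.choose (s+j) := by
    rw [← sum_range_reflect (fun k => A.choose k * B.choose (A+s-k)) (A+1)]
    exact sum_congr rfl h3
  rw [h2, h4]
  symm
  apply sum_subset (range_subset_range.mpr (le_max_right _ _))
  intro j hj hnj
  rw [mem_range, not_lt] at hnj
  rw [Nat.choose_eq_zero_of_lt (show A < j by omega), zero_mul]

lemma sum_triangle {M : Type*} [AddCommMonoid M] (n : ℕ) (f : ℕ → ℕ → M) :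
    ∑ k ∈ range n, ∑ i ∈ range k, f i k = ∑ i ∈ range n, ∑ k ∈ Ico (i+1) n, f i k := by
  induction n with
  | zero => simp
  | succ n IH =>
    rw [sum_range_succ, IH, sum_range_succ (fun i => ∑ k ∈ Ico (i+1) (n+1), f i k)]
    have h : ∀ i ∈ range n, ∑ k ∈ Ico (i+1) (n+1), f i k
        = (∑ k ∈ Ico (i+1) n, f i k) + f i n := by
      intro i hi
      rw [mem_range] at hi
      rw [sum_Ico_succ_top (by omega : i+1 ≤ n)]
    rw [sum_congr rfl h, sum_add_distrib]
    simp [Ico_self]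

/-! ### ZMod basics -/

def prj (p : ℕ) : ZMod (p^2) →+* ZMod p :=
  ZMod.castHom (dvd_pow_self p two_ne_zero) (ZMod p)

variable {p : ℕ} [Fact p.Prime]

lemma prj_natCast (n : ℕ) : prj p (n : ZMod (p^2)) = (n : ZMod p) := map_natCast _ n

lemma pmul_zero (c : ZMod (p^2)) (h : prj p c = 0) : (p : ZMod (p^2)) * c = 0 := by
  have hc : ((c.val : ℕ) : ZMod p) = 0 := by
    rwa [prj, ZMod.castHom_apply, ← ZMod.natCast_val] at h
  obtain ⟨m, hm⟩ := (ZMod.natCast_eq_zero_iff _ _).mp hc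
  have hcv : ((c.val : ℕ) : ZMod (p^2)) = c := by
    rw [ZMod.natCast_val, ZMod.cast_id]
  calc (p : ZMod (p^2)) * c = ((p * c.val : ℕ) : ZMod (p^2)) := by push_cast [hcv]; ring
    _ = ((p^2 * m : ℕ) : ZMod (p^2)) := by rw [hm]; push_cast; ring
    _ = 0 := by rw [Nat.cast_mul, ZMod.natCast_self, zero_mul]

lemma pmul_congr {a b : ZMod (p^2)} (h : prj p a = prj p b) :
    (p : ZMod (p^2)) * a = (p : ZMod (p^2)) * b := by
  have := pmul_zero (a - b) (by rw [map_sub, h, sub_self])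
  rw [mul_sub, sub_eq_zero] at this
  exact this

lemma isUnit_cast {n : ℕ} (h : ¬ p ∣ n) : IsUnit (n : ZMod (p^2)) := by
  rw [ZMod.isUnit_iff_coprime]
  exact Nat.Coprime.pow_right 2 (((Fact.out : p.Prime).coprime_iff_not_dvd.mpr h).symm)

omit [Fact p.Prime] in
lemma not_dvd_of_lt {a : ℕ} (h0 : 0 < a) (h : a < p) : ¬ p ∣ a :=
  fun hd => absurd (Nat.le_of_dvd h0 hd) (not_le.mpr h)

lemma prj_inv (a : ℕ) (h0 : 0 < a) (h : a < p) :
    prj p ((a : ZMod (p^2))⁻¹) = ((a : ZMod p))⁻¹ := by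
  have hu : IsUnit (a : ZMod (p^2)) := isUnit_cast (not_dvd_of_lt h0 h)
  have h1 : prj p ((a : ZMod (p^2))⁻¹) * (a : ZMod p) = 1 := by
    rw [← prj_natCast (p := p) a, ← map_mul, ZMod.inv_mul_of_unit _ hu, map_one]
  exact eq_inv_of_mul_eq_one_left h1

omit [Fact p.Prime] in
lemma pp_zero : (p : ZMod (p^2)) * (p : ZMod (p^2)) = 0 := by
  have : ((p^2 : ℕ) : ZMod (p^2)) = 0 := ZMod.natCast_self _
  push_cast at this
  linear_combination this

lemma cast_ne_zero_F {a : ℕ} (h0 : 0 < a) (h : a < p) : (a : ZMod p) ≠ 0 := by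
  rw [Ne, ZMod.natCast_eq_zero_iff]
  exact not_dvd_of_lt h0 h

/-! ### binomial values mod p and mod p² -/

def SR (p m : ℕ) : ZMod (p^2) := ∑ i ∈ range m, ((i+1 : ℕ) : ZMod (p^2))⁻¹
def HF (p m : ℕ) : ZMod p := ∑ i ∈ range m, ((i+1 : ℕ) : ZMod p)⁻¹

lemma choose_pm1_F {m : ℕ} (h : m ≤ p - 1) : (((p-1).choose m : ℕ) : ZMod p) = (-1)^m := by
  induction m with
  | zero => simp
  | succ k IH =>
    have hk : k ≤ p - 1 := by omega
    have hp1 : 1 ≤ p := (Fact.out : p.Prime).one_lt.le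
    have key : (((p-1).choose (k+1) : ℕ) : ZMod p) * ((k+1 : ℕ) : ZMod p)
        = (((p-1).choose k : ℕ) : ZMod p) * (((p-1) - k : ℕ) : ZMod p) := by
      exact_mod_cast congrArg (Nat.cast (R := ZMod p)) (Nat.choose_succ_right_eq (p-1) k)
    have hcast : (((p-1) - k : ℕ) : ZMod p) = -((k+1 : ℕ) : ZMod p) := by
      have e : (p-1) - k + (k+1) = p := by omega
      have e2 := congrArg (Nat.cast (R := ZMod p)) e
      rw [Nat.cast_add, ZMod.natCast_self] at e2
      exact eq_neg_of_add_eq_zero_left e2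
    have hne : ((k+1 : ℕ) : ZMod p) ≠ 0 := cast_ne_zero_F (by omega) (by omega)
    apply mul_right_cancel₀ hne
    rw [key, IH hk, hcast]
    ring

lemma choose_pm1_R {m : ℕ} (h : m ≤ p - 1) :
    (((p-1).choose m : ℕ) : ZMod (p^2)) = (-1)^m * (1 - p * SR p m) := by
  induction m with
  | zero => simp [SR]
  | succ k IH =>
    have hk : k ≤ p - 1 := by omega
    have key : (((p-1).choose (k+1) : ℕ) : ZMod (p^2)) * ((k+1 : ℕ) : ZMod (p^2))
        = (((p-1).choose k : ℕ) : ZMod (p^2)) * (((p-1) - k : ℕ) : ZMod (p^2)) := by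
      exact_mod_cast congrArg (Nat.cast (R := ZMod (p^2))) (Nat.choose_succ_right_eq (p-1) k)
    have hcast : (((p-1) - k : ℕ) : ZMod (p^2)) = (p : ZMod (p^2)) - ((k+1 : ℕ) : ZMod (p^2)) := by
      have e : (p-1) - k + (k+1) = p := by omega
      have e2 := congrArg (Nat.cast (R := ZMod (p^2))) e
      rw [Nat.cast_add] at e2
      linear_combination e2
    have hu : IsUnit ((k+1 : ℕ) : ZMod (p^2)) := isUnit_cast (not_dvd_of_lt (by omega) (by omega))
    have hinv : ((k+1 : ℕ) : ZMod (p^2)) * ((k+1 : ℕ) : ZMod (p^2))⁻¹ = 1 :=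
      ZMod.mul_inv_of_unit _ hu
    apply hu.mul_right_cancel
    rw [key, IH hk, hcast]
    rw [show SR p (k+1) = SR p k + ((k+1 : ℕ) : ZMod (p^2))⁻¹ from sum_range_succ _ k]
    linear_combination (-(-1 : ZMod (p^2))^k * (p : ZMod (p^2))) * hinv
      + (-(-1 : ZMod (p^2))^k * SR p k) * pp_zero

lemma choose_p_R {a : ℕ} (h0 : 0 < a) (h : a < p) :
    ((p.choose a : ℕ) : ZMod (p^2))
      = (p : ZMod (p^2)) * ((((p-1).choose (a-1) : ℕ) : ZMod (p^2)) * ((a : ℕ) : ZMod (p^2))⁻¹) := by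
  have hs := Nat.add_one_mul_choose_eq (p-1) (a-1)
  rw [show p-1+1 = p by omega, show a-1+1 = a by omega] at hs
  -- hs : p * (p-1).choose (a-1) = p.choose a * a
  have hcast : (p : ZMod (p^2)) * (((p-1).choose (a-1) : ℕ) : ZMod (p^2))
      = ((p.choose a : ℕ) : ZMod (p^2)) * ((a : ℕ) : ZMod (p^2)) := by
    exact_mod_cast congrArg (Nat.cast (R := ZMod (p^2))) hs
  have hu : IsUnit ((a : ℕ) : ZMod (p^2)) := isUnit_cast (not_dvd_of_lt h0 h)
  have hinv : ((a : ℕ) : ZMod (p^2)) * ((a : ℕ) : ZMod (p^2))⁻¹ = 1 :=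
    ZMod.mul_inv_of_unit _ hu
  calc ((p.choose a : ℕ) : ZMod (p^2))
      = ((p.choose a : ℕ) : ZMod (p^2)) * (((a : ℕ) : ZMod (p^2)) * ((a : ℕ) : ZMod (p^2))⁻¹) := by
        rw [hinv, mul_one]
    _ = ((p.choose a : ℕ) : ZMod (p^2)) * ((a : ℕ) : ZMod (p^2)) * ((a : ℕ) : ZMod (p^2))⁻¹ := by
        ring
    _ = (p : ZMod (p^2)) * ((((p-1).choose (a-1) : ℕ) : ZMod (p^2)) * ((a : ℕ) : ZMod (p^2))⁻¹) := by
        rw [← hcast]; ring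

/-! ### harmonic sums mod p -/

lemma HF_p1 (hp5 : 5 ≤ p) : HF p (p-1) = 0 := by
  have hrefl : HF p (p-1) = - HF p (p-1) := by
    conv_lhs => rw [HF, ← sum_range_reflect]
    rw [HF, ← sum_neg_distrib]
    apply sum_congr rfl
    intro i hi
    rw [mem_range] at hi
    have e : (p-1) - 1 - i + 1 = p - 1 - i := by omega
    rw [e]
    have hcast : ((p - 1 - i : ℕ) : ZMod p) = -((i+1 : ℕ) : ZMod p) := by
      have e2 : p - 1 - i + (i+1) = p := by omega
      have e3 := congrArg (Nat.cast (R := ZMod p)) e2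
      rw [Nat.cast_add, ZMod.natCast_self] at e3
      exact eq_neg_of_add_eq_zero_left e3
    rw [hcast, inv_neg]
  have h2 : (2 : ZMod p) * HF p (p-1) = 0 := by linear_combination hrefl
  have hne : (2 : ZMod p) ≠ 0 := by
    have := cast_ne_zero_F (p := p) (a := 2) (by omega) (by omega)
    simpa using this
  exact (mul_eq_zero.mp h2).resolve_left hne

lemma HF_split (hp5 : 5 ≤ p) {A B : ℕ} (hAB : A + B = p - 1) : HF p B = HF p A := by
  have key : HF p (p-1) = HF p B + ∑ i ∈ range A, ((B + i + 1 : ℕ) : ZMod p)⁻¹ := by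
    rw [HF, range_eq_Ico, ← sum_Ico_consecutive _ (Nat.zero_le B) (by omega : B ≤ p - 1)]
    congr 1
    · rw [HF, range_eq_Ico]
    · rw [sum_Ico_eq_sum_range, show p - 1 - B = A by omega]
  have hneg : ∑ i ∈ range A, ((B + i + 1 : ℕ) : ZMod p)⁻¹ = - HF p A := by
    rw [HF, ← sum_range_reflect (fun j => ((j+1 : ℕ) : ZMod p)⁻¹) A, ← sum_neg_distrib]
    apply sum_congr rfl
    intro i hi
    rw [mem_range] at hi
    have e : A - 1 - i + 1 = A - i := by omega
    rw [e]
    have hcast : ((B + i + 1 : ℕ) : ZMod p) = -((A - i : ℕ) : ZMod p) := by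
      have e2 : B + i + 1 + (A - i) = p := by omega
      have e3 := congrArg (Nat.cast (R := ZMod p)) e2
      rw [Nat.cast_add, ZMod.natCast_self] at e3
      exact eq_neg_of_add_eq_zero_left e3
    rw [hcast, inv_neg]
  rw [HF_p1 hp5, hneg] at key
  linear_combination (-1 : ZMod p) * key

/-! ### digit expansion of binomials mod p² -/

def Phi (p A k : ℕ) : ZMod (p^2) :=
  ∑ i ∈ range k, (-1)^i * ((i+1 : ℕ) : ZMod (p^2))⁻¹ * ((A.choose (k-(i+1)) : ℕ) : ZMod (p^2))

lemma expand (A : ℕ) (n : ℕ) :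
    ∀ k, k < p → (((n*p + A).choose k : ℕ) : ZMod (p^2))
      = ((A.choose k : ℕ) : ZMod (p^2)) + (p : ZMod (p^2)) * n * Phi p A k := by
  induction n with
  | zero => intro k hk; simp
  | succ n IH =>
    intro k hk
    have hprime : p.Prime := Fact.out
    have hp1 : 1 < p := hprime.one_lt
    have hsplit : (n+1)*p + A = p + (n*p + A) := by ring
    rw [hsplit, Nat.add_choose_eq, Finset.Nat.sum_antidiagonal_eq_sum_range_succ_mk,
        Nat.cast_sum]
    have hterm : ∀ i ∈ range k,
        ((p.choose (i+1) * (n*p + A).choose (k-(i+1)) : ℕ) : ZMod (p^2))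
          = (p : ZMod (p^2)) * ((-1)^i * ((i+1 : ℕ) : ZMod (p^2))⁻¹
              * ((A.choose (k-(i+1)) : ℕ) : ZMod (p^2))) := by
      intro i hi
      rw [mem_range] at hi
      rw [Nat.cast_mul, choose_p_R (show 0 < i+1 by omega) (by omega : i+1 < p),
          show i+1-1 = i from rfl, mul_assoc]
      apply pmul_congr
      have hproj : prj p (((n*p + A).choose (k-(i+1)) : ℕ) : ZMod (p^2))
          = ((A.choose (k-(i+1)) : ℕ) : ZMod p) := by
        have h2 := congrArg (prj p) (IH (k-(i+1)) (by omega))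
        simpa [map_add, map_mul, prj_natCast, ZMod.natCast_self] using h2
      rw [map_mul, map_mul, map_mul, map_mul, map_pow, map_neg, map_one,
          prj_natCast, prj_inv (i+1) (by omega) (by omega), hproj,
          choose_pm1_F (show i ≤ p - 1 by omega), prj_natCast]
    calc ∑ a ∈ range (k+1), ((p.choose a * (n*p + A).choose (k-a) : ℕ) : ZMod (p^2))
        = (∑ i ∈ range k, ((p.choose (i+1) * (n*p + A).choose (k-(i+1)) : ℕ) : ZMod (p^2)))
            + ((p.choose 0 * (n*p + A).choose (k-0) : ℕ) : ZMod (p^2)) := by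
          exact sum_range_succ' _ k
      _ = (p : ZMod (p^2)) * Phi p A k
            + (((A.choose k : ℕ) : ZMod (p^2)) + (p : ZMod (p^2)) * n * Phi p A k) := by
          rw [sum_congr rfl hterm, ← mul_sum]
          congr 1
          simp only [Nat.choose_zero_right, one_mul, Nat.sub_zero]
          exact IH k hk
      _ = ((A.choose k : ℕ) : ZMod (p^2)) + (p : ZMod (p^2)) * ((n+1 : ℕ) : ZMod (p^2)) * Phi p A k := by
          push_cast
          ring


lemma prj_Phi (A k : ℕ) (hk : k < p) :
    prj p (Phi p A k)
      = ∑ i ∈ range k, (-1)^i * ((i+1 : ℕ) : ZMod p)⁻¹ * ((A.choose (k-(i+1)) : ℕ) : ZMod p) := by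
  rw [Phi, map_sum]
  apply sum_congr rfl
  intro i hi
  rw [mem_range] at hi
  rw [map_mul, map_mul, map_pow, map_neg, map_one, prj_natCast,
      prj_inv (i+1) (by omega) (by omega)]

lemma prj_SR (m : ℕ) (hm : m < p) : prj p (SR p m) = HF p m := by
  rw [SR, HF, map_sum]
  apply sum_congr rfl
  intro i hi
  rw [mem_range] at hi
  exact prj_inv (i+1) (by omega) (by omega)

end RV432

/-- For any prime `p ≥ 5`,
`∑_{k=0}^{p-1} C(6k,3k) C(3k,k) / 432^k ≡ (-1/p) (mod p^2)`, stated in `ZMod (p^2)`. -/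
theorem rv_supercongruence_432 (p : ℕ) [Fact p.Prime] (hp : 5 ≤ p) :
    ∑ k ∈ Finset.range p,
        ((Nat.choose (6 * k) (3 * k) : ZMod (p ^ 2)) * (Nat.choose (3 * k) k : ZMod (p ^ 2)) *
          ((432 : ZMod (p ^ 2))⁻¹) ^ k)
      = (legendreSym p (-1) : ZMod (p ^ 2)) := by
  classical
  have hprime : p.Prime := Fact.out
  have hp2 : ¬ 2 ∣ p := by
    intro h; rcases hprime.eq_one_or_self_of_dvd 2 h with h' | h' <;> omega
  have hp3 : ¬ 3 ∣ p := by
    intro h; rcases hprime.eq_one_or_self_of_dvd 3 h with h' | h' <;> omega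
  have hpp : p^2 = p*p := by ring
  have hdvd6 : 6 ∣ p^2 - 1 := by
    obtain ⟨t, ht⟩ : ∃ t, p = 6*t + 1 ∨ p = 6*t + 5 := ⟨p / 6, by omega⟩
    rcases ht with ht | ht
    · have h : p^2 = 36*(t*t) + 12*t + 1 := by rw [hpp, ht]; ring
      omega
    · have h : p^2 = 36*(t*t) + 60*t + 25 := by rw [hpp, ht]; ring
      omega
  set x := (p^2 - 1) / 6 with hxdef
  have hx6 : 6 * x = p^2 - 1 := Nat.mul_div_cancel' hdvd6
  set y := 5 * x with hydef
  set x1 := x / p with hx1def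
  set x0 := x % p with hx0def
  set y1 := y / p with hy1def
  set y0 := y % p with hy0def
  have hppos : 0 < p := by omega
  have hx0p : x0 < p := Nat.mod_lt _ hppos
  have hy0p : y0 < p := Nat.mod_lt _ hppos
  have hxE : p * x1 + x0 = x := Nat.div_add_mod x p
  have hyE : p * y1 + y0 = y := Nat.div_add_mod y p
  have hxy : x + y = p^2 - 1 := by omega
  have hmulq : p*(p-1) + (p-1) = p^2 - 1 := by
    obtain ⟨q, hq⟩ : ∃ q, p = q + 1 := ⟨p - 1, by omega⟩
    have hq1 : (q+1)*(q+1) = (q+1)*q + q + 1 := by ring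
    have e : p - 1 = q := by omega
    have e2 : p*(p-1) = (q+1)*q := by rw [e, hq]
    have e3 : p^2 = (q+1)*(q+1) := by rw [hpp, hq]
    omega
  have hmod : (p^2 - 1) % p = p - 1 := by
    rw [← hmulq, Nat.mul_add_mod]
    exact Nat.mod_eq_of_lt (by omega)
  have hx0y0 : x0 + y0 = p - 1 := by
    have h1 : (x + y) % p = (x0 + y0) % p := by
      conv_lhs => rw [Nat.add_mod]
    have h2 : (x0 + y0) % p = p - 1 := by rw [← h1, hxy, hmod]
    by_cases hlt : x0 + y0 < p
    · rwa [Nat.mod_eq_of_lt hlt] at h2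
    · have h3 : (x0 + y0) % p = (x0 + y0 - p) % p := Nat.mod_eq_sub_mod (by omega)
      rw [h3, Nat.mod_eq_of_lt (by omega)] at h2
      omega
  have hx1y1 : x1 + y1 = p - 1 := by
    apply Nat.eq_of_mul_eq_mul_left hppos
    have hma : p * (x1 + y1) = p * x1 + p * y1 := by ring
    omega
  have hxgep : p - 1 ≤ x := by
    have h : 6*p ≤ p*p + 5 := by nlinarith
    omega
  -- cast facts
  have hx6R : (6 : ZMod (p^2)) * ((x : ℕ) : ZMod (p^2)) = -1 := by
    have e1 : ((p^2 - 1 : ℕ) : ZMod (p^2)) = -1 := by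
      have e := congrArg (Nat.cast (R := ZMod (p^2))) (show (p^2 - 1) + 1 = p^2 by omega)
      rw [Nat.cast_add, Nat.cast_one, ZMod.natCast_self] at e
      linear_combination e
    have e2 := congrArg (Nat.cast (R := ZMod (p^2))) hx6
    rw [Nat.cast_mul, e1] at e2
    exact_mod_cast e2
  have hy6R : (6 : ZMod (p^2)) * ((y : ℕ) : ZMod (p^2)) = -5 := by
    have hyc : ((y : ℕ) : ZMod (p^2)) = 5 * ((x : ℕ) : ZMod (p^2)) := by
      rw [hydef]; push_cast; ring
    rw [hyc]; linear_combination 5 * hx6R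
  -- Step 1 : rewrite each summand
  have h432 : ¬ p ∣ 432 := by
    intro hd
    have h432e : (432 : ℕ) = 2^4 * 3^3 := by norm_num
    rw [h432e] at hd
    rcases (Nat.Prime.dvd_mul hprime).mp hd with h | h
    · have h' := Nat.Prime.dvd_of_dvd_pow hprime h
      have := Nat.le_of_dvd (by norm_num) h'
      omega
    · have h' := Nat.Prime.dvd_of_dvd_pow hprime h
      have := Nat.le_of_dvd (by norm_num) h'
      omega
  have hu432 : IsUnit (432 : ZMod (p^2)) := by
    have := RV432.isUnit_cast (p := p) h432
    rwa [show ((432:ℕ) : ZMod (p^2)) = (432 : ZMod (p^2)) by norm_cast] at this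
  have stepone : ∀ k ∈ range p,
      ((Nat.choose (6 * k) (3 * k) : ZMod (p ^ 2)) * (Nat.choose (3 * k) k : ZMod (p ^ 2)) *
          ((432 : ZMod (p ^ 2))⁻¹) ^ k)
        = ((x.choose k : ℕ) : ZMod (p^2)) * ((y.choose k : ℕ) : ZMod (p^2)) := by
    intro k hk
    rw [mem_range] at hk
    have hkfact : ¬ p ∣ k.factorial := by
      rw [hprime.dvd_factorial]
      omega
    have hufact : IsUnit ((k.factorial : ℕ) : ZMod (p^2)) := RV432.isUnit_cast hkfact
    have hU : IsUnit ((432 : ZMod (p^2))^k * ((k.factorial : ℕ) : ZMod (p^2))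
        * ((k.factorial : ℕ) : ZMod (p^2))) := ((hu432.pow k).mul hufact).mul hufact
    apply hU.mul_right_cancel
    have hinv432 : (432 : ZMod (p^2))⁻¹ * (432 : ZMod (p^2)) = 1 := ZMod.inv_mul_of_unit _ hu432
    have hL : ((Nat.choose (6 * k) (3 * k) : ZMod (p ^ 2)) * (Nat.choose (3 * k) k : ZMod (p ^ 2)) *
          ((432 : ZMod (p ^ 2))⁻¹) ^ k)
          * ((432 : ZMod (p^2))^k * ((k.factorial : ℕ) : ZMod (p^2)) * ((k.factorial : ℕ) : ZMod (p^2)))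
        = (12 : ZMod (p^2))^k * ∏ j ∈ range k,
            ((6*(j : ZMod (p^2))+1)*(6*(j : ZMod (p^2))+5)) := by
      have hc := congrArg (Nat.cast (R := ZMod (p^2))) (RV432.choose_id k)
      push_cast at hc
      calc ((Nat.choose (6 * k) (3 * k) : ZMod (p ^ 2)) * (Nat.choose (3 * k) k : ZMod (p ^ 2)) *
          ((432 : ZMod (p ^ 2))⁻¹) ^ k)
          * ((432 : ZMod (p^2))^k * ((k.factorial : ℕ) : ZMod (p^2)) * ((k.factorial : ℕ) : ZMod (p^2)))
          = ((Nat.choose (6 * k) (3 * k) : ZMod (p ^ 2)) * (Nat.choose (3 * k) k : ZMod (p ^ 2)) *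
            (((k.factorial : ℕ) : ZMod (p^2)) * ((k.factorial : ℕ) : ZMod (p^2))))
            * (((432 : ZMod (p^2))⁻¹ * 432)^k) := by ring
        _ = _ := by rw [hinv432, one_pow, mul_one, hc]
    have hdesc : ∀ (A : ℕ), k ≤ A →
        ((A.choose k : ℕ) : ZMod (p^2)) * ((k.factorial : ℕ) : ZMod (p^2))
          = ∏ j ∈ range k, ((A - j : ℕ) : ZMod (p^2)) := by
      intro A hA
      calc ((A.choose k : ℕ) : ZMod (p^2)) * ((k.factorial : ℕ) : ZMod (p^2))
          = ((k.factorial * A.choose k : ℕ) : ZMod (p^2)) := by push_cast; ring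
        _ = ((A.descFactorial k : ℕ) : ZMod (p^2)) := by
            rw [← Nat.descFactorial_eq_factorial_mul_choose]
        _ = ((∏ j ∈ range k, (A - j) : ℕ) : ZMod (p^2)) := by
            rw [Nat.descFactorial_eq_prod_range]
        _ = ∏ j ∈ range k, ((A - j : ℕ) : ZMod (p^2)) := by rw [Nat.cast_prod]
    have hR : (((x.choose k : ℕ) : ZMod (p^2)) * ((y.choose k : ℕ) : ZMod (p^2)))
          * ((432 : ZMod (p^2))^k * ((k.factorial : ℕ) : ZMod (p^2)) * ((k.factorial : ℕ) : ZMod (p^2)))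
        = (12 : ZMod (p^2))^k * ∏ j ∈ range k,
            ((6*(j : ZMod (p^2))+1)*(6*(j : ZMod (p^2))+5)) := by
      have hkx : k ≤ x := by omega
      have hky : k ≤ y := by omega
      have hconst : (∏ _j ∈ range k, (432 : ZMod (p^2))) = (432 : ZMod (p^2))^k := by
        rw [prod_const, card_range]
      calc (((x.choose k : ℕ) : ZMod (p^2)) * ((y.choose k : ℕ) : ZMod (p^2)))
          * ((432 : ZMod (p^2))^k * ((k.factorial : ℕ) : ZMod (p^2)) * ((k.factorial : ℕ) : ZMod (p^2)))
          = (((x.choose k : ℕ) : ZMod (p^2)) * ((k.factorial : ℕ) : ZMod (p^2)))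
            * (((y.choose k : ℕ) : ZMod (p^2)) * ((k.factorial : ℕ) : ZMod (p^2)))
            * (432 : ZMod (p^2))^k := by ring
        _ = (∏ j ∈ range k, ((x - j : ℕ) : ZMod (p^2)))
            * (∏ j ∈ range k, ((y - j : ℕ) : ZMod (p^2)))
            * (∏ _j ∈ range k, (432 : ZMod (p^2))) := by
            rw [hdesc x hkx, hdesc y hky, hconst]
        _ = ∏ j ∈ range k, (((x - j : ℕ) : ZMod (p^2)) * ((y - j : ℕ) : ZMod (p^2)) * 432) := by
            rw [← prod_mul_distrib, ← prod_mul_distrib]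
        _ = ∏ j ∈ range k, (12 * ((6*(j : ZMod (p^2))+1)*(6*(j : ZMod (p^2))+5))) := by
            apply prod_congr rfl
            intro j hj
            rw [mem_range] at hj
            rw [Nat.cast_sub (by omega : j ≤ x), Nat.cast_sub (by omega : j ≤ y)]
            linear_combination (72*((y : ℕ) : ZMod (p^2)) - 72*((j : ℕ) : ZMod (p^2))) * hx6R
              + (-12 - 72*((j : ℕ) : ZMod (p^2))) * hy6R
        _ = (12 : ZMod (p^2))^k * ∏ j ∈ range k,
            ((6*(j : ZMod (p^2))+1)*(6*(j : ZMod (p^2))+5)) := by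
            rw [prod_mul_distrib, prod_const, card_range]
    exact hL.trans hR.symm
  rw [sum_congr rfl stepone]
  -- Step 2 : expansion
  have hxsplit : x = x1*p + x0 := by
    have hc : x1*p = p*x1 := Nat.mul_comm x1 p
    omega
  have hysplit : y = y1*p + y0 := by
    have hc : y1*p = p*y1 := Nat.mul_comm y1 p
    omega
  have hexp : ∀ k ∈ range p,
      ((x.choose k : ℕ) : ZMod (p^2)) * ((y.choose k : ℕ) : ZMod (p^2))
        = (((x0.choose k : ℕ) : ZMod (p^2)) * ((y0.choose k : ℕ) : ZMod (p^2)))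
          + (p : ZMod (p^2)) * (((x1 : ℕ) : ZMod (p^2)) * (RV432.Phi p x0 k * ((y0.choose k : ℕ) : ZMod (p^2))))
          + (p : ZMod (p^2)) * (((y1 : ℕ) : ZMod (p^2)) * (((x0.choose k : ℕ) : ZMod (p^2)) * RV432.Phi p y0 k)) := by
    intro k hk
    rw [mem_range] at hk
    have hex := RV432.expand (p := p) x0 x1 k hk
    have hey := RV432.expand (p := p) y0 y1 k hk
    rw [← hxsplit] at hex
    rw [← hysplit] at hey
    rw [hex, hey]
    linear_combination (((x1 : ℕ) : ZMod (p^2)) * RV432.Phi p x0 k * ((y1 : ℕ) : ZMod (p^2))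
      * RV432.Phi p y0 k) * (RV432.pp_zero (p := p))
  rw [sum_congr rfl hexp]
  rw [sum_add_distrib, sum_add_distrib]
  -- head sum
  have hhead : (∑ k ∈ range p, ((x0.choose k : ℕ) : ZMod (p^2)) * ((y0.choose k : ℕ) : ZMod (p^2)))
      = (((p-1).choose x0 : ℕ) : ZMod (p^2)) := by
    have hv := RV432.vdm_gen x0 y0 0 p (by omega : y0 < p + 0)
    simp only [zero_add, add_zero] at hv
    rw [hx0y0] at hv
    have hc := congrArg (Nat.cast (R := ZMod (p^2))) hv
    push_cast at hc
    exact_mod_cast hc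
  rw [hhead]
  -- the p-multiplied sums
  set W1 := ∑ k ∈ range p, RV432.Phi p x0 k * ((y0.choose k : ℕ) : ZMod (p^2)) with hW1def
  set W2 := ∑ k ∈ range p, ((x0.choose k : ℕ) : ZMod (p^2)) * RV432.Phi p y0 k with hW2def
  have hmsum1 : (∑ k ∈ range p, (p : ZMod (p^2)) * (((x1 : ℕ) : ZMod (p^2)) * (RV432.Phi p x0 k * ((y0.choose k : ℕ) : ZMod (p^2)))))
      = (p : ZMod (p^2)) * (((x1 : ℕ) : ZMod (p^2)) * W1) := by rw [hW1def, mul_sum, mul_sum]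
  have hmsum2 : (∑ k ∈ range p, (p : ZMod (p^2)) * (((y1 : ℕ) : ZMod (p^2)) * (((x0.choose k : ℕ) : ZMod (p^2)) * RV432.Phi p y0 k)))
      = (p : ZMod (p^2)) * (((y1 : ℕ) : ZMod (p^2)) * W2) := by rw [hW2def, mul_sum, mul_sum]
  rw [hmsum1, hmsum2]
  -- compute the projections of W1 and W2
  have hinner : ∀ (A B : ℕ), A + B = p - 1 → ∀ i, i < p →
      (∑ k ∈ Ico (i+1) p, ((A.choose (k-(i+1)) : ℕ) : ZMod p) * ((B.choose k : ℕ) : ZMod p))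
        = (((p-1).choose (A+i+1) : ℕ) : ZMod p) := by
    intro A B hAB i hi
    rw [sum_Ico_eq_sum_range]
    have hcong : ∀ j ∈ range (p - (i+1)),
        ((A.choose ((i+1)+j-(i+1)) : ℕ) : ZMod p) * ((B.choose ((i+1)+j) : ℕ) : ZMod p)
          = ((A.choose j : ℕ) : ZMod p) * ((B.choose ((i+1)+j) : ℕ) : ZMod p) := by
      intro j hj
      rw [Nat.add_sub_cancel_left]
    rw [sum_congr rfl hcong]
    have hv := RV432.vdm_gen A B (i+1) (p-(i+1)) (by omega : B < (p-(i+1)) + (i+1))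
    rw [hAB, show A + (i+1) = A+i+1 by omega] at hv
    have hc := congrArg (Nat.cast (R := ZMod p)) hv
    push_cast at hc
    exact_mod_cast hc
  have hWproj : ∀ (A B : ℕ), A < p → B < p → A + B = p - 1 →
      RV432.prj p (∑ k ∈ range p, RV432.Phi p A k * ((B.choose k : ℕ) : ZMod (p^2)))
        = -(-1 : ZMod p)^A * RV432.HF p B := by
    intro A B hA hB hAB
    rw [map_sum]
    have h1 : ∀ k ∈ range p, RV432.prj p (RV432.Phi p A k * ((B.choose k : ℕ) : ZMod (p^2)))
        = ∑ i ∈ range k, ((-1 : ZMod p)^i * ((i+1 : ℕ) : ZMod p)⁻¹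
            * ((A.choose (k-(i+1)) : ℕ) : ZMod p) * ((B.choose k : ℕ) : ZMod p)) := by
      intro k hk
      rw [mem_range] at hk
      rw [map_mul, RV432.prj_Phi A k hk, RV432.prj_natCast, sum_mul]
    rw [sum_congr rfl h1, RV432.sum_triangle p
      (fun i k => ((-1 : ZMod p)^i * ((i+1 : ℕ) : ZMod p)⁻¹
            * ((A.choose (k-(i+1)) : ℕ) : ZMod p) * ((B.choose k : ℕ) : ZMod p)))]
    have h2 : ∀ i ∈ range p,
        (∑ k ∈ Ico (i+1) p, ((-1 : ZMod p)^i * ((i+1 : ℕ) : ZMod p)⁻¹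
            * ((A.choose (k-(i+1)) : ℕ) : ZMod p) * ((B.choose k : ℕ) : ZMod p)))
          = (-1 : ZMod p)^i * ((i+1 : ℕ) : ZMod p)⁻¹ * (((p-1).choose (A+i+1) : ℕ) : ZMod p) := by
      intro i hi
      rw [mem_range] at hi
      have e : ∀ k ∈ Ico (i+1) p, ((-1 : ZMod p)^i * ((i+1 : ℕ) : ZMod p)⁻¹
            * ((A.choose (k-(i+1)) : ℕ) : ZMod p) * ((B.choose k : ℕ) : ZMod p))
          = ((-1 : ZMod p)^i * ((i+1 : ℕ) : ZMod p)⁻¹)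
            * (((A.choose (k-(i+1)) : ℕ) : ZMod p) * ((B.choose k : ℕ) : ZMod p)) := by
        intro k hk; ring
      rw [sum_congr rfl e, ← mul_sum, hinner A B hAB i hi, mul_assoc]
    rw [sum_congr rfl h2]
    have h3 : (∑ i ∈ range p, ((-1 : ZMod p)^i * ((i+1 : ℕ) : ZMod p)⁻¹
          * (((p-1).choose (A+i+1) : ℕ) : ZMod p)))
        = ∑ i ∈ range B, ((-1 : ZMod p)^i * ((i+1 : ℕ) : ZMod p)⁻¹
          * (((p-1).choose (A+i+1) : ℕ) : ZMod p)) := by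
      symm
      apply sum_subset (range_subset_range.mpr (by omega))
      intro i hi hni
      rw [mem_range] at hi
      rw [mem_range, not_lt] at hni
      rw [Nat.choose_eq_zero_of_lt (by omega : p-1 < A+i+1)]
      simp
    rw [h3]
    have h4 : ∀ i ∈ range B, ((-1 : ZMod p)^i * ((i+1 : ℕ) : ZMod p)⁻¹
          * (((p-1).choose (A+i+1) : ℕ) : ZMod p))
        = (-(-1 : ZMod p)^A) * ((i+1 : ℕ) : ZMod p)⁻¹ := by
      intro i hi
      rw [mem_range] at hi
      rw [RV432.choose_pm1_F (by omega : A+i+1 ≤ p-1)]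
      have hii : (-1 : ZMod p)^i * (-1 : ZMod p)^i = 1 := by
        rw [← pow_add, show i + i = 2*i by ring, pow_mul]
        norm_num
      rw [pow_add, pow_add, pow_one]
      linear_combination (-((((i+1:ℕ) : ZMod p))⁻¹ * (-1 : ZMod p)^A)) * hii
    rw [sum_congr rfl h4, ← mul_sum]
    rfl
  have hprjW1 : RV432.prj p W1 = -(-1 : ZMod p)^x0 * RV432.HF p x0 := by
    rw [hW1def, hWproj x0 y0 hx0p hy0p hx0y0, RV432.HF_split hp hx0y0]
  have hprjW2 : RV432.prj p W2 = -(-1 : ZMod p)^y0 * RV432.HF p x0 := by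
    rw [hW2def]
    have hsymm : ∀ k ∈ range p, ((x0.choose k : ℕ) : ZMod (p^2)) * RV432.Phi p y0 k
        = RV432.Phi p y0 k * ((x0.choose k : ℕ) : ZMod (p^2)) := by
      intro k hk; ring
    rw [sum_congr rfl hsymm, hWproj y0 x0 hy0p hx0p (by omega)]
  have hparity0 : (-1 : ZMod p)^y0 = (-1 : ZMod p)^x0 := by
    rcases Nat.even_or_odd x0 with he | ho
    · have hey : Even y0 := by
        rcases he with ⟨m, hm⟩
        exact ⟨(y0)/2, by omega⟩
      rw [hey.neg_one_pow, he.neg_one_pow]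
    · have hoy : Odd y0 := by
        rcases ho with ⟨m, hm⟩
        exact ⟨(y0-1)/2, by omega⟩
      rw [hoy.neg_one_pow, ho.neg_one_pow]
  have hx1y1F : ((x1 : ℕ) : ZMod p) + ((y1 : ℕ) : ZMod p) = -1 := by
    have e := congrArg (Nat.cast (R := ZMod p)) hx1y1
    rw [Nat.cast_add] at e
    rw [e]
    have e2 := congrArg (Nat.cast (R := ZMod p)) (show (p-1) + 1 = p by omega)
    rw [Nat.cast_add, Nat.cast_one, ZMod.natCast_self] at e2
    linear_combination e2
  -- replace the p-multiplied part
  have hkey : (p : ZMod (p^2)) * (((x1 : ℕ) : ZMod (p^2)) * W1)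
        + (p : ZMod (p^2)) * (((y1 : ℕ) : ZMod (p^2)) * W2)
      = (p : ZMod (p^2)) * ((-1 : ZMod (p^2))^x0 * RV432.SR p x0) := by
    have hc : RV432.prj p (((x1 : ℕ) : ZMod (p^2)) * W1 + ((y1 : ℕ) : ZMod (p^2)) * W2)
        = RV432.prj p ((-1 : ZMod (p^2))^x0 * RV432.SR p x0) := by
      rw [map_add, map_mul, map_mul, RV432.prj_natCast, RV432.prj_natCast,
          hprjW1, hprjW2, map_mul, map_pow, map_neg, map_one, RV432.prj_SR x0 hx0p,
          hparity0]
      linear_combination (-(-1 : ZMod p)^x0 * RV432.HF p x0) * hx1y1F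
    have := RV432.pmul_congr hc
    rw [mul_add] at this
    linear_combination this
  -- legendre symbol
  have hdvdc : p ∣ 6*x0 + 1 := by
    apply Nat.dvd_of_mod_eq_zero
    have e1 : 6*x + 1 = p^2 := by omega
    have hcm : p*(6*x1) = 6*(p*x1) := by ring
    have e3 : 6*x0 + 1 + p*(6*x1) = p^2 := by omega
    calc (6*x0+1) % p = (6*x0+1 + p*(6*x1)) % p := (Nat.add_mul_mod_self_left _ _ _).symm
      _ = p^2 % p := by rw [e3]
      _ = 0 := by rw [hpp]; exact Nat.mul_mod_right p p
  obtain ⟨c, hc⟩ := hdvdc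
  have hcb : c < 6 := by
    by_contra hcb
    push_neg at hcb
    have h6 : p*6 ≤ p*c := Nat.mul_le_mul_left p hcb
    omega
  have hc1 : 1 ≤ c := by
    rcases Nat.eq_zero_or_pos c with h | h
    · rw [h, Nat.mul_zero] at hc; omega
    · exact h
  have hparity : (p % 4 = 1 → x0 % 2 = 0) ∧ (p % 4 = 3 → x0 % 2 = 1) := by
    interval_cases c <;> constructor <;> intro h4 <;> omega
  have hleg : ((legendreSym p (-1) : ℤ) : ZMod (p^2)) = (-1 : ZMod (p^2))^x0 := by
    have hne2 : p ≠ 2 := by omega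
    rw [legendreSym.at_neg_one hne2, ZMod.χ₄_nat_eq_if_mod_four]
    have hp4 : p % 4 = 1 ∨ p % 4 = 3 := by omega
    rcases hp4 with h4 | h4
    · rw [if_neg (by omega), if_pos h4]
      have hev : Even x0 := Nat.even_iff.mpr (hparity.1 h4)
      rw [hev.neg_one_pow]
      norm_num
    · rw [if_neg (by omega), if_neg (by omega)]
      have hod : Odd x0 := Nat.odd_iff.mpr (hparity.2 h4)
      rw [hod.neg_one_pow]
      norm_num
  rw [RV432.choose_pm1_R (by omega : x0 ≤ p - 1), hleg]
  linear_combination hkey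
end

section
/- Let p be an odd prime. Then, as polynomials in x over the field Q[q]/([p]^2 viewed appropriately), the congruence holds coefficientwise: ∑_{k=0}^{p-1} ((q;q^2)_k^2 / (q^2;q^2)_k^2) x^k ≡ ∑_{k=0}^{(p-1)/2} (qbinom((p-1)/2, k; q^2))^2 q^{-pk+k^2} (-x)^k (x;q^2)_{(p-1)/2 - k} (mod [p]^2), where each coefficient congruence means the difference of the coefficients, which are rational functions of q with denominator coprime to [p], lies in the ideal generated by [p]^2 in Q[q] localized at [p]. -/
open Polynomial Finset

/-- The variable `q` as an element of the field of rational functions over `ℚ`. -/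
noncomputable def q : RatFunc ℚ := RatFunc.X

/-- The q-shifted factorial `(a; Q)_n = (1-a)(1-aQ)⋯(1-aQ^{n-1})`. -/
noncomputable def qPoch (a Q : RatFunc ℚ) (n : ℕ) : RatFunc ℚ :=
  ∏ i ∈ Finset.range n, (1 - a * Q ^ i)

/-- The q-integer `[p] = 1 + q + ⋯ + q^{p-1}`. -/
noncomputable def qInt (p : ℕ) : RatFunc ℚ := ∑ i ∈ Finset.range p, q ^ i

/-- The Gaussian binomial coefficient in base `Q`. -/
noncomputable def qBinom (n k : ℕ) (Q : RatFunc ℚ) : RatFunc ℚ :=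
  qPoch (Q ^ (n - k + 1)) Q k / qPoch Q Q k

/-- `ModQ r p A B` : the difference `A - B` lies in the ideal generated by `[p]^r`
in the localization of `ℚ[q]` at the irreducible polynomial `[p]`;
concretely `(A - B) * b = [p]^r * a` for polynomials `a b` with `[p] ∤ b`. -/
def ModQ (r p : ℕ) (A B : RatFunc ℚ) : Prop :=
  ∃ a b : Polynomial ℚ, ¬ ((∑ i ∈ Finset.range p, Polynomial.X ^ i) ∣ b) ∧
    (A - B) * algebraMap (Polynomial ℚ) (RatFunc ℚ) b =
      qInt p ^ r * algebraMap (Polynomial ℚ) (RatFunc ℚ) a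

set_option linter.unusedSectionVars false

namespace QT

abbrev K : Type := RatFunc ℚ

noncomputable abbrev ι : Polynomial ℚ →+* K := algebraMap _ _

lemma ι_inj : Function.Injective ι := RatFunc.algebraMap_injective ℚ

lemma q_eq : q = ι X := (RatFunc.algebraMap_X).symm

lemma q_ne_zero : q ≠ 0 := RatFunc.X_ne_zero

lemma q_pow_ne_one {m : ℕ} (hm : m ≠ 0) : q ^ m ≠ 1 := by
  intro h
  have : ι (X ^ m) = ι 1 := by rw [map_pow, ← q_eq, map_one]; exact h
  have := ι_inj this
  have hdeg := congrArg natDegree this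
  simp [natDegree_X_pow] at hdeg
  exact hm hdeg

/-- `P m = (q²;q²)_m`. -/
noncomputable def P (m : ℕ) : K := qPoch (q ^ 2) (q ^ 2) m

lemma P_zero : P 0 = 1 := by simp [P, qPoch]

lemma P_succ (m : ℕ) : P (m + 1) = P m * (1 - (q ^ 2) ^ (m + 1)) := by
  rw [P, P, qPoch, qPoch, Finset.prod_range_succ]
  ring

lemma one_sub_Q_pow_ne {i : ℕ} (hi : i ≠ 0) : (1 : K) - (q ^ 2) ^ i ≠ 0 := by
  rw [sub_ne_zero, ← pow_mul]
  exact fun h => q_pow_ne_one (by omega) h.symm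

lemma P_ne (m : ℕ) : P m ≠ 0 := by
  induction m with
  | zero => simp [P_zero]
  | succ k ih => rw [P_succ]; exact mul_ne_zero ih (one_sub_Q_pow_ne (Nat.succ_ne_zero k))

/-- Gaussian binomial in base q². -/
noncomputable def qb (m k : ℕ) : K := if k ≤ m then P m / (P k * P (m - k)) else 0

lemma qb_zero_right (m : ℕ) : qb m 0 = 1 := by
  simp [qb, P_zero]
  simp [P_ne m]

lemma qb_eq_zero {m k : ℕ} (h : m < k) : qb m k = 0 := by simp [qb, Nat.not_le.mpr h]

lemma qb_self (m : ℕ) : qb m m = 1 := by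
  simp [qb, P_zero]
  simp [P_ne m]

lemma qb_ne_zero {m k : ℕ} (h : k ≤ m) : qb m k ≠ 0 := by
  rw [qb, if_pos h]
  exact div_ne_zero (P_ne m) (mul_ne_zero (P_ne k) (P_ne (m - k)))

lemma qb_symm {m k : ℕ} (h : k ≤ m) : qb m k = qb m (m - k) := by
  rw [qb, qb, if_pos h, if_pos (Nat.sub_le m k), Nat.sub_sub_self h, mul_comm]

lemma qb_pascal (m k : ℕ) :
    qb (m + 1) (k + 1) = qb m (k + 1) + (q ^ 2) ^ (m - k) * qb m k := by
  rcases Nat.lt_or_ge m (k + 1) with h | h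
  · rcases Nat.lt_or_ge m k with h2 | h2
    · rw [qb_eq_zero (by omega), qb_eq_zero h2, qb_eq_zero (by omega)]
      ring
    · have hmk : m = k := by omega
      subst hmk
      rw [qb_self, qb_eq_zero (by omega), qb_self]
      simp
  · obtain ⟨d, hd⟩ : ∃ d, m = k + 1 + d := ⟨m - (k + 1), by omega⟩
    subst hd
    rw [qb, qb, qb, if_pos (by omega), if_pos (by omega), if_pos (by omega)]
    have e1 : k + 1 + d + 1 - (k + 1) = d + 1 := by omega
    have e2 : k + 1 + d - (k + 1) = d := by omega
    have e3 : k + 1 + d - k = d + 1 := by omega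
    rw [e1, e2, e3]
    rw [P_succ (k + 1 + d), P_succ d, P_succ k]
    have hPk := P_ne k
    have hPk1 := P_ne (k + 1)
    have hPd := P_ne d
    have hPm := P_ne (k + 1 + d)
    have h1 : (1 : K) - (q ^ 2) ^ (d + 1) ≠ 0 := one_sub_Q_pow_ne (Nat.succ_ne_zero d)
    have h2 : (1 : K) - (q ^ 2) ^ (k + 1) ≠ 0 := one_sub_Q_pow_ne (Nat.succ_ne_zero k)
    field_simp
    ring

/-- Triangular number as a sum. -/
def T (j : ℕ) : ℕ := ∑ i ∈ Finset.range j, i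

lemma T_succ (j : ℕ) : T (j + 1) = T j + j := Finset.sum_range_succ _ _

lemma coeff_prod_shift (m s : ℕ) : ∀ j : ℕ,
    (∏ i ∈ Finset.range m, (1 - Polynomial.C ((q ^ 2) ^ (s + i)) * Polynomial.X)).coeff j
      = (-1) ^ j * (q ^ 2) ^ (s * j + T j) * qb m j := by
  induction m with
  | zero =>
    intro j
    cases j with
    | zero => simp [T, qb_zero_right]
    | succ i => simp [qb_eq_zero (Nat.succ_pos i), Polynomial.coeff_one]
  | succ m ih =>
    intro j
    rw [Finset.prod_range_succ]
    set F := ∏ i ∈ Finset.range m, (1 - Polynomial.C ((q ^ 2) ^ (s + i)) * Polynomial.X) with hF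
    have expand : F * (1 - Polynomial.C ((q ^ 2) ^ (s + m)) * Polynomial.X)
        = F - Polynomial.C ((q ^ 2) ^ (s + m)) * (F * Polynomial.X) := by ring
    rw [expand]
    cases j with
    | zero =>
      simp only [Polynomial.coeff_sub, Polynomial.coeff_C_mul, Polynomial.mul_coeff_zero,
        Polynomial.coeff_X_zero, mul_zero, sub_zero, ih 0]
      rw [show qb (m+1) 0 = qb m 0 by rw [qb_zero_right, qb_zero_right]]
    | succ j =>
      rw [Polynomial.coeff_sub, Polynomial.coeff_C_mul, Polynomial.coeff_mul_X, ih (j+1), ih j,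
        qb_pascal m j]
      rcases Nat.lt_or_ge m j with h | h
      · rw [qb_eq_zero h, qb_eq_zero (by omega)]
        simp
      · obtain ⟨d, rfl⟩ : ∃ d, m = j + d := ⟨m - j, by omega⟩
        have e1 : j + d - j = d := by omega
        rw [e1, T_succ]
        ring

lemma coeff_prod0 (m : ℕ) (j : ℕ) :
    (∏ i ∈ Finset.range m, (1 - Polynomial.C ((q ^ 2) ^ i) * Polynomial.X)).coeff j
      = (-1) ^ j * (q ^ 2) ^ (T j) * qb m j := by
  have : (∏ i ∈ Finset.range m, (1 - Polynomial.C ((q ^ 2) ^ i) * Polynomial.X))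
      = ∏ i ∈ Finset.range m, (1 - Polynomial.C ((q ^ 2) ^ (0 + i)) * Polynomial.X) :=
    Finset.prod_congr rfl (fun i _ => by rw [zero_add])
  rw [this, coeff_prod_shift m 0 j, zero_mul, zero_add]

lemma vdm (a b j : ℕ) :
    (q ^ 2) ^ (T j) * qb (a + b) j
      = ∑ k ∈ Finset.range (j + 1),
          qb a k * qb b (j - k) * (q ^ 2) ^ (T k + T (j - k) + a * (j - k)) := by
  have hsplit : (∏ i ∈ Finset.range (a + b), (1 - Polynomial.C ((q ^ 2) ^ (0 + i)) * Polynomial.X))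
      = (∏ i ∈ Finset.range a, (1 - Polynomial.C ((q ^ 2) ^ (0 + i)) * Polynomial.X))
        * (∏ i ∈ Finset.range b, (1 - Polynomial.C ((q ^ 2) ^ (a + i)) * Polynomial.X)) := by
    rw [Finset.prod_range_add (fun i => (1 - Polynomial.C ((q ^ 2) ^ (0 + i)) * Polynomial.X)) a b]
    exact congrArg _ (Finset.prod_congr rfl (fun i _ => by rw [zero_add]))
  have h1 := congrArg (fun f : Polynomial K => f.coeff j) hsplit
  simp only [Polynomial.coeff_mul, Finset.Nat.sum_antidiagonal_eq_sum_range_succ_mk] at h1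
  rw [coeff_prod_shift (a+b) 0 j] at h1
  have h2 : ∀ k ∈ Finset.range (j + 1),
      (∏ i ∈ Finset.range a, (1 - Polynomial.C ((q ^ 2) ^ (0 + i)) * Polynomial.X)).coeff k
        * (∏ i ∈ Finset.range b, (1 - Polynomial.C ((q ^ 2) ^ (a + i)) * Polynomial.X)).coeff (j - k)
      = (-1) ^ j * (qb a k * qb b (j - k) * (q ^ 2) ^ (T k + T (j - k) + a * (j - k))) := by
    intro k hk
    rw [coeff_prod_shift a 0 k, coeff_prod_shift b a (j - k)]
    have hk' : k ≤ j := Nat.lt_succ_iff.mp (Finset.mem_range.mp hk)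
    have hsign : (-1 : K) ^ k * (-1) ^ (j - k) = (-1) ^ j := by
      rw [← pow_add]; congr 1; omega
    rw [← hsign]
    ring
  rw [Finset.sum_congr rfl h2, ← Finset.mul_sum] at h1
  have hne : ((-1 : K) ^ j) ≠ 0 := pow_ne_zero _ (by norm_num)
  exact mul_left_cancel₀ hne (by rw [← h1]; ring)

lemma starstar (n j : ℕ) :
    (q ^ 2) ^ (T j) * qb (n + j) j
      = ∑ k ∈ Finset.range (j + 1),
          qb n k * qb j k * (q ^ 2) ^ (T k + T (j - k) + n * (j - k)) := by
  rw [vdm n j j]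
  refine Finset.sum_congr rfl (fun k hk => ?_)
  have hk' : k ≤ j := Nat.lt_succ_iff.mp (Finset.mem_range.mp hk)
  rw [qb_symm hk']

/-- `(Q^{d+1};Q)_k (Q;Q)_d = (Q;Q)_{d+k}` -/
lemma poch_shift (d k : ℕ) :
    qPoch ((q ^ 2) ^ (d + 1)) (q ^ 2) k * P d = P (d + k) := by
  rw [P, P, qPoch, qPoch, qPoch, Finset.prod_range_add, mul_comm]
  congr 1
  exact Finset.prod_congr rfl (fun i _ => by rw [← pow_succ', ← pow_add]; ring_nf)

lemma qb_closed {m k : ℕ} (h : k ≤ m) : qb m k = P m / (P k * P (m - k)) := by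
  rw [qb, if_pos h]

lemma qBinom_eq {n k : ℕ} (h : k ≤ n) : qBinom n k (q ^ 2) = qb n k := by
  obtain ⟨d, rfl⟩ : ∃ d, n = k + d := ⟨n - k, by omega⟩
  have e1 : k + d - k = d := by omega
  rw [qBinom, qb_closed h]
  rw [show k + d - k + 1 = d + 1 from by omega, e1]
  have := poch_shift d k
  have hPd := P_ne d
  have hPkne := P_ne k
  have hPkd := P_ne (k + d)
  have hPk : qPoch (q ^ 2) (q ^ 2) k = P k := rfl
  rw [hPk]
  rw [div_eq_div_iff hPkne (mul_ne_zero hPkne hPd)]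
  calc qPoch ((q ^ 2) ^ (d + 1)) (q ^ 2) k * (P k * P d)
      = (qPoch ((q ^ 2) ^ (d + 1)) (q ^ 2) k * P d) * P k := by ring
    _ = P (d + k) * P k := by rw [this]
    _ = P (k + d) * P k := by rw [Nat.add_comm]

lemma rev_prod {n j : ℕ} (h : j ≤ n) :
    P (n - j) * ∏ i ∈ Finset.range j, (1 - (q ^ 2) ^ (n - i)) = P n := by
  induction j with
  | zero => simp
  | succ m ih =>
    have hm : m ≤ n := by omega
    rw [Finset.prod_range_succ, show n - (m+1) = (n - m) - 1 by omega]
    obtain ⟨e, he⟩ : ∃ e, n - m = e + 1 := ⟨n - m - 1, by omega⟩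
    rw [he]
    have : (e + 1) - 1 = e := by omega
    rw [this, ← ih hm, he, P_succ e]
    ring

lemma qb_tri {n j k : ℕ} (hk : k ≤ j) (hj : j ≤ n) :
    qb n k * qb (n - k) (j - k) = qb n j * qb j k := by
  rw [qb_closed (le_trans hk hj), qb_closed (by omega : j - k ≤ n - k),
    qb_closed hj, qb_closed hk]
  have e1 : n - k - (j - k) = n - j := by omega
  rw [e1]
  have h1 := P_ne n; have h2 := P_ne k; have h3 := P_ne (n - k)
  have h4 := P_ne (j - k); have h5 := P_ne (n - j); have h6 := P_ne j
  field_simp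

/-- the key per-factor identity -/
lemma fid (i d : ℕ) :
    (q ^ 2) ^ (i + d) * (1 - q ^ (2 * i + 1)) ^ 2
      - (q ^ 2) ^ i * (q ^ (2 * (i + d) + 1) - 1) ^ 2
    = -((q ^ 2) ^ i * ((1 - (q ^ 2) ^ d) * (1 - (q ^ 2) ^ (i + d + 1 + i)))) := by
  ring

lemma T_lin (k : ℕ) : 2 * T k + k = k * k := by
  cases k with
  | zero => rfl
  | succ s =>
    have h : T (s + 1) * 2 = (s + 1) * s := by
      simpa [T] using Finset.sum_range_id_mul_two (s + 1)
    have he : (s + 1) * (s + 1) = (s + 1) * s + (s + 1) := by ring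
    omega

lemma zpow_reduce (n k : ℕ) :
    (q : K) ^ ((k : ℤ) ^ 2 - (2 * n + 1 : ℕ) * k) * ((q ^ 2) ^ (n * k))
      = (q ^ 2) ^ (T k) := by
  have h1 : ((q : K) ^ 2) ^ (n * k) = (q : K) ^ ((2 * (n * k) : ℕ) : ℤ) := by
    rw [zpow_natCast, ← pow_mul]
  have h2 : ((q : K) ^ 2) ^ (T k) = (q : K) ^ ((2 * T k : ℕ) : ℤ) := by
    rw [zpow_natCast, ← pow_mul]
  rw [h1, h2, ← zpow_add₀ q_ne_zero]
  congr 1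
  have := T_lin k
  push_cast
  nlinarith [T_lin k, sq_nonneg ((k:ℤ))]

/-! ## Localization machinery -/

/-- the q-integer polynomial -/
noncomputable def cp (p : ℕ) : Polynomial ℚ := ∑ i ∈ Finset.range p, Polynomial.X ^ i

lemma qInt_eq (p : ℕ) : qInt p = ι (cp p) := by
  rw [qInt, cp, map_sum]
  exact Finset.sum_congr rfl (fun i _ => by rw [map_pow, q_eq])

section
variable {p : ℕ} (hp : p.Prime)
include hp

lemma cp_eq_cyclotomic : cp p = Polynomial.cyclotomic p ℚ := by
  haveI : Fact p.Prime := ⟨hp⟩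
  rw [Polynomial.cyclotomic_prime ℚ p, cp]

lemma cp_prime : Prime (cp p) := by
  rw [cp_eq_cyclotomic hp]
  exact (Polynomial.cyclotomic.irreducible_rat hp.pos).prime

lemma cp_not_dvd_one_sub_X_pow {m : ℕ} (hm : ¬ p ∣ m) :
    ¬ (cp p ∣ (1 - Polynomial.X ^ m : Polynomial ℚ)) := by
  intro ⟨t, ht⟩
  apply hm
  set ζ : ℂ := Complex.exp (2 * Real.pi * Complex.I / p)
  have hprim : IsPrimitiveRoot ζ p := Complex.isPrimitiveRoot_exp p hp.ne_zero
  have hcz : (Polynomial.aeval ζ) (cp p) = 0 := by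
    rw [cp, map_sum]
    simpa using hprim.geom_sum_eq_zero hp.one_lt
  have := congrArg (Polynomial.aeval ζ) ht
  rw [map_sub, map_one, map_pow, Polynomial.aeval_X, map_mul, hcz, zero_mul] at this
  have hz : ζ ^ m = 1 := by linear_combination -this
  exact hprim.dvd_of_pow_eq_one m hz

/-- `Good p f` : `f` lies in the localization of `ℚ[q]` at `(cp p)`. -/
def Good (p : ℕ) (f : K) : Prop := ∃ a b : Polynomial ℚ, ¬ (cp p ∣ b) ∧ f * ι b = ι a

/-- `GUnit p f` : `f` is a unit of that localization. -/
def GUnit (p : ℕ) (f : K) : Prop :=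
  ∃ a b : Polynomial ℚ, ¬ (cp p ∣ a) ∧ ¬ (cp p ∣ b) ∧ f * ι b = ι a

lemma cp_not_dvd_one : ¬ (cp p ∣ (1 : Polynomial ℚ)) := fun h =>
  (cp_prime hp).not_unit (isUnit_of_dvd_one h)

lemma good_of_poly (a : Polynomial ℚ) : Good p (ι a) :=
  ⟨a, 1, cp_not_dvd_one hp, by rw [map_one, mul_one]⟩

lemma good_zero : Good p 0 := by simpa using good_of_poly hp 0
lemma good_one : Good p 1 := by simpa using good_of_poly hp 1
lemma good_q : Good p q := by rw [q_eq]; exact good_of_poly hp X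

lemma good_mul {f g : K} (hf : Good p f) (hg : Good p g) : Good p (f * g) := by
  obtain ⟨a, b, hb, hab⟩ := hf
  obtain ⟨a', b', hb', hab'⟩ := hg
  refine ⟨a * a', b * b', fun h => ?_, ?_⟩
  · rcases (cp_prime hp).2.2 _ _ h with h' | h'
    exacts [hb h', hb' h']
  · rw [map_mul, map_mul]
    calc f * g * (ι b * ι b') = (f * ι b) * (g * ι b') := by ring
      _ = ι a * ι a' := by rw [hab, hab']

lemma good_add {f g : K} (hf : Good p f) (hg : Good p g) : Good p (f + g) := by
  obtain ⟨a, b, hb, hab⟩ := hf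
  obtain ⟨a', b', hb', hab'⟩ := hg
  refine ⟨a * b' + a' * b, b * b', fun h => ?_, ?_⟩
  · rcases (cp_prime hp).2.2 _ _ h with h' | h'
    exacts [hb h', hb' h']
  · rw [map_add, map_mul, map_mul, map_mul]
    calc (f + g) * (ι b * ι b') = (f * ι b) * ι b' + (g * ι b') * ι b := by ring
      _ = _ := by rw [hab, hab']

lemma good_neg {f : K} (hf : Good p f) : Good p (-f) := by
  obtain ⟨a, b, hb, hab⟩ := hf
  exact ⟨-a, b, hb, by rw [map_neg, ← hab, neg_mul]⟩

lemma good_sub {f g : K} (hf : Good p f) (hg : Good p g) : Good p (f - g) := by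
  rw [sub_eq_add_neg]; exact good_add hp hf (good_neg hp hg)

lemma good_pow {f : K} (hf : Good p f) (m : ℕ) : Good p (f ^ m) := by
  induction m with
  | zero => simpa using good_one hp
  | succ k ih => rw [pow_succ]; exact good_mul hp ih hf

lemma good_prod {s : Finset ℕ} {f : ℕ → K} (hf : ∀ i ∈ s, Good p (f i)) :
    Good p (∏ i ∈ s, f i) := by
  classical
  induction s using Finset.induction_on with
  | empty => simpa using good_one hp
  | insert _ _ hx ih =>
    rw [Finset.prod_insert hx]
    exact good_mul hp (hf _ (Finset.mem_insert_self _ _))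
      (ih (fun i hi => hf i (Finset.mem_insert_of_mem hi)))

lemma gunit_good {f : K} (hf : GUnit p f) : Good p f := by
  obtain ⟨a, b, _, hb, hab⟩ := hf; exact ⟨a, b, hb, hab⟩

lemma gunit_inv {f : K} (hf : GUnit p f) : GUnit p f⁻¹ := by
  obtain ⟨a, b, ha, hb, hab⟩ := hf
  have hfne : f ≠ 0 := by
    intro h
    rw [h, zero_mul] at hab
    have ha0 : a = 0 := ι_inj (by simpa using hab.symm)
    exact ha (ha0 ▸ dvd_zero _)
  have hbne : ι b ≠ 0 := by
    intro h
    have : b = 0 := ι_inj (by simpa using h)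
    exact hb (this ▸ dvd_zero _)
  refine ⟨b, a, hb, ha, ?_⟩
  field_simp
  rw [← hab]

lemma gunit_mul {f g : K} (hf : GUnit p f) (hg : GUnit p g) : GUnit p (f * g) := by
  obtain ⟨a, b, ha, hb, hab⟩ := hf
  obtain ⟨a', b', ha', hb', hab'⟩ := hg
  refine ⟨a * a', b * b', fun h => ?_, fun h => ?_, ?_⟩
  · rcases (cp_prime hp).2.2 _ _ h with h' | h'
    exacts [ha h', ha' h']
  · rcases (cp_prime hp).2.2 _ _ h with h' | h'
    exacts [hb h', hb' h']
  · rw [map_mul, map_mul]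
    calc f * g * (ι b * ι b') = (f * ι b) * (g * ι b') := by ring
      _ = _ := by rw [hab, hab']

lemma gunit_one : GUnit p 1 := ⟨1, 1, cp_not_dvd_one hp, cp_not_dvd_one hp, by simp⟩

lemma gunit_pow {f : K} (hf : GUnit p f) (m : ℕ) : GUnit p (f ^ m) := by
  induction m with
  | zero => simpa using gunit_one hp
  | succ k ih => rw [pow_succ]; exact gunit_mul hp ih hf

lemma gunit_prod {m : ℕ} {f : ℕ → K} (hf : ∀ i ∈ Finset.range m, GUnit p (f i)) :
    GUnit p (∏ i ∈ Finset.range m, f i) := by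
  induction m with
  | zero => simpa using gunit_one hp
  | succ k ih =>
    rw [Finset.prod_range_succ]
    exact gunit_mul hp (ih (fun i hi => hf i (Finset.mem_range.mpr (by have := Finset.mem_range.mp hi; omega))))
      (hf k (by simp))

lemma gunit_q : GUnit p q := by
  refine ⟨X, 1, fun h => ?_, cp_not_dvd_one hp, by rw [q_eq, map_one, mul_one]⟩
  obtain ⟨t, ht⟩ := h
  set ζ : ℂ := Complex.exp (2 * Real.pi * Complex.I / p)
  have hprim : IsPrimitiveRoot ζ p := Complex.isPrimitiveRoot_exp p hp.ne_zero
  have hcz : (Polynomial.aeval ζ) (cp p) = 0 := by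
    rw [cp, map_sum]
    simpa using hprim.geom_sum_eq_zero hp.one_lt
  have := congrArg (Polynomial.aeval ζ) ht
  rw [Polynomial.aeval_X, map_mul, hcz, zero_mul] at this
  exact one_ne_zero (by rw [← hprim.pow_eq_one, this, zero_pow hp.ne_zero] : (1:ℂ) = 0)

lemma gunit_one_sub_q_pow {m : ℕ} (hm : ¬ p ∣ m) : GUnit p (1 - q ^ m) := by
  refine ⟨1 - X ^ m, 1, cp_not_dvd_one_sub_X_pow hp hm, cp_not_dvd_one hp, ?_⟩
  rw [map_one, mul_one, map_sub, map_one, map_pow, q_eq]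

lemma modq_intro {A B s : K} (hs : Good p s) (h : A - B = qInt p ^ 2 * s) :
    ModQ 2 p A B := by
  obtain ⟨a, b, hb, hab⟩ := hs
  exact ⟨a, b, hb, by rw [h, mul_assoc]; rw [show (algebraMap (Polynomial ℚ) (RatFunc ℚ)) = ι from rfl, hab]⟩

/-- difference of products lemma -/
lemma prod_diff (j : ℕ) (F G s : ℕ → K)
    (hF : ∀ i, i < j → Good p (F i))
    (hG : ∀ i, i < j → Good p (G i))
    (hs : ∀ i, i < j → Good p (s i))
    (heq : ∀ i, i < j → F i - G i = qInt p ^ 2 * s i) :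
    ∃ t : K, Good p t ∧
      (∏ i ∈ Finset.range j, F i) - (∏ i ∈ Finset.range j, G i) = qInt p ^ 2 * t := by
  induction j with
  | zero => exact ⟨0, good_zero hp, by simp⟩
  | succ m ih =>
    obtain ⟨t, ht, hteq⟩ := ih (fun i hi => hF i (by omega)) (fun i hi => hG i (by omega))
      (fun i hi => hs i (by omega)) (fun i hi => heq i (by omega))
    refine ⟨F m * t + s m * (∏ i ∈ Finset.range m, G i), ?_, ?_⟩
    · exact good_add hp (good_mul hp (hF m (by omega)) ht)
        (good_mul hp (hs m (by omega)) (good_prod hp (fun i hi => hG i (by simp at hi; omega))))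
    · rw [Finset.prod_range_succ, Finset.prod_range_succ]
      have h1 := heq m (by omega)
      calc (∏ i ∈ Finset.range m, F i) * F m - (∏ i ∈ Finset.range m, G i) * G m
          = F m * ((∏ i ∈ Finset.range m, F i) - (∏ i ∈ Finset.range m, G i))
            + (F m - G m) * (∏ i ∈ Finset.range m, G i) := by ring
        _ = F m * (qInt p ^ 2 * t) + (qInt p ^ 2 * s m) * (∏ i ∈ Finset.range m, G i) := by
            rw [hteq, h1]
        _ = qInt p ^ 2 * (F m * t + s m * (∏ i ∈ Finset.range m, G i)) := by ring

end

/-! ## Coefficient extraction -/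

lemma coeff_lhs (g : ℕ → K) (p j : ℕ) :
    (∑ k ∈ Finset.range p, Polynomial.C (g k) * Polynomial.X ^ k).coeff j
      = if j < p then g j else 0 := by
  rw [Polynomial.finset_sum_coeff]
  have : ∀ k ∈ Finset.range p,
      (Polynomial.C (g k) * Polynomial.X ^ k).coeff j = if j = k then g k else 0 := by
    intro k _
    rw [Polynomial.coeff_C_mul, Polynomial.coeff_X_pow]
    split <;> simp
  rw [Finset.sum_congr rfl this, Finset.sum_ite_eq]
  simp [Finset.mem_range]

lemma coeff_rhs (n j : ℕ) (u : ℕ → K) :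
    (∑ k ∈ Finset.range (n + 1), Polynomial.C (u k) * (-Polynomial.X) ^ k
        * ∏ i ∈ Finset.range (n - k), (1 - Polynomial.C ((q ^ 2) ^ i) * Polynomial.X)).coeff j
      = ∑ k ∈ Finset.range (n + 1), u k * (-1) ^ k *
          (if k ≤ j then (-1) ^ (j - k) * (q ^ 2) ^ (T (j - k)) * qb (n - k) (j - k) else 0) := by
  rw [Polynomial.finset_sum_coeff]
  refine Finset.sum_congr rfl (fun k _ => ?_)
  have hrw : Polynomial.C (u k) * (-Polynomial.X) ^ k
        * ∏ i ∈ Finset.range (n - k), (1 - Polynomial.C ((q ^ 2) ^ i) * Polynomial.X)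
      = Polynomial.C (u k * (-1) ^ k) *
          ((∏ i ∈ Finset.range (n - k), (1 - Polynomial.C ((q ^ 2) ^ i) * Polynomial.X))
            * Polynomial.X ^ k) := by
    rw [map_mul, map_pow, map_neg, map_one]
    ring
  rw [hrw, Polynomial.coeff_C_mul, Polynomial.coeff_mul_X_pow']
  by_cases hkj : k ≤ j
  · rw [if_pos hkj, if_pos hkj, coeff_prod0]
  · rw [if_neg hkj, if_neg hkj]

end QT


open QT in
/-- q-analogue of Tauraso's congruence: coefficientwise in `x`,
`∑_{k<p} ((q;q²)_k²/(q²;q²)_k²) x^k ≡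
 ∑_{k≤(p-1)/2} qbinom((p-1)/2,k;q²)² q^{k²-pk} (-x)^k (x;q²)_{(p-1)/2-k} (mod [p]²)`. -/
theorem q_tauraso (p : ℕ) (hp : p.Prime) (hodd : Odd p) :
    ∀ j : ℕ, ModQ 2 p
      ((∑ k ∈ Finset.range p,
          Polynomial.C (qPoch q (q ^ 2) k ^ 2 / qPoch (q ^ 2) (q ^ 2) k ^ 2) *
            Polynomial.X ^ k : Polynomial (RatFunc ℚ)).coeff j)
      ((∑ k ∈ Finset.range ((p - 1) / 2 + 1),
          Polynomial.C (qBinom ((p - 1) / 2) k (q ^ 2) ^ 2 * q ^ ((k : ℤ) ^ 2 - p * k)) *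
            (-Polynomial.X) ^ k *
            ∏ i ∈ Finset.range ((p - 1) / 2 - k),
              (1 - Polynomial.C ((q ^ 2) ^ i) * Polynomial.X) :
          Polynomial (RatFunc ℚ)).coeff j) := by
  intro j
  obtain ⟨n, rfl⟩ : ∃ n, 2 * n + 1 = p := by
    obtain ⟨m, hm⟩ := hodd; exact ⟨m, by omega⟩
  have hn : (2 * n + 1 - 1) / 2 = n := by omega
  rw [hn, coeff_lhs, coeff_rhs]
  -- notation
  have hgeq : q ^ (2 * n + 1) - 1 = qInt (2 * n + 1) * (q - 1) := by
    rw [qInt]; exact (geom_sum_mul q (2 * n + 1)).symm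
  have hQne : ∀ m : ℕ, ((q : K) ^ 2) ^ m ≠ 0 := fun m => pow_ne_zero _ (pow_ne_zero _ q_ne_zero)
  -- non-divisibility helper
  have hnd : ∀ m : ℕ, 0 < m → m ≤ 2 * n → ¬ ((2 * n + 1) ∣ 2 * m) := by
    intro m hm0 hm1 hdvd
    have hco : Nat.Coprime (2 * n + 1) 2 := by
      have : (2 * n + 1) % 2 = 1 := by omega
      exact Nat.coprime_two_right.mpr (Nat.odd_iff.mpr this)
    have := (Nat.Coprime.dvd_of_dvd_mul_left hco hdvd)
    have := Nat.le_of_dvd hm0 this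
    omega
  have gunit_P : ∀ m : ℕ, m ≤ 2 * n → GUnit (2 * n + 1) (P m) := by
    intro m hm
    have hP_eq : P m = ∏ i ∈ Finset.range m, (1 - q ^ (2 * (i + 1))) := by
      rw [P, qPoch]
      exact Finset.prod_congr rfl
        (fun i _ => by rw [show (q:K) ^ (2*(i+1)) = q^2 * (q^2)^i from by ring])
    rw [hP_eq]
    exact gunit_prod hp (fun i hi => gunit_one_sub_q_pow hp
      (hnd (i + 1) (by omega) (by have := Finset.mem_range.mp hi; omega)))
  -- the B = 0 case for j > n
  have hB0 : n < j → (∑ k ∈ Finset.range (n + 1),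
      qBinom n k (q ^ 2) ^ 2 * q ^ ((k : ℤ) ^ 2 - (2 * n + 1 : ℕ) * k) * (-1) ^ k *
        (if k ≤ j then (-1) ^ (j - k) * (q ^ 2) ^ T (j - k) * qb (n - k) (j - k) else 0)) = 0 := by
    intro hnj
    refine Finset.sum_eq_zero (fun k hk => ?_)
    have hk' : k ≤ n := Nat.lt_succ_iff.mp (Finset.mem_range.mp hk)
    rw [if_pos (by omega), qb_eq_zero (by omega)]
    ring
  rcases Nat.lt_or_ge n j with hnj | hjn
  · rcases Nat.lt_or_ge j (2 * n + 1) with hjp | hjp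
    · -- tail case : n < j < p
      rw [if_pos hjp, hB0 hnj]
      have hmem : n ∈ Finset.range j := Finset.mem_range.mpr hnj
      have hsplit : ((1:K) - q * (q ^ 2) ^ n) * (∏ i ∈ (Finset.range j).erase n, (1 - q * (q ^ 2) ^ i))
          = ∏ i ∈ Finset.range j, (1 - q * (q ^ 2) ^ i) :=
        Finset.mul_prod_erase (Finset.range j) (fun i => 1 - q * (q ^ 2) ^ i) hmem
      have h1 : (1 : K) - q * (q ^ 2) ^ n = -(qInt (2 * n + 1) * (q - 1)) := by
        linear_combination -hgeq
      set E : K := ∏ i ∈ (Finset.range j).erase n, (1 - q * (q ^ 2) ^ i) with hE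
      have hqp : qPoch q (q ^ 2) j = -(qInt (2 * n + 1) * (q - 1)) * E := by
        rw [qPoch, ← hsplit, h1]
      have hPj : qPoch (q ^ 2) (q ^ 2) j = P j := rfl
      refine modq_intro hp (s := (q - 1) ^ 2 * E ^ 2 * (P j ^ 2)⁻¹) ?_ ?_
      · refine good_mul hp (good_mul hp (good_pow hp (good_sub hp (good_q hp) (good_one hp)) 2)
          (good_pow hp ?_ 2)) (gunit_good hp (gunit_inv hp (gunit_pow hp (gunit_P j (by omega)) 2)))
        exact good_prod hp (fun i _ => good_sub hp (good_one hp)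
          (good_mul hp (good_q hp) (good_pow hp (good_pow hp (good_q hp) 2) i)))
      · rw [sub_zero, hqp, hPj]
        have := P_ne j
        field_simp
    · -- j ≥ p: both zero
      rw [if_neg (by omega), hB0 hnj]
      exact modq_intro hp (good_zero hp) (by ring)
  · -- main case : j ≤ n
    rw [if_pos (by omega)]
    -- the products
    set F : ℕ → K := fun i => (q ^ 2) ^ n * (1 - q ^ (2 * i + 1)) ^ 2 with hF
    set G : ℕ → K := fun i =>
      -((q ^ 2) ^ i * ((1 - (q ^ 2) ^ (n - i)) * (1 - (q ^ 2) ^ (n + 1 + i)))) with hG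
    have hFi_good : ∀ i, i < j → Good (2 * n + 1) (F i) := fun i _ =>
      good_mul hp (good_pow hp (good_pow hp (good_q hp) 2) n)
        (good_pow hp (good_sub hp (good_one hp) (good_pow hp (good_q hp) _)) 2)
    have hGi_good : ∀ i, i < j → Good (2 * n + 1) (G i) := fun i _ =>
      good_neg hp (good_mul hp (good_pow hp (good_pow hp (good_q hp) 2) i)
        (good_mul hp (good_sub hp (good_one hp) (good_pow hp (good_pow hp (good_q hp) 2) _))
          (good_sub hp (good_one hp) (good_pow hp (good_pow hp (good_q hp) 2) _))))
    have hsi_good : ∀ i, i < j → Good (2 * n + 1) ((q ^ 2) ^ i * (q - 1) ^ 2) := fun i _ =>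
      good_mul hp (good_pow hp (good_pow hp (good_q hp) 2) i)
        (good_pow hp (good_sub hp (good_q hp) (good_one hp)) 2)
    have heq : ∀ i, i < j → F i - G i = qInt (2 * n + 1) ^ 2 * ((q ^ 2) ^ i * (q - 1) ^ 2) := by
      intro i hi
      have hin : i ≤ n := by omega
      have hid := fid i (n - i)
      rw [show i + (n - i) = n from by omega] at hid
      simp only [hF, hG]
      linear_combination hid + (q ^ 2) ^ i *
        (q ^ (2 * n + 1) - 1 + qInt (2 * n + 1) * (q - 1)) * hgeq
    obtain ⟨t, ht, key⟩ := prod_diff hp j F G _ hFi_good hGi_good hsi_good heq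
    -- evaluate the two products
    have hprodF : (∏ i ∈ Finset.range j, F i)
        = (q ^ 2) ^ (n * j) * qPoch q (q ^ 2) j ^ 2 := by
      simp only [hF]
      have hq1 : (∏ i ∈ Finset.range j, (1 - q ^ (2*i+1))) = qPoch q (q ^ 2) j := by
        rw [qPoch]
        exact Finset.prod_congr rfl
          (fun i _ => by rw [show (q:K) ^ (2*i+1) = q * (q^2)^i from by ring])
      rw [Finset.prod_mul_distrib, Finset.prod_const, Finset.card_range, Finset.prod_pow,
        ← pow_mul, hq1]
    have hprodG : (∏ i ∈ Finset.range j, G i)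
        = (-1) ^ j * (q ^ 2) ^ (T j) * (P (n + j) / P (n - j)) := by
      simp only [hG]
      have : ∀ i ∈ Finset.range j, -((q ^ 2) ^ i * ((1 - (q ^ 2) ^ (n - i)) * (1 - (q ^ 2) ^ (n + 1 + i))))
          = (-1) * ((q ^ 2) ^ i * ((1 - (q ^ 2) ^ (n - i)) * (1 - (q ^ 2) ^ (n + 1 + i)))) := by
        intro i _; ring
      rw [Finset.prod_congr rfl this, Finset.prod_mul_distrib, Finset.prod_mul_distrib,
        Finset.prod_mul_distrib, Finset.prod_const, Finset.prod_pow_eq_pow_sum]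
      have hrev := rev_prod hjn
      have hshift := poch_shift n j
      have hsh2 : qPoch ((q ^ 2) ^ (n + 1)) (q ^ 2) j
          = ∏ i ∈ Finset.range j, (1 - (q ^ 2) ^ (n + 1 + i)) := by
        rw [qPoch]
        exact Finset.prod_congr rfl (fun i _ => by rw [← pow_add])
      rw [← hsh2]
      have hPn := P_ne n
      have hPnj := P_ne (n - j)
      rw [show qPoch ((q^2)^(n+1)) (q^2) j = P (n + j) / P n from by
        rw [eq_div_iff hPn]; exact hshift]
      rw [show (∏ i ∈ Finset.range j, (1 - (q ^ 2) ^ (n - i))) = P n / P (n - j) from by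
        rw [eq_div_iff hPnj, mul_comm]; exact hrev]
      rw [T]
      field_simp
      rw [Finset.card_range]
      ring
    -- identify B
    have hsub : Finset.range (j + 1) ⊆ Finset.range (n + 1) := by
      intro x hx; simp only [Finset.mem_range] at hx ⊢; omega
    have hBsum : (∑ k ∈ Finset.range (n + 1),
        qBinom n k (q ^ 2) ^ 2 * q ^ ((k : ℤ) ^ 2 - (2 * n + 1 : ℕ) * k) * (-1) ^ k *
          (if k ≤ j then (-1) ^ (j - k) * (q ^ 2) ^ T (j - k) * qb (n - k) (j - k) else 0))
        = (∑ k ∈ Finset.range (j + 1),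
        qBinom n k (q ^ 2) ^ 2 * q ^ ((k : ℤ) ^ 2 - (2 * n + 1 : ℕ) * k) * (-1) ^ k *
          (if k ≤ j then (-1) ^ (j - k) * (q ^ 2) ^ T (j - k) * qb (n - k) (j - k) else 0)) := by
      refine (Finset.sum_subset hsub (fun k hk hnk => ?_)).symm
      have : ¬ k ≤ j := by
        simp only [Finset.mem_range] at hk hnk; omega
      rw [if_neg this, mul_zero]
    set B : K := ∑ k ∈ Finset.range (n + 1),
        qBinom n k (q ^ 2) ^ 2 * q ^ ((k : ℤ) ^ 2 - (2 * n + 1 : ℕ) * k) * (-1) ^ k *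
          (if k ≤ j then (-1) ^ (j - k) * (q ^ 2) ^ T (j - k) * qb (n - k) (j - k) else 0) with hBdef
    have hQB : (q ^ 2) ^ (n * j) * B = (-1) ^ j * ((q ^ 2) ^ (T j) * (qb n j * qb (n + j) j)) := by
      rw [hBsum, Finset.mul_sum]
      have hterm : ∀ k ∈ Finset.range (j + 1),
          (q ^ 2) ^ (n * j) * (qBinom n k (q ^ 2) ^ 2 * q ^ ((k : ℤ) ^ 2 - (2 * n + 1 : ℕ) * k) * (-1) ^ k *
            (if k ≤ j then (-1) ^ (j - k) * (q ^ 2) ^ T (j - k) * qb (n - k) (j - k) else 0))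
          = ((-1) ^ j * qb n j) * (qb n k * qb j k * (q ^ 2) ^ (T k + T (j - k) + n * (j - k))) := by
        intro k hk
        have hkj : k ≤ j := Nat.lt_succ_iff.mp (Finset.mem_range.mp hk)
        have hkn : k ≤ n := le_trans hkj hjn
        rw [if_pos hkj, qBinom_eq hkn]
        have hz := zpow_reduce n k
        have htri := qb_tri hkj hjn
        have hsign : (-1 : K) ^ k * (-1) ^ (j - k) = (-1) ^ j := by
          rw [← pow_add]; congr 1; omega
        have hnjk : n * k + n * (j - k) = n * j := by
          rw [← Nat.mul_add]; congr 1; omega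
        rw [← hnjk, pow_add]
        linear_combination
          ((q ^ 2) ^ (n * (j - k)) * (q ^ 2) ^ (T (j - k)) * ((-1:K) ^ k * (-1) ^ (j - k)) *
            qb n k ^ 2 * qb (n - k) (j - k)) * hz
          + ((q ^ 2) ^ (T k) * (q ^ 2) ^ (n * (j - k)) * (q ^ 2) ^ (T (j - k)) *
            ((-1:K) ^ k * (-1) ^ (j - k)) * qb n k) * htri
          + ((q ^ 2) ^ (T k) * (q ^ 2) ^ (n * (j - k)) * (q ^ 2) ^ (T (j - k)) *
            qb n k * qb n j * qb j k) * hsign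
      rw [Finset.sum_congr rfl hterm, ← Finset.mul_sum, ← starstar n j]
      ring
    -- final assembly
    have hD_unit : GUnit (2 * n + 1) ((q ^ 2) ^ (n * j) * P j ^ 2) :=
      gunit_mul hp (gunit_pow hp (gunit_pow hp (gunit_q hp) 2) (n * j))
        (gunit_pow hp (gunit_P j (by omega)) 2)
    have hD_ne : ((q : K) ^ 2) ^ (n * j) * P j ^ 2 ≠ 0 :=
      mul_ne_zero (hQne _) (pow_ne_zero _ (P_ne j))
    refine modq_intro hp (s := t * (((q ^ 2) ^ (n * j) * P j ^ 2)⁻¹)) ?_ ?_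
    · exact good_mul hp ht (gunit_good hp (gunit_inv hp hD_unit))
    · -- A - B = Φ² * (t / D)
      have hPj : qPoch (q ^ 2) (q ^ 2) j = P j := rfl
      rw [hPj]
      have hA : qPoch q (q ^ 2) j ^ 2 / P j ^ 2
          = (∏ i ∈ Finset.range j, F i) * (((q ^ 2) ^ (n * j) * P j ^ 2)⁻¹) := by
        rw [hprodF]
        field_simp [P_ne j, q_ne_zero]
      have hBval : B = (∏ i ∈ Finset.range j, G i) * (((q ^ 2) ^ (n * j) * P j ^ 2)⁻¹) := by
        rw [hprodG]
        have h1 : B = ((-1) ^ j * ((q ^ 2) ^ (T j) * (qb n j * qb (n + j) j))) / (q ^ 2) ^ (n * j) := by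
          rw [eq_div_iff (hQne (n * j)), ← hQB]
          ring
        rw [h1, qb_closed hjn, qb_closed (by omega : j ≤ n + j),
          show n + j - j = n from by omega]
        field_simp [P_ne n, P_ne j, P_ne (n - j), P_ne (n + j), hQne (n * j)]
      rw [hA, hBval, ← sub_mul, key]
      ring
end

section
/- Let p be an odd prime. Then ∑_{k=0}^{p-1} (q;q^2)_k^2 / (q^2;q^2)_k^2 ≡ (-1/p) · q^{(1-p^2)/4} (mod [p]^2), where the congruence is in the localization of Q[q] at the irreducible polynomial [p] = 1 + q + ··· + q^{p-1}, and (-1/p) is the Legendre symbol. -/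
open Polynomial Finset

namespace QRV

noncomputable abbrev KK := RatFunc ℚ

noncomputable abbrev emb : Polynomial ℚ →+* KK := algebraMap (Polynomial ℚ) KK

lemma q_eq : q = emb X := (RatFunc.algebraMap_X).symm

lemma q_ne_zero : q ≠ 0 := RatFunc.X_ne_zero

lemma q_pow_ne_zero (m : ℕ) : q ^ m ≠ 0 := pow_ne_zero m q_ne_zero

lemma q_pow_eq (m : ℕ) : q ^ m = emb (X ^ m) := by rw [q_eq, map_pow]

lemma q_pow_ne_one {m : ℕ} (hm : m ≠ 0) : q ^ m ≠ 1 := by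
  rw [q_pow_eq]
  intro h
  have h1 : emb (X ^ m) = emb 1 := by simpa using h
  have := RatFunc.algebraMap_injective ℚ h1
  have h2 := congrArg (fun r => Polynomial.coeff r 0) this
  have h0 : (0:ℕ) = m := by simpa [Polynomial.coeff_X_pow, hm] using h2
  exact hm h0.symm

lemma one_sub_q_pow_ne_zero {m : ℕ} (hm : m ≠ 0) : 1 - q ^ m ≠ 0 := by
  intro h
  exact q_pow_ne_one hm (by linear_combination -h)

/-- the key "local integrality mod [p]^r" predicate; `ζ` is a primitive p-th
root of unity in ℂ used to certify non-divisibility of denominators. -/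
def M (p : ℕ) (ζ : ℂ) (r : ℕ) (A : KK) : Prop :=
  ∃ a b : Polynomial ℚ, (Polynomial.aeval ζ) b ≠ 0 ∧ A * emb b = qInt p ^ r * emb a

section Mlemmas

variable {p : ℕ} {ζ : ℂ}

lemma M_of_eq {r : ℕ} {A B : KK} (h : A = B) (hA : M p ζ r A) : M p ζ r B := h ▸ hA

lemma M_mul {r s : ℕ} {A B : KK} (hA : M p ζ r A) (hB : M p ζ s B) :
    M p ζ (r + s) (A * B) := by
  obtain ⟨a1, b1, h1, e1⟩ := hA
  obtain ⟨a2, b2, h2, e2⟩ := hB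
  refine ⟨a1 * a2, b1 * b2, by simp [h1, h2], ?_⟩
  rw [map_mul, map_mul, pow_add]
  calc A * B * (emb b1 * emb b2) = (A * emb b1) * (B * emb b2) := by ring
    _ = (qInt p ^ r * emb a1) * (qInt p ^ s * emb a2) := by rw [e1, e2]
    _ = qInt p ^ r * qInt p ^ s * (emb a1 * emb a2) := by ring

lemma M_add {r : ℕ} {A B : KK} (hA : M p ζ r A) (hB : M p ζ r B) :
    M p ζ r (A + B) := by
  obtain ⟨a1, b1, h1, e1⟩ := hA
  obtain ⟨a2, b2, h2, e2⟩ := hB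
  refine ⟨a1 * b2 + a2 * b1, b1 * b2, by simp [h1, h2], ?_⟩
  rw [map_mul, map_add, map_mul, map_mul]
  calc (A + B) * (emb b1 * emb b2)
      = (A * emb b1) * emb b2 + (B * emb b2) * emb b1 := by ring
    _ = (qInt p ^ r * emb a1) * emb b2 + (qInt p ^ r * emb a2) * emb b1 := by rw [e1, e2]
    _ = _ := by ring

lemma M_neg {r : ℕ} {A : KK} (hA : M p ζ r A) : M p ζ r (-A) := by
  obtain ⟨a, b, h, e⟩ := hA
  exact ⟨-a, b, h, by rw [map_neg]; linear_combination -e⟩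

lemma M_sub {r : ℕ} {A B : KK} (hA : M p ζ r A) (hB : M p ζ r B) :
    M p ζ r (A - B) := by
  have := M_add hA (M_neg hB)
  simpa [sub_eq_add_neg] using this

lemma M_emb (c : Polynomial ℚ) : M p ζ 0 (emb c) :=
  ⟨c, 1, by simp, by simp⟩

lemma M_one : M p ζ 0 (1 : KK) := by simpa using M_emb (p := p) (ζ := ζ) 1

lemma M_q_pow (m : ℕ) : M p ζ 0 (q ^ m) := by
  rw [q_pow_eq]; exact M_emb _

lemma M_one_sub_q_pow (m : ℕ) : M p ζ 0 (1 - q ^ m) := by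
  have := M_emb (p := p) (ζ := ζ) (1 - X ^ m)
  apply M_of_eq _ this
  rw [map_sub, map_one, ← q_pow_eq]

lemma M_sum {r : ℕ} {ι : Type*} (s : Finset ι) (f : ι → KK)
    (h : ∀ i ∈ s, M p ζ r (f i)) : M p ζ r (∑ i ∈ s, f i) := by
  classical
  induction s using Finset.induction_on with
  | empty => exact ⟨0, 1, by simp, by simp⟩
  | insert _ _ hx ih =>
      rw [Finset.sum_insert hx]
      exact M_add (h _ (Finset.mem_insert_self _ _))
        (ih fun i hi => h i (Finset.mem_insert_of_mem hi))

lemma M_prod {ι : Type*} (s : Finset ι) (f : ι → KK)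
    (h : ∀ i ∈ s, M p ζ 0 (f i)) : M p ζ 0 (∏ i ∈ s, f i) := by
  classical
  induction s using Finset.induction_on with
  | empty => exact M_one
  | insert _ _ hx ih =>
      rw [Finset.prod_insert hx]
      exact M_mul (h _ (Finset.mem_insert_self _ _))
        (ih fun i hi => h i (Finset.mem_insert_of_mem hi))

lemma M_mul20 {A B : KK} (hA : M p ζ 2 A) (hB : M p ζ 0 B) : M p ζ 2 (A * B) :=
  M_mul hA hB

end Mlemmas

section Mzeta

variable {p : ℕ} {ζ : ℂ} (hζ : IsPrimitiveRoot ζ p)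

lemma zeta_ne_zero (hp : p ≠ 0) (hζ : IsPrimitiveRoot ζ p) : ζ ≠ 0 := by
  intro h
  have h1 : ζ ^ p = 1 := hζ.pow_eq_one
  rw [h, zero_pow hp] at h1
  exact zero_ne_one h1

lemma M_q_pow_inv (hp : p ≠ 0) (hζ : IsPrimitiveRoot ζ p) (m : ℕ) :
    M p ζ 0 ((q ^ m)⁻¹) := by
  refine ⟨1, X ^ m, ?_, ?_⟩
  · simpa using pow_ne_zero m (zeta_ne_zero hp hζ)
  · rw [← q_pow_eq]
    simp [inv_mul_cancel₀ (q_pow_ne_zero m)]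

lemma M_one_sub_q_pow_inv (hζ : IsPrimitiveRoot ζ p) {m : ℕ} (hm : m ≠ 0)
    (hpm : ¬ p ∣ m) : M p ζ 0 ((1 - q ^ m)⁻¹) := by
  refine ⟨1, 1 - X ^ m, ?_, ?_⟩
  · intro h
    simp only [map_sub, map_one, map_pow, aeval_X] at h
    have : ζ ^ m = 1 := by linear_combination -h
    exact hpm ((hζ.pow_eq_one_iff_dvd m).mp this)
  · have : emb (1 - X ^ m) = 1 - q ^ m := by rw [map_sub, map_one, ← q_pow_eq]
    rw [this]
    simp [inv_mul_cancel₀ (one_sub_q_pow_ne_zero hm)]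

lemma M_w (hp : p ≠ 0) : M p ζ 1 (1 - q ^ p) := by
  refine ⟨1 - X, 1, by simp, ?_⟩
  have : emb (1 - X) = 1 - q := by rw [map_sub, map_one, ← q_eq]
  rw [map_one, mul_one, pow_one, this, qInt]
  have h2 := geom_sum_mul q p
  linear_combination h2

end Mzeta

end QRV
namespace QRV

/-- `(Q;Q)_a` with `Q = q^2`. -/
noncomputable def P (a : ℕ) : KK := ∏ j ∈ Finset.range a, (1 - q ^ (2*j+2))

lemma P_zero : P 0 = 1 := by simp [P]

lemma P_succ (a : ℕ) : P (a+1) = P a * (1 - q ^ (2*a+2)) := Finset.prod_range_succ _ _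

lemma P_ne_zero (a : ℕ) : P a ≠ 0 := by
  rw [P]
  apply Finset.prod_ne_zero_iff.mpr
  intro j _
  exact one_sub_q_pow_ne_zero (by omega)

lemma P_add (a k : ℕ) : P (a+k) = P a * ∏ j ∈ Finset.range k, (1 - q ^ (2*(a+j)+2)) := by
  induction k with
  | zero => simp
  | succ k ih =>
      rw [show a + (k+1) = (a+k)+1 from rfl, P_succ, ih, Finset.prod_range_succ]
      ring

/-- Gaussian binomial in base `q^2`. -/
noncomputable def qb (a b : ℕ) : KK := if b ≤ a then P a / (P b * P (a-b)) else 0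

lemma qb_zero (a : ℕ) : qb a 0 = 1 := by
  rw [qb, if_pos (Nat.zero_le a)]
  simp [P_zero, div_self (P_ne_zero a)]

lemma qb_self (a : ℕ) : qb a a = 1 := by
  rw [qb, if_pos le_rfl]
  simp [P_zero, div_self (P_ne_zero a)]

lemma qb_eq_zero {a b : ℕ} (h : a < b) : qb a b = 0 := by
  rw [qb, if_neg (by omega)]

lemma qb_symm {a b : ℕ} (h : b ≤ a) : qb a (a - b) = qb a b := by
  rw [qb, qb, if_pos h, if_pos (Nat.sub_le a b), show a - (a-b) = b from by omega]
  ring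

lemma pascal1 (a b : ℕ) (hb : 1 ≤ b) :
    qb (a+1) b = qb a b + q ^ (2*(a+1-b)) * qb a (b-1) := by
  obtain ⟨b', rfl⟩ : ∃ b', b = b' + 1 := ⟨b - 1, by omega⟩
  rcases le_or_gt (b'+1) a with h | h
  · obtain ⟨m, rfl⟩ : ∃ m, a = b' + 1 + m := ⟨a - (b'+1), by omega⟩
    rw [qb, qb, qb, if_pos (by omega), if_pos (by omega), if_pos (by omega)]
    rw [show b'+1+m+1 - (b'+1) = m+1 from by omega, show b'+1+m - (b'+1) = m from by omega,
        show b'+1-1 = b' from by omega, show b'+1+m - b' = m+1 from by omega,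
        show b'+1+m+1 = (b'+1+m)+1 from rfl, P_succ]
    rw [show P (m+1) = P m * (1 - q^(2*m+2)) from P_succ m,
        show P (b'+1) = P b' * (1 - q^(2*b'+2)) from P_succ b']
    have h1 := P_ne_zero (b'+1+m)
    have h2 := P_ne_zero m
    have h3 := P_ne_zero b'
    have h4 := one_sub_q_pow_ne_zero (m := 2*m+2) (by omega)
    have h5 := one_sub_q_pow_ne_zero (m := 2*b'+2) (by omega)
    field_simp
    ring_nf
  · rcases Nat.lt_or_ge a b' with h2 | h2
    · -- b'+1 > a+1 : all zero
      rw [qb_eq_zero (by omega), qb_eq_zero (by omega), qb_eq_zero (by omega)]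
      ring
    · -- a = b'
      have : a = b' := by omega
      subst this
      rw [qb_self, qb_eq_zero (by omega), show a+1-(a+1) = 0 from by omega,
          show a+1-1 = a from by omega, qb_self]
      ring

lemma pascal2 (n j : ℕ) :
    qb (n+1) j = q ^ (2*j) * qb n j + (if j = 0 then 0 else qb n (j-1)) := by
  rcases Nat.eq_zero_or_pos j with rfl | hj
  · simp [qb_zero]
  obtain ⟨j', rfl⟩ : ∃ j', j = j' + 1 := ⟨j - 1, by omega⟩
  rw [if_neg (by omega), show j'+1-1 = j' from by omega]
  rcases le_or_gt (j'+1) n with h | h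
  · obtain ⟨m, rfl⟩ : ∃ m, n = j' + 1 + m := ⟨n - (j'+1), by omega⟩
    rw [qb, qb, qb, if_pos (by omega), if_pos (by omega), if_pos (by omega)]
    rw [show j'+1+m+1 - (j'+1) = m+1 from by omega, show j'+1+m - (j'+1) = m from by omega,
        show j'+1+m - j' = m+1 from by omega,
        show j'+1+m+1 = (j'+1+m)+1 from rfl, P_succ]
    rw [show P (m+1) = P m * (1 - q^(2*m+2)) from P_succ m,
        show P (j'+1) = P j' * (1 - q^(2*j'+2)) from P_succ j']
    have h1 := P_ne_zero (j'+1+m)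
    have h2 := P_ne_zero m
    have h3 := P_ne_zero j'
    have h4 := one_sub_q_pow_ne_zero (m := 2*m+2) (by omega)
    have h5 := one_sub_q_pow_ne_zero (m := 2*j'+2) (by omega)
    field_simp
    ring_nf
  · rcases Nat.lt_or_ge n j' with h2 | h2
    · rw [qb_eq_zero (by omega), qb_eq_zero (by omega), qb_eq_zero (by omega)]
      ring
    · have : n = j' := by omega
      subst this
      rw [qb_self, qb_eq_zero (by omega), qb_self]
      ring

/-- The auxiliary sum for the q-Chu-Vandermonde identity. -/
noncomputable def J (n m : ℕ) : KK :=
  ∑ j ∈ Finset.range (n+1), (-1 : KK)^j * q^(j*(j+1)) * qb n j * qb (m-j) n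

lemma Klemma (n m : ℕ) (hm : n + 1 ≤ m) (hJ : ∀ m', n ≤ m' → J n m' = 1) :
    ∑ j ∈ Finset.range (n+2), (-1 : KK)^j * q^(j*(j-1)) * qb (n+1) j * qb (m-j) n = 0 := by
  have step : ∀ j ∈ Finset.range (n+2),
      (-1 : KK)^j * q^(j*(j-1)) * qb (n+1) j * qb (m-j) n
      = (-1 : KK)^j * q^(j*(j+1)) * qb n j * qb (m-j) n
        + (-1 : KK)^j * q^(j*(j-1)) * (if j = 0 then 0 else qb n (j-1)) * qb (m-j) n := by
    intro j _
    rw [pascal2 n j]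
    rcases Nat.eq_zero_or_pos j with rfl | hj
    · simp
    obtain ⟨j', rfl⟩ : ∃ j', j = j' + 1 := ⟨j - 1, by omega⟩
    have he : (j'+1)*((j'+1)-1) + 2*(j'+1) = (j'+1)*((j'+1)+1) := by
      rw [show (j'+1)-1 = j' from by omega]; ring
    rw [← he, pow_add]
    ring
  rw [Finset.sum_congr rfl step, Finset.sum_add_distrib]
  have hS1 : ∑ j ∈ Finset.range (n+2), (-1 : KK)^j * q^(j*(j+1)) * qb n j * qb (m-j) n
      = 1 := by
    rw [Finset.sum_range_succ, qb_eq_zero (show n < n+1 from by omega)]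
    simp only [mul_zero, zero_mul, add_zero]
    have := hJ m (by omega)
    rw [J] at this
    exact this
  have hS2 : ∑ j ∈ Finset.range (n+2),
      (-1 : KK)^j * q^(j*(j-1)) * (if j = 0 then 0 else qb n (j-1)) * qb (m-j) n
      = -1 := by
    rw [Finset.sum_range_succ']
    have h0 : ((-1 : KK)^0 * q^(0*(0-1)) * (if (0:ℕ) = 0 then 0 else qb n (0-1)) * qb (m-0) n)
        = 0 := by simp
    rw [h0, add_zero]
    have hterm : ∀ j ∈ Finset.range (n+1),
        (-1 : KK)^(j+1) * q^((j+1)*((j+1)-1)) * (if j+1 = 0 then 0 else qb n ((j+1)-1))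
          * qb (m-(j+1)) n
        = -((-1 : KK)^j * q^(j*(j+1)) * qb n j * qb ((m-1)-j) n) := by
      intro j _
      rw [if_neg (by omega), show (j+1)-1 = j from by omega,
          show m - (j+1) = (m-1) - j from by omega, pow_succ,
          show (j+1)*j = j*(j+1) from by ring]
      ring
    rw [Finset.sum_congr rfl hterm, Finset.sum_neg_distrib]
    have := hJ (m-1) (by omega)
    rw [J] at this
    rw [this]
  rw [hS1, hS2]
  ring

lemma Jlemma : ∀ n m, n ≤ m → J n m = 1 := by
  intro n
  induction n with
  | zero =>
      intro m _
      rw [J]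
      simp [qb_zero]
  | succ n ih =>
      intro m hm
      induction m, hm using Nat.le_induction with
      | base =>
          rw [J]
          rw [Finset.sum_eq_single 0]
          · simp [qb_zero, qb_self]
          · intro j _ hj
            rw [qb_eq_zero (show n+1-j < n+1 from by omega)]
            ring
          · intro h
            exact absurd (Finset.mem_range.mpr (by omega)) h
      | succ m hm' ihm =>
          have key : ∀ j ∈ Finset.range (n+2),
              (-1 : KK)^j * q^(j*(j+1)) * qb (n+1) j * qb (m+1-j) (n+1)
              = (-1 : KK)^j * q^(j*(j+1)) * qb (n+1) j * qb (m-j) (n+1)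
                + q^(2*(m-n)) *
                  ((-1 : KK)^j * q^(j*(j-1)) * qb (n+1) j * qb (m-j) n) := by
            intro j hj
            have hjm : j ≤ m := by
              have := Finset.mem_range.mp hj; omega
            rw [show m+1-j = (m-j)+1 from by omega, pascal1 (m-j) (n+1) (by omega),
                show (n+1)-1 = n from by omega]
            rcases le_or_gt n (m-j) with h | h
            · obtain ⟨c, hc⟩ : ∃ c, m - j = n + c := ⟨m - j - n, by omega⟩
              have he1 : (m-j)+1-(n+1) = c := by omega
              have he2 : m - n = j + c := by omega
              have he3 : j*(j+1) + 2*c = 2*(j+c) + j*(j-1) := by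
                rcases Nat.eq_zero_or_pos j with rfl | hjpos
                · simp
                obtain ⟨j', rfl⟩ : ∃ j', j = j' + 1 := ⟨j - 1, by omega⟩
                rw [show (j'+1)-1 = j' from by omega]; ring
              rw [he1, he2]
              have hq : q^(j*(j+1)) * q^(2*c) = q^(2*(j+c)) * q^(j*(j-1)) := by
                rw [← pow_add, ← pow_add, he3]
              rw [mul_add]
              congr 1
              linear_combination ((-1 : KK)^j * qb (n+1) j * qb (m-j) n) * hq
            · rw [qb_eq_zero h]
              ring
          rw [J, Finset.sum_congr rfl key, Finset.sum_add_distrib, ← Finset.mul_sum]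
          rw [Klemma n m (by omega) ih, mul_zero, add_zero]
          rw [← J, ihm]

end QRV
namespace QRV

section Main

variable (p n : ℕ) (ζ : ℂ)

/-- `(q;q²)_k` -/
noncomputable def A (k : ℕ) : KK := ∏ j ∈ Finset.range k, (1 - q ^ (2*j+1))

/-- `(q^{1-p};q²)_k` -/
noncomputable def C (p k : ℕ) : KK := ∏ j ∈ Finset.range k, (1 - q ^ (2*j+1) * (q ^ p)⁻¹)

/-- `(q^{1+p};q²)_k` -/
noncomputable def C' (p k : ℕ) : KK := ∏ j ∈ Finset.range k, (1 - q ^ (2*j+1+p))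

lemma factor_expand (hp : p ≠ 0) (j : ℕ) :
    (1 - q ^ (2*j+1))^2
      = (1 - q ^ (2*j+1) * (q ^ p)⁻¹) * (1 - q ^ (2*j+1+p))
        + (1 - q ^ p)^2 * (q ^ (2*j+1) * (q ^ p)⁻¹) := by
  have h := q_pow_ne_zero p
  field_simp
  ring_nf

lemma M2_w2 (hp : p ≠ 0) : M p ζ 2 ((1 - q ^ p)^2) := by
  have := M_mul (M_w (p := p) (ζ := ζ) hp) (M_w (p := p) (ζ := ζ) hp)
  apply M_of_eq _ this
  ring

lemma M0_w2 : M p ζ 0 ((1 - q ^ p)^2) := by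
  have := M_mul (M_one_sub_q_pow (p := p) (ζ := ζ) p) (M_one_sub_q_pow (p := p) (ζ := ζ) p)
  apply M_of_eq _ this
  ring

lemma M2_prod_approx (hp : p ≠ 0) (x g : ℕ → KK) (k : ℕ)
    (hx : ∀ j, M p ζ 0 (x j)) (hg : ∀ j, M p ζ 0 (g j)) :
    M p ζ 2 ((∏ j ∈ Finset.range k, (x j + (1 - q ^ p)^2 * g j)) - ∏ j ∈ Finset.range k, x j) := by
  induction k with
  | zero => exact ⟨0, 1, by simp, by simp⟩
  | succ k ih =>
      rw [Finset.prod_range_succ, Finset.prod_range_succ]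
      have key : (∏ j ∈ Finset.range k, (x j + (1 - q ^ p)^2 * g j)) * (x k + (1 - q ^ p)^2 * g k)
          - (∏ j ∈ Finset.range k, x j) * x k
          = ((∏ j ∈ Finset.range k, (x j + (1 - q ^ p)^2 * g j)) - ∏ j ∈ Finset.range k, x j) * x k
            + ((∏ j ∈ Finset.range k, (x j + (1 - q ^ p)^2 * g j)) * g k) * (1 - q ^ p)^2 := by
        ring
      rw [key]
      apply M_add
      · exact M_mul20 ih (hx k)
      · have h0 : M p ζ 0 ((∏ j ∈ Finset.range k, (x j + (1 - q ^ p)^2 * g j)) * g k) := by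
          apply M_mul (r := 0) (s := 0)
          · apply M_prod
            intro i _
            exact M_add (hx i) (M_mul (r := 0) (s := 0) (M0_w2 p ζ) (hg i))
          · exact hg k
        have := M_mul (r := 0) (s := 2) h0 (M2_w2 p ζ hp)
        exact M_of_eq rfl this

lemma M0_C (k : ℕ) (hp : p ≠ 0) (hζ : IsPrimitiveRoot ζ p) : M p ζ 0 (C p k) := by
  apply M_prod
  intro j _
  exact M_sub M_one (M_mul (r := 0) (s := 0) (M_q_pow _) (M_q_pow_inv hp hζ p))

lemma M2_main (hp : p ≠ 0) (hζ : IsPrimitiveRoot ζ p) (k : ℕ) :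
    M p ζ 2 ((A k)^2 - C p k * C' p k) := by
  have hA2 : (A k)^2 = ∏ j ∈ Finset.range k,
      ((1 - q ^ (2*j+1) * (q ^ p)⁻¹) * (1 - q ^ (2*j+1+p))
        + (1 - q ^ p)^2 * (q ^ (2*j+1) * (q ^ p)⁻¹)) := by
    rw [A, ← Finset.prod_pow]
    exact Finset.prod_congr rfl fun j _ => factor_expand p hp j
  have hCC : C p k * C' p k = ∏ j ∈ Finset.range k,
      ((1 - q ^ (2*j+1) * (q ^ p)⁻¹) * (1 - q ^ (2*j+1+p))) := by
    rw [C, C', ← Finset.prod_mul_distrib]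
  rw [hA2, hCC]
  apply M2_prod_approx p ζ hp
  · intro j
    exact M_mul (r := 0) (s := 0)
      (M_sub M_one (M_mul (r := 0) (s := 0) (M_q_pow _) (M_q_pow_inv hp hζ p)))
      (M_one_sub_q_pow _)
  · intro j
    exact M_mul (r := 0) (s := 0) (M_q_pow _) (M_q_pow_inv hp hζ p)

lemma M0_Pinv (hpn : p = 2*n+1) (hζ : IsPrimitiveRoot ζ p) {k : ℕ} (hk : k < p) :
    M p ζ 0 ((P k)⁻¹) := by
  rw [P, ← Finset.prod_inv_distrib]
  apply M_prod
  intro j hj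
  have hjk : j < k := Finset.mem_range.mp hj
  apply M_one_sub_q_pow_inv hζ (by omega)
  intro hdvd
  have h2 : 2*j+2 = p := Nat.eq_of_dvd_of_lt_two_mul (by omega) hdvd (by omega)
  omega

/-- termwise congruence, all `k < p`. -/
lemma M2_term (hpn : p = 2*n+1) (hζ : IsPrimitiveRoot ζ p) {k : ℕ} (hk : k < p) :
    M p ζ 2 ((A k)^2 / (P k)^2 - C p k * C' p k / (P k)^2) := by
  have hp : p ≠ 0 := by omega
  have heq : (A k)^2 / (P k)^2 - C p k * C' p k / (P k)^2
      = ((A k)^2 - C p k * C' p k) * ((P k)⁻¹ * (P k)⁻¹) := by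
    field_simp
  rw [heq]
  have h0 : M p ζ 0 ((P k)⁻¹ * (P k)⁻¹) :=
    M_mul (r := 0) (s := 0) (M0_Pinv p n ζ hpn hζ hk) (M0_Pinv p n ζ hpn hζ hk)
  exact M_mul20 (M2_main p ζ hp hζ k) h0

lemma C_eq_zero (hpn : p = 2*n+1) {k : ℕ} (hk : n < k) : C p k = 0 := by
  rw [C]
  apply Finset.prod_eq_zero (Finset.mem_range.mpr hk)
  rw [show 2*n+1 = p from by omega]
  rw [mul_inv_cancel₀ (q_pow_ne_zero p)]
  ring

lemma sum_two_mul_sub {k : ℕ} (hk : k ≤ n) :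
    ∑ j ∈ Finset.range k, 2*(n-j) = k*(2*n+1-k) := by
  induction k with
  | zero => simp
  | succ k ih =>
      rw [Finset.sum_range_succ, ih (by omega)]
      obtain ⟨c, rfl⟩ : ∃ c, n = k + c := ⟨n - k, by omega⟩
      rw [show 2*(k+c)+1-k = k+2*c+1 from by omega, show 2*(k+c)+1-(k+1) = k + 2*c from by omega,
          show k+c-k = c from by omega]
      ring

lemma C'_closed (hpn : p = 2*n+1) (k : ℕ) : C' p k = P (n+k) / P n := by
  rw [C', P_add n k, eq_div_iff (P_ne_zero n), mul_comm]
  congr 1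
  apply Finset.prod_congr rfl
  intro j _
  rw [show 2*j+1+p = 2*(n+j)+2 from by omega]

lemma C_closed (hpn : p = 2*n+1) {k : ℕ} (hk : k ≤ n) :
    C p k = (-1 : KK)^k * (q ^ (k*(2*n+1-k)))⁻¹ * (P n / P (n-k)) := by
  have hfac : ∀ j ∈ Finset.range k,
      1 - q ^ (2*j+1) * (q ^ p)⁻¹ = -(q ^ (2*(n-j)))⁻¹ * (1 - q ^ (2*(n-j))) := by
    intro j hj
    have hjk : j < k := Finset.mem_range.mp hj
    have hab : q ^ (2*j+1) * q ^ (2*(n-j)) = q ^ p := by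
      rw [← pow_add]
      congr 1
      omega
    have h1 := q_pow_ne_zero (2*(n-j))
    have h2 := q_pow_ne_zero p
    have h3 := q_pow_ne_zero (2*j+1)
    field_simp
    linear_combination -hab
  rw [C, Finset.prod_congr rfl hfac, Finset.prod_mul_distrib]
  have h1 : ∏ j ∈ Finset.range k, -(q ^ (2*(n-j)))⁻¹
      = (-1 : KK)^k * (q ^ (k*(2*n+1-k)))⁻¹ := by
    have step1 : ∀ j ∈ Finset.range k, -(q ^ (2*(n-j)))⁻¹ = (-1 : KK) * (q ^ (2*(n-j)))⁻¹ :=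
      fun j _ => by ring
    rw [Finset.prod_congr rfl step1, Finset.prod_mul_distrib, Finset.prod_const,
        Finset.card_range, Finset.prod_inv_distrib, Finset.prod_pow_eq_pow_sum,
        sum_two_mul_sub n hk]
  have h2 : ∏ j ∈ Finset.range k, (1 - q ^ (2*(n-j))) = P n / P (n-k) := by
    have refl1 : ∏ j ∈ Finset.range k, (1 - q ^ (2*(n-j)))
        = ∏ j ∈ Finset.range k, (1 - q ^ (2*((n-k)+j)+2)) := by
      rw [← Finset.prod_range_reflect (fun j => (1 - q ^ (2*(n-j)))) k]
      apply Finset.prod_congr rfl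
      intro j hj
      have hjk : j < k := Finset.mem_range.mp hj
      rw [show 2*(n-(k-1-j)) = 2*((n-k)+j)+2 from by omega]
    rw [refl1, eq_div_iff (P_ne_zero (n-k))]
    have := P_add (n-k) k
    rw [show (n-k)+k = n from by omega] at this
    rw [this]
    ring
  rw [h1, h2]

end Main

end QRV
namespace QRV

section Main2

variable (p n : ℕ)

lemma Bterm_closed (hpn : p = 2*n+1) {k : ℕ} (hk : k ≤ n) :
    C p k * C' p k / (P k)^2
      = (-1 : KK)^k * (q ^ (k*(2*n+1-k)))⁻¹ * qb (n+k) k * qb n k := by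
  rw [C_closed p n hpn hk, C'_closed p n hpn k, qb, qb, if_pos (by omega : k ≤ n+k),
      if_pos hk, show n+k-k = n from by omega]
  have h1 := P_ne_zero n
  have h2 := P_ne_zero (n-k)
  have h3 := P_ne_zero (n+k)
  have h4 := P_ne_zero k
  have h5 := q_pow_ne_zero (k*(2*n+1-k))
  field_simp

lemma IDENT (hpn : p = 2*n+1) :
    ∑ k ∈ Finset.range (n+1), C p k * C' p k / (P k)^2
      = (-1 : KK)^n * (q ^ (n*(n+1)))⁻¹ := by
  have step1 : ∀ k ∈ Finset.range (n+1),
      C p k * C' p k / (P k)^2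
        = (-1 : KK)^k * (q ^ (k*(2*n+1-k)))⁻¹ * qb (n+k) k * qb n k := by
    intro k hk
    exact Bterm_closed p n hpn (by have := Finset.mem_range.mp hk; omega)
  rw [Finset.sum_congr rfl step1]
  rw [← Finset.sum_range_reflect]
  have step2 : ∀ j ∈ Finset.range (n+1),
      (-1 : KK)^(n+1-1-j) * (q ^ ((n+1-1-j)*(2*n+1-(n+1-1-j))))⁻¹
          * qb (n+(n+1-1-j)) (n+1-1-j) * qb n (n+1-1-j)
      = ((-1 : KK)^n * (q ^ (n*(n+1)))⁻¹)
          * ((-1 : KK)^j * q^(j*(j+1)) * qb n j * qb (2*n-j) n) := by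
    intro j hj
    have hjn : j ≤ n := by have := Finset.mem_range.mp hj; omega
    rw [show n+1-1-j = n-j from by omega]
    rw [show 2*n+1-(n-j) = n+j+1 from by omega]
    rw [show n+(n-j) = 2*n-j from by omega]
    have e1 : qb (2*n-j) (n-j) = qb (2*n-j) n := by
      have := qb_symm (a := 2*n-j) (b := n) (by omega)
      rw [show 2*n-j-n = n-j from by omega] at this
      exact this
    have e2 : qb n (n-j) = qb n j := qb_symm hjn
    have e3 : (-1 : KK)^(n-j) = (-1)^n * (-1)^j := by
      rw [show n = (n-j)+j from by omega, pow_add, mul_assoc, ← pow_add,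
          show j+j = 2*j from by ring, pow_mul]
      norm_num
    have e4 : (q ^ ((n-j)*(n+j+1)))⁻¹ = (q ^ (n*(n+1)))⁻¹ * q^(j*(j+1)) := by
      have hpow : q^(n*(n+1)) = q^((n-j)*(n+j+1)) * q^(j*(j+1)) := by
        rw [← pow_add]
        congr 1
        obtain ⟨c, rfl⟩ : ∃ c, n = j + c := ⟨n - j, by omega⟩
        rw [show j+c-j = c from by omega]
        ring
      rw [hpow, mul_inv, mul_assoc, inv_mul_cancel₀ (q_pow_ne_zero (j*(j+1))), mul_one]
    rw [e1, e2, e3, e4]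
    ring
  rw [Finset.sum_congr rfl step2, ← Finset.mul_sum]
  have hJ := Jlemma n (2*n) (by omega)
  rw [J] at hJ
  rw [hJ, mul_one]

end Main2

end QRV
namespace QRV

lemma aeval_geom_zero {p : ℕ} {ζ : ℂ} (hζ : IsPrimitiveRoot ζ p) (hp : 1 < p) :
    (Polynomial.aeval ζ) (∑ i ∈ Finset.range p, (Polynomial.X : Polynomial ℚ) ^ i) = 0 := by
  rw [map_sum]
  simp only [map_pow, Polynomial.aeval_X]
  rw [geom_sum_eq (hζ.ne_one hp) p, hζ.pow_eq_one]
  simp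

end QRV


/-- `∑_{k=0}^{p-1} (q;q²)_k² / (q²;q²)_k² ≡ (-1/p) q^{(1-p²)/4} (mod [p]²)`. -/
theorem q_rv_supercongruence (p : ℕ) [Fact p.Prime] (hodd : Odd p) :
    ModQ 2 p
      (∑ k ∈ Finset.range p, qPoch q (q ^ 2) k ^ 2 / qPoch (q ^ 2) (q ^ 2) k ^ 2)
      ((legendreSym p (-1) : RatFunc ℚ) * (q ^ ((p ^ 2 - 1) / 4))⁻¹) := by
  obtain ⟨n, hn⟩ := hodd
  have hpn : p = 2*n+1 := by omega
  have hp2 : (2 : ℕ) ≤ p := (Fact.out : p.Prime).two_le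
  have hp1 : 1 < p := hp2
  have hp0 : p ≠ 0 := by omega
  have hne2 : p ≠ 2 := by omega
  set ζ : ℂ := Complex.exp (2 * Real.pi * Complex.I / p) with hζdef
  have hζ : IsPrimitiveRoot ζ p := Complex.isPrimitiveRoot_exp p hp0
  -- rewrite the sum
  have hsum : ∑ k ∈ Finset.range p, qPoch q (q ^ 2) k ^ 2 / qPoch (q ^ 2) (q ^ 2) k ^ 2
      = ∑ k ∈ Finset.range p, (QRV.A k)^2 / (QRV.P k)^2 := by
    apply Finset.sum_congr rfl
    intro k _
    have h1 : qPoch q (q ^ 2) k = QRV.A k := by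
      rw [qPoch, QRV.A]
      exact Finset.prod_congr rfl fun i _ => by ring
    have h2 : qPoch (q ^ 2) (q ^ 2) k = QRV.P k := by
      rw [qPoch, QRV.P]
      exact Finset.prod_congr rfl fun i _ => by ring
    rw [h1, h2]
  -- the target equals the exact sum of model terms
  have hleg : ((legendreSym p (-1) : ℤ) : RatFunc ℚ) = (-1 : RatFunc ℚ)^n := by
    rw [legendreSym.at_neg_one hne2, ZMod.χ₄_eq_neg_one_pow (by omega : p % 2 = 1),
        show p / 2 = n from by omega]
    push_cast
    ring
  have hexp : (p^2 - 1)/4 = n*(n+1) := by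
    have hsq : p^2 = 4*(n*(n+1)) + 1 := by rw [hpn]; ring
    omega
  have hT : (legendreSym p (-1) : RatFunc ℚ) * (q ^ ((p ^ 2 - 1) / 4))⁻¹
      = ∑ k ∈ Finset.range p, QRV.C p k * QRV.C' p k / (QRV.P k)^2 := by
    have hsub : ∑ k ∈ Finset.range (n+1), QRV.C p k * QRV.C' p k / (QRV.P k)^2
        = ∑ k ∈ Finset.range p, QRV.C p k * QRV.C' p k / (QRV.P k)^2 := by
      apply Finset.sum_subset
      · intro x hx
        rw [Finset.mem_range] at *
        omega
      · intro k _ hk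
        rw [Finset.mem_range, not_lt] at hk
        rw [QRV.C_eq_zero p n hpn (by omega), zero_mul, zero_div]
    rw [← hsub, QRV.IDENT p n hpn, hleg, hexp]
  rw [hsum, hT]
  -- now apply termwise congruence
  have hM : QRV.M p ζ 2
      ((∑ k ∈ Finset.range p, (QRV.A k)^2 / (QRV.P k)^2)
        - ∑ k ∈ Finset.range p, QRV.C p k * QRV.C' p k / (QRV.P k)^2) := by
    rw [← Finset.sum_sub_distrib]
    apply QRV.M_sum
    intro k hk
    exact QRV.M2_term p n ζ hpn hζ (Finset.mem_range.mp hk)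
  obtain ⟨a, b, hb, heq⟩ := hM
  refine ⟨a, b, ?_, heq⟩
  intro hdvd
  obtain ⟨c, hc⟩ := hdvd
  apply hb
  rw [hc, map_mul, QRV.aeval_geom_zero hζ hp1, zero_mul]
end

section
/- Let p ≡ 3 (mod 4) be a prime. Then ∑_{k=0}^{p-1} binom(2k,k)^2 / 32^k ≡ 0 (mod p^2). -/
open Nat Finset

-- trinomial identity
lemma choose_trinomial (a b c : ℕ) :
    (a+b+c).choose (a+b) * (a+b).choose a = (a+b+c).choose a * (b+c).choose b := by
  have h1 : (a+b+c).choose (a+b) * (a+b).choose a * (a ! * b ! * c !) = (a+b+c)! := by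
    have e1 : (a+b).choose a * a ! * b ! = (a+b)! := by
      have := Nat.choose_mul_factorial_mul_factorial (Nat.le_add_right a b)
      simpa [Nat.add_sub_cancel_left] using this
    have e2 : (a+b+c).choose (a+b) * (a+b)! * c ! = (a+b+c)! := by
      have := Nat.choose_mul_factorial_mul_factorial (Nat.le_add_right (a+b) c)
      simpa [Nat.add_sub_cancel_left] using this
    calc (a+b+c).choose (a+b) * (a+b).choose a * (a ! * b ! * c !)
        = (a+b+c).choose (a+b) * ((a+b).choose a * a ! * b !) * c ! := by ring
      _ = (a+b+c).choose (a+b) * (a+b)! * c ! := by rw [e1]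
      _ = (a+b+c)! := e2
  have h2 : (a+b+c).choose a * (b+c).choose b * (a ! * b ! * c !) = (a+b+c)! := by
    have e1 : (b+c).choose b * b ! * c ! = (b+c)! := by
      have := Nat.choose_mul_factorial_mul_factorial (Nat.le_add_right b c)
      simpa [Nat.add_sub_cancel_left] using this
    have e2 : (a+b+c).choose a * a ! * (b+c)! = (a+b+c)! := by
      have h' : a ≤ a + b + c := by omega
      have := Nat.choose_mul_factorial_mul_factorial h'
      have hs : a + b + c - a = b + c := by omega
      rwa [hs] at this
    calc (a+b+c).choose a * (b+c).choose b * (a ! * b ! * c !)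
        = (a+b+c).choose a * a ! * ((b+c).choose b * b ! * c !) := by ring
      _ = (a+b+c).choose a * a ! * (b+c)! := by rw [e1]
      _ = (a+b+c)! := e2
  have hpos : 0 < a ! * b ! * c ! := by positivity
  exact Nat.eq_of_mul_eq_mul_right hpos (h1.trans h2.symm)

lemma binom_one (n : ℕ) :
    ∑ i ∈ range (n+1), (-1:ℤ)^i * 2^(n-i) * (n.choose i) = 1 := by
  have := add_pow (-1 : ℤ) 2 n
  norm_num at this
  exact this.symm

lemma alt_sq (m : ℕ) (hm : Odd m) :
    ∑ j ∈ range (m+1), (-1:ℤ)^j * (m.choose j)^2 = 0 := by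
  have hrefl := Finset.sum_range_reflect (fun j => (-1:ℤ)^j * (m.choose j)^2) (m+1)
  have key : ∀ j ∈ range (m+1),
      (-1:ℤ)^(m + 1 - 1 - j) * ((m.choose (m + 1 - 1 - j)):ℤ)^2
        = -((-1:ℤ)^j * (m.choose j)^2) := by
    intro j hj
    rw [mem_range] at hj
    have hjm : j ≤ m := by omega
    have h1 : m + 1 - 1 - j = m - j := by omega
    rw [h1, Nat.choose_symm hjm]
    have h2 : (-1:ℤ)^(m-j) = -(-1:ℤ)^j := by
      have : (-1:ℤ)^(m-j) * (-1:ℤ)^j = (-1:ℤ)^m := by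
        rw [← pow_add]; congr 1; omega
      have hm' : (-1:ℤ)^m = -1 := hm.neg_one_pow
      have hsq : (-1:ℤ)^j * (-1:ℤ)^j = 1 := by
        rw [← pow_add, Even.neg_one_pow ⟨j, rfl⟩]
      rw [hm'] at this
      linear_combination (-1:ℤ)^j * this - (-1:ℤ)^(m-j) * hsq
    rw [h2]; ring
  rw [Finset.sum_congr rfl key, Finset.sum_neg_distrib] at hrefl
  linarith [hrefl]

lemma vand (m k : ℕ) (hk : k ≤ m) :
    ((m+k).choose k : ℤ) = ∑ j ∈ range (m+1), (m.choose j : ℤ) * (k.choose j : ℤ) := by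
  have h := Nat.add_choose_eq m k k
  rw [Finset.Nat.sum_antidiagonal_eq_sum_range_succ_mk] at h
  have h2 : ∑ j ∈ range (k+1), m.choose j * k.choose (k - j)
      = ∑ j ∈ range (k+1), m.choose j * k.choose j := by
    refine Finset.sum_congr rfl fun j hj => ?_
    rw [mem_range] at hj
    rw [Nat.choose_symm (show j ≤ k by omega)]
  have h3 : ∑ j ∈ range (k+1), m.choose j * k.choose j
      = ∑ j ∈ range (m+1), m.choose j * k.choose j := by
    refine Finset.sum_subset (Finset.range_subset_range.2 (by omega)) fun j _ hj => ?_
    rw [mem_range] at hj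
    rw [Nat.choose_eq_zero_of_lt (show k < j by omega)]
    ring
  rw [h, h2, h3]
  push_cast
  rfl

lemma innerAuxSum (m j : ℕ) (hj : j ≤ m) :
    ∑ k ∈ range (m+1), (-1:ℤ)^k * 2^(m-k) * (m.choose k) * (k.choose j)
      = (-1:ℤ)^j * (m.choose j) := by
  set f : ℕ → ℤ := fun k => (-1:ℤ)^k * 2^(m-k) * (m.choose k) * (k.choose j) with hf
  have hsplit : ∑ k ∈ range j, f k + ∑ k ∈ Finset.Ico j (m+1), f k
      = ∑ k ∈ range (m+1), f k := Finset.sum_range_add_sum_Ico f (by omega)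
  have h0 : ∑ k ∈ range j, f k = 0 := by
    refine Finset.sum_eq_zero fun k hk => ?_
    rw [mem_range] at hk
    simp [hf, Nat.choose_eq_zero_of_lt hk]
  have hIco : ∑ k ∈ Finset.Ico j (m+1), f k
      = ∑ i ∈ range (m+1-j), f (j+i) := Finset.sum_Ico_eq_sum_range f j (m+1)
  have hlen : m + 1 - j = (m - j) + 1 := by omega
  have hterm : ∀ i ∈ range ((m-j)+1),
      f (j+i) = ((-1:ℤ)^j * (m.choose j)) * ((-1:ℤ)^i * 2^((m-j)-i) * ((m-j).choose i)) := by
    intro i hi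
    rw [mem_range] at hi
    have hij : j + i ≤ m := by omega
    have htri : m.choose (j+i) * (j+i).choose j = m.choose j * (m-j).choose i := by
      have hc : m = j + i + (m - j - i) := by omega
      have := choose_trinomial j i (m - j - i)
      rw [← hc] at this
      have hbc : i + (m - j - i) = m - j := by omega
      rwa [hbc] at this
    have hsub : m - (j+i) = (m-j) - i := by omega
    have hcast : ((m.choose (j+i)):ℤ) * ((j+i).choose j)
        = (m.choose j : ℤ) * ((m-j).choose i) := by exact_mod_cast congrArg (Nat.cast (R := ℤ)) htri
    calc f (j+i) = (-1:ℤ)^(j+i) * 2^(m-(j+i)) * (((m.choose (j+i)):ℤ) * ((j+i).choose j)) := by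
          rw [hf]; ring
      _ = (-1:ℤ)^(j+i) * 2^((m-j)-i) * ((m.choose j : ℤ) * ((m-j).choose i)) := by
          rw [hsub, hcast]
      _ = ((-1:ℤ)^j * (m.choose j)) * ((-1:ℤ)^i * 2^((m-j)-i) * ((m-j).choose i)) := by
          rw [pow_add]; ring
  rw [← hsplit, h0, zero_add, hIco, hlen, Finset.sum_congr rfl hterm, ← Finset.mul_sum,
    binom_one, mul_one]

lemma legendre_zero (m : ℕ) (hm : Odd m) :
    ∑ k ∈ range (m+1), (-1:ℤ)^k * 2^(m-k) * (m.choose k) * ((m+k).choose k) = 0 := by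
  have step1 : ∑ k ∈ range (m+1), (-1:ℤ)^k * 2^(m-k) * (m.choose k) * ((m+k).choose k)
      = ∑ k ∈ range (m+1), ∑ j ∈ range (m+1),
          (-1:ℤ)^k * 2^(m-k) * (m.choose k) * ((m.choose j : ℤ) * (k.choose j)) := by
    refine Finset.sum_congr rfl fun k hk => ?_
    rw [mem_range] at hk
    rw [vand m k (by omega), Finset.mul_sum]
  rw [step1, Finset.sum_comm]
  have step2 : ∀ j ∈ range (m+1),
      ∑ k ∈ range (m+1), (-1:ℤ)^k * 2^(m-k) * (m.choose k) * ((m.choose j : ℤ) * (k.choose j))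
        = (-1:ℤ)^j * ((m.choose j : ℤ))^2 := by
    intro j hj
    rw [mem_range] at hj
    have : ∑ k ∈ range (m+1), (-1:ℤ)^k * 2^(m-k) * (m.choose k) * ((m.choose j : ℤ) * (k.choose j))
        = (m.choose j : ℤ) * ∑ k ∈ range (m+1), (-1:ℤ)^k * 2^(m-k) * (m.choose k) * (k.choose j) := by
      rw [Finset.mul_sum]
      exact Finset.sum_congr rfl fun k _ => by ring
    rw [this, innerAuxSum m j (by omega)]
    ring
  rw [Finset.sum_congr rfl step2]
  exact alt_sq m hm

lemma centralBinom_fact (k : ℕ) :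
    (2*k).choose k * k ! = 2^k * ∏ j ∈ range k, (2*j+1) := by
  induction k with
  | zero => simp
  | succ n ih =>
    have h := Nat.succ_mul_centralBinom_succ n
    have hcb : ∀ x, Nat.centralBinom x = (2*x).choose x := fun x => rfl
    rw [hcb, hcb] at h
    calc (2*(n+1)).choose (n+1) * (n+1)!
        = ((n+1) * (2*(n+1)).choose (n+1)) * n ! := by
          rw [Nat.factorial_succ]; ring
      _ = (2 * (2*n+1) * (2*n).choose n) * n ! := by rw [h]
      _ = 2 * (2*n+1) * ((2*n).choose n * n !) := by ring
      _ = 2 * (2*n+1) * (2^n * ∏ j ∈ range n, (2*j+1)) := by rw [ih]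
      _ = 2^(n+1) * ((∏ j ∈ range n, (2*j+1)) * (2*n+1)) := by ring
      _ = 2^(n+1) * ∏ j ∈ range (n+1), (2*j+1) := by rw [Finset.prod_range_succ]

lemma choose_prod_eq (m : ℕ) : ∀ k, k ≤ m →
    m.choose k * (m+k).choose k * (k ! * k !) = ∏ j ∈ range k, ((m-j)*(m+j+1)) := by
  intro k
  induction k with
  | zero => simp
  | succ n ih =>
    intro hn
    have ihn := ih (by omega)
    have e1 : m.choose (n+1) * (n+1) = m.choose n * (m - n) := Nat.choose_succ_right_eq m n
    have e2 : (m+n+1) * (m+n).choose n = (m+n+1).choose (n+1) * (n+1) :=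
      Nat.add_one_mul_choose_eq (m+n) n
    have hmn : m + (n+1) = (m+n)+1 := by omega
    calc m.choose (n+1) * (m+(n+1)).choose (n+1) * ((n+1)! * (n+1)!)
        = (m.choose (n+1) * (n+1)) * ((m+n+1).choose (n+1) * (n+1)) * (n ! * n !) := by
          rw [hmn, Nat.factorial_succ]; ring
      _ = (m.choose n * (m-n)) * ((m+n+1) * (m+n).choose n) * (n ! * n !) := by
          rw [e1, ← e2]
      _ = (m.choose n * (m+n).choose n * (n ! * n !)) * ((m-n)*(m+n+1)) := by ring
      _ = (∏ j ∈ range n, ((m-j)*(m+j+1))) * ((m-n)*(m+n+1)) := by rw [ihn]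
      _ = ∏ j ∈ range (n+1), ((m-j)*(m+j+1)) := by rw [Finset.prod_range_succ]


/-- For a prime `p ≡ 3 (mod 4)`,
`∑_{k=0}^{p-1} C(2k,k)^2 / 32^k ≡ 0 (mod p^2)`, stated in `ZMod (p^2)`. -/
theorem sum_central_binom_32 (p : ℕ) (hp : p.Prime) (h3 : p % 4 = 3) :
    ∑ k ∈ Finset.range p,
        ((Nat.choose (2 * k) k : ZMod (p ^ 2)) ^ 2 * ((32 : ZMod (p ^ 2))⁻¹) ^ k)
      = 0 := by
  set m := p / 2 with hm
  have hpm : p = 2 * m + 1 := by omega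
  have hmodd : Odd m := ⟨p / 4, by omega⟩
  have hpodd : Odd p := Nat.odd_iff.2 (by omega)
  have hcop2 : Nat.Coprime 2 (p^2) := Nat.coprime_two_left.2 hpodd.pow
  have h2u : IsUnit (2 : ZMod (p^2)) := by
    have := (ZMod.isUnit_iff_coprime 2 (p^2)).2 hcop2
    simpa using this
  have h32u : IsUnit (32 : ZMod (p^2)) := by
    have hc : Nat.Coprime 32 (p^2) := by
      have h32 : (32:ℕ) = 2^5 := by norm_num
      rw [h32]
      exact Nat.Coprime.pow_left 5 hcop2
    have := (ZMod.isUnit_iff_coprime 32 (p^2)).2 hc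
    simpa using this
  have hp2z : ((p : ZMod (p^2)))^2 = 0 := by
    have h := ZMod.natCast_self (p^2)
    push_cast at h
    exact h
  have hpz : (2 * (m : ZMod (p^2)) + 1)^2 = 0 := by
    have hcp : ((p:ℕ) : ZMod (p^2)) = 2 * (m : ZMod (p^2)) + 1 := by
      rw [hpm]; push_cast; ring
    rw [← hcp]; exact hp2z
  have hfactu : ∀ k, k < p → IsUnit ((k ! : ℕ) : ZMod (p^2)) := by
    intro k hk
    rw [ZMod.isUnit_iff_coprime]
    have hnd : ¬ p ∣ k ! := by
      intro hd
      have := (Nat.Prime.dvd_factorial hp).1 hd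
      omega
    exact Nat.Coprime.pow_right 2 ((hp.coprime_iff_not_dvd.2 hnd).symm)
  have hkey : ∀ k, k ≤ m → (16 : ZMod (p^2))^k * (m.choose k) * ((m+k).choose k)
      = (-1)^k * ((2*k).choose k : ZMod (p^2))^2 := by
    intro k hk
    have hP1 : ((2*k).choose k : ZMod (p^2)) * ((k ! : ℕ) : ZMod (p^2))
        = 2^k * ∏ j ∈ range k, ((2*j+1 : ℕ) : ZMod (p^2)) := by
      have h := congrArg (Nat.cast : ℕ → ZMod (p^2)) (centralBinom_fact k)
      rw [Nat.cast_mul, Nat.cast_mul, Nat.cast_pow, Nat.cast_prod, Nat.cast_two] at h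
      exact h
    have hP2 : ((m.choose k : ZMod (p^2)) * ((m+k).choose k : ZMod (p^2)))
          * (((k ! : ℕ) : ZMod (p^2)) * ((k ! : ℕ) : ZMod (p^2)))
        = ∏ j ∈ range k, (((m-j)*(m+j+1) : ℕ) : ZMod (p^2)) := by
      have h := congrArg (Nat.cast : ℕ → ZMod (p^2)) (choose_prod_eq m k hk)
      rw [Nat.cast_mul, Nat.cast_mul, Nat.cast_mul, Nat.cast_prod] at h
      linear_combination h
    have hfac : ∀ j ∈ range k, (4 : ZMod (p^2)) * (((m-j)*(m+j+1) : ℕ) : ZMod (p^2))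
        = (-1) * (((2*j+1 : ℕ)) : ZMod (p^2))^2 := by
      intro j hj
      rw [mem_range] at hj
      have hjm : j ≤ m := by omega
      push_cast [Nat.cast_sub hjm]
      linear_combination hpz
    have hprod4 : (4 : ZMod (p^2))^k * ∏ j ∈ range k, (((m-j)*(m+j+1) : ℕ) : ZMod (p^2))
        = (-1)^k * (∏ j ∈ range k, ((2*j+1 : ℕ) : ZMod (p^2)))^2 := by
      calc (4 : ZMod (p^2))^k * ∏ j ∈ range k, (((m-j)*(m+j+1) : ℕ) : ZMod (p^2))
          = ∏ j ∈ range k, ((4:ZMod (p^2)) * (((m-j)*(m+j+1) : ℕ) : ZMod (p^2))) := by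
            rw [Finset.prod_mul_distrib, Finset.prod_const, Finset.card_range]
        _ = ∏ j ∈ range k, ((-1 : ZMod (p^2)) * (((2*j+1 : ℕ)) : ZMod (p^2))^2) :=
            Finset.prod_congr rfl hfac
        _ = (-1)^k * (∏ j ∈ range k, ((2*j+1 : ℕ) : ZMod (p^2)))^2 := by
            rw [Finset.prod_mul_distrib, Finset.prod_const, Finset.card_range, Finset.prod_pow]
    have hker : ((16 : ZMod (p^2))^k * (m.choose k) * ((m+k).choose k))
          * (((k ! : ℕ) : ZMod (p^2)) * ((k ! : ℕ) : ZMod (p^2)))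
        = ((-1)^k * ((2*k).choose k : ZMod (p^2))^2)
          * (((k ! : ℕ) : ZMod (p^2)) * ((k ! : ℕ) : ZMod (p^2))) := by
      calc ((16 : ZMod (p^2))^k * (m.choose k) * ((m+k).choose k))
            * (((k ! : ℕ) : ZMod (p^2)) * ((k ! : ℕ) : ZMod (p^2)))
          = (4:ZMod (p^2))^k * ((4:ZMod (p^2))^k
              * (((m.choose k : ZMod (p^2)) * ((m+k).choose k : ZMod (p^2)))
                  * (((k ! : ℕ) : ZMod (p^2)) * ((k ! : ℕ) : ZMod (p^2))))) := by
            have h16 : (16 : ZMod (p^2)) = 4 * 4 := by norm_num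
            rw [h16, mul_pow]; ring
        _ = (4:ZMod (p^2))^k * ((-1)^k * (∏ j ∈ range k, ((2*j+1 : ℕ) : ZMod (p^2)))^2) := by
            rw [hP2, hprod4]
        _ = (-1)^k * ((2:ZMod (p^2))^k * ∏ j ∈ range k, ((2*j+1 : ℕ) : ZMod (p^2)))^2 := by
            have h4 : (4 : ZMod (p^2)) = 2 * 2 := by norm_num
            rw [h4, mul_pow, mul_pow]; ring
        _ = (-1)^k * (((2*k).choose k : ZMod (p^2)) * ((k ! : ℕ) : ZMod (p^2)))^2 := by
            rw [← hP1]
        _ = ((-1)^k * ((2*k).choose k : ZMod (p^2))^2)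
              * (((k ! : ℕ) : ZMod (p^2)) * ((k ! : ℕ) : ZMod (p^2))) := by ring
    have hu : IsUnit ((((k ! : ℕ) : ZMod (p^2)) * ((k ! : ℕ) : ZMod (p^2)))) :=
      (hfactu k (by omega)).mul (hfactu k (by omega))
    exact hu.mul_right_cancel hker
  have h2inv : (2:ZMod (p^2)) * (2:ZMod (p^2))⁻¹ = 1 := ZMod.mul_inv_of_unit 2 h2u
  have h32inv : (32:ZMod (p^2)) * (32:ZMod (p^2))⁻¹ = 1 := ZMod.mul_inv_of_unit 32 h32u
  have h1632 : (16:ZMod (p^2)) * (32:ZMod (p^2))⁻¹ = (2:ZMod (p^2))⁻¹ := by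
    apply h2u.mul_left_cancel
    calc (2:ZMod (p^2)) * ((16:ZMod (p^2)) * (32:ZMod (p^2))⁻¹)
        = (32:ZMod (p^2)) * (32:ZMod (p^2))⁻¹ := by ring
      _ = 1 := h32inv
      _ = (2:ZMod (p^2)) * (2:ZMod (p^2))⁻¹ := h2inv.symm
  have hterm : ∀ k, k ≤ m → ((2*k).choose k : ZMod (p^2))^2 * ((32:ZMod (p^2))⁻¹)^k
      = (-1)^k * (m.choose k) * ((m+k).choose k) * ((2:ZMod (p^2))⁻¹)^k := by
    intro k hk
    have h1 := hkey k hk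
    have hsq : ((-1:ZMod (p^2))^k) * ((-1:ZMod (p^2))^k) = 1 := by
      rw [← pow_add]
      exact Even.neg_one_pow ⟨k, rfl⟩
    have hC2 : ((2*k).choose k : ZMod (p^2))^2
        = (-1)^k * ((16:ZMod (p^2))^k * (m.choose k) * ((m+k).choose k)) := by
      linear_combination (-((-1:ZMod (p^2))^k)) * h1 - ((2*k).choose k : ZMod (p^2))^2 * hsq
    calc ((2*k).choose k : ZMod (p^2))^2 * ((32:ZMod (p^2))⁻¹)^k
        = (-1)^k * (m.choose k) * ((m+k).choose k)
            * (((16:ZMod (p^2)) * (32:ZMod (p^2))⁻¹)^k) := by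
          rw [hC2, mul_pow]; ring
      _ = (-1)^k * (m.choose k) * ((m+k).choose k) * ((2:ZMod (p^2))⁻¹)^k := by rw [h1632]
  have hintcast : ∑ k ∈ range (m+1),
      ((-1:ZMod (p^2))^k * 2^(m-k) * (m.choose k) * ((m+k).choose k)) = 0 := by
    have hZ := legendre_zero m hmodd
    have h := congrArg (fun z : ℤ => (z : ZMod (p^2))) hZ
    push_cast at h
    exact h
  have hhead : ∑ k ∈ range (m+1),
      ((-1:ZMod (p^2))^k * (m.choose k) * ((m+k).choose k) * ((2:ZMod (p^2))⁻¹)^k) = 0 := by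
    have hmul : (2:ZMod (p^2))^m * ∑ k ∈ range (m+1),
        ((-1:ZMod (p^2))^k * (m.choose k) * ((m+k).choose k) * ((2:ZMod (p^2))⁻¹)^k)
        = ∑ k ∈ range (m+1),
            ((-1:ZMod (p^2))^k * 2^(m-k) * (m.choose k) * ((m+k).choose k)) := by
      rw [Finset.mul_sum]
      refine Finset.sum_congr rfl fun k hk => ?_
      rw [mem_range] at hk
      have hsplit2 : (2:ZMod (p^2))^m = 2^(m-k) * 2^k := by
        rw [← pow_add]; congr 1; omega
      calc (2:ZMod (p^2))^m * ((-1)^k * (m.choose k) * ((m+k).choose k) * ((2:ZMod (p^2))⁻¹)^k)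
          = ((-1:ZMod (p^2))^k * 2^(m-k) * (m.choose k) * ((m+k).choose k))
              * (((2:ZMod (p^2)) * (2:ZMod (p^2))⁻¹)^k) := by
            rw [hsplit2, mul_pow]; ring
        _ = ((-1:ZMod (p^2))^k * 2^(m-k) * (m.choose k) * ((m+k).choose k)) := by
            rw [h2inv, one_pow, mul_one]
    exact ((h2u.pow m).mul_right_eq_zero).1 (hmul.trans hintcast)
  have hsum1 : ∑ k ∈ range (m+1),
      (((2*k).choose k : ZMod (p^2))^2 * ((32:ZMod (p^2))⁻¹)^k) = 0 := by
    calc ∑ k ∈ range (m+1), (((2*k).choose k : ZMod (p^2))^2 * ((32:ZMod (p^2))⁻¹)^k)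
        = ∑ k ∈ range (m+1),
            ((-1:ZMod (p^2))^k * (m.choose k) * ((m+k).choose k) * ((2:ZMod (p^2))⁻¹)^k) := by
          refine Finset.sum_congr rfl fun k hk => ?_
          rw [mem_range] at hk
          exact hterm k (by omega)
      _ = 0 := hhead
  have htail : ∑ k ∈ Finset.Ico (m+1) p,
      (((2*k).choose k : ZMod (p^2))^2 * ((32:ZMod (p^2))⁻¹)^k) = 0 := by
    refine Finset.sum_eq_zero fun k hk => ?_
    rw [Finset.mem_Ico] at hk
    have hd : p ∣ (2*k).choose k := hp.dvd_choose (show k < p by omega) (by omega) (by omega)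
    obtain ⟨c, hc⟩ := hd
    have hcast : ((2*k).choose k : ZMod (p^2)) = (p : ZMod (p^2)) * c := by
      rw [hc]; push_cast; ring
    rw [hcast, mul_pow, hp2z, zero_mul, zero_mul]
  have hall := Finset.sum_range_add_sum_Ico
    (fun k => (((2*k).choose k : ZMod (p^2))^2 * ((32:ZMod (p^2))⁻¹)^k)) (show m+1 ≤ p by omega)
  rw [← hall, hsum1, htail, add_zero]
end
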